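/- arXiv:1904.01712 — 6 statements merged into one kernel-verified Lean document; each statement's English description precedes it below -/
import Mathlib

section
/- Let 1 ≤ p < q < ∞ and d ≥ 1. Define f : ℝ^d → ℝ by f(x) = |x|^{-d/q} if 0 < |x| < 1 and f(x) = 0 otherwise. Then the small Morrey norm of f equals (C_d/d)^{1/q} (1 - p/q)^{-1/p}, where C_d is the surface measure of the unit sphere in ℝ^d. In particular f belongs to the small Morrey space m^p_q. -/
open MeasureTheory Metric ENNReal

/-- The small Morrey norm: sup over centers `a` and radii `R ∈ (0,1)` of
`|B(a,R)|^(1/q-1/p) (∫_{B(a,R)} |f|^p)^(1/p)`, valued in `ℝ≥0∞`. -/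
noncomputable def smallMorreyNorm (d : ℕ) (p q : ℝ)
    (f : EuclideanSpace ℝ (Fin d) → ℝ) : ℝ≥0∞ :=
  ⨆ (a : EuclideanSpace ℝ (Fin d)) (R : ℝ) (_ : 0 < R) (_ : R < 1),
    volume (ball a R) ^ (1 / q - 1 / p) *
      (∫⁻ y in ball a R, ENNReal.ofReal (|f y| ^ p)) ^ (1 / p)

/-- The (classical) Morrey norm: sup over all centers `a` and radii `R > 0`. -/
noncomputable def morreyNorm (d : ℕ) (p q : ℝ)
    (f : EuclideanSpace ℝ (Fin d) → ℝ) : ℝ≥0∞ :=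
  ⨆ (a : EuclideanSpace ℝ (Fin d)) (R : ℝ) (_ : 0 < R),
    volume (ball a R) ^ (1 / q - 1 / p) *
      (∫⁻ y in ball a R, ENNReal.ofReal (|f y| ^ p)) ^ (1 / p)


private lemma aux_meas {d : ℕ} (α : ℝ) :
    Measurable (fun x : EuclideanSpace ℝ (Fin d) =>
      if 0 < ‖x‖ ∧ ‖x‖ < 1 then ‖x‖ ^ (-α) else 0) := by
  apply Measurable.ite _ (by fun_prop) measurable_const
  exact (measurableSet_lt measurable_const measurable_norm).inter
    (measurableSet_lt measurable_norm measurable_const)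

private lemma aux_superlevel {d : ℕ} {α t : ℝ} (hα : 0 < α) (ht : 0 < t) :
    {x : EuclideanSpace ℝ (Fin d) |
        t < (if 0 < ‖x‖ ∧ ‖x‖ < 1 then ‖x‖ ^ (-α) else 0)} =
      ball (0 : EuclideanSpace ℝ (Fin d)) (min 1 (t ^ (-α)⁻¹)) \ {0} := by
  have hz : -α < 0 := neg_lt_zero.mpr hα
  ext x
  simp only [Set.mem_setOf_eq, Set.mem_diff, mem_ball_zero_iff, Set.mem_singleton_iff,
    lt_min_iff, ← norm_pos_iff]
  by_cases h : 0 < ‖x‖ ∧ ‖x‖ < 1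
  · rw [if_pos h]
    constructor
    · intro hx
      exact ⟨⟨h.2, (Real.lt_rpow_inv_iff_of_neg h.1 ht hz).mpr hx⟩, h.1⟩
    · intro hx
      exact (Real.lt_rpow_inv_iff_of_neg h.1 ht hz).mp hx.1.2
  · rw [if_neg h]
    constructor
    · intro hx; exact absurd ht (not_lt.mpr hx.le)
    · rintro ⟨⟨h1, _⟩, h0⟩; exact absurd ⟨h0, h1⟩ h

private lemma aux_cap_le {d : ℕ} (a : EuclideanSpace ℝ (Fin d)) {R ρ : ℝ} :
    volume (ball a R ∩ (ball (0 : EuclideanSpace ℝ (Fin d)) ρ \ {0})) ≤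
      volume (ball (0 : EuclideanSpace ℝ (Fin d)) (min R ρ)) := by
  rcases le_total R ρ with h | h
  · rw [min_eq_left h]
    calc volume (ball a R ∩ _) ≤ volume (ball a R) := measure_mono Set.inter_subset_left
      _ = volume (ball (0 : EuclideanSpace ℝ (Fin d)) R) :=
        Measure.addHaar_ball_center volume a R
  · rw [min_eq_right h]
    exact measure_mono (Set.inter_subset_right.trans Set.diff_subset)

private lemma aux_cap_eq {d : ℕ} (hd : 1 ≤ d) (R ρ : ℝ) :
    volume (ball (0 : EuclideanSpace ℝ (Fin d)) R ∩
        (ball (0 : EuclideanSpace ℝ (Fin d)) ρ \ {0})) =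
      volume (ball (0 : EuclideanSpace ℝ (Fin d)) (min R ρ)) := by
  haveI : Nontrivial (EuclideanSpace ℝ (Fin d)) :=
    Module.nontrivial_of_finrank_pos (R := ℝ)
      (by rw [finrank_euclideanSpace_fin]; omega)
  have h1 : ball (0 : EuclideanSpace ℝ (Fin d)) R ∩
      (ball (0 : EuclideanSpace ℝ (Fin d)) ρ \ {0}) =
      ball (0 : EuclideanSpace ℝ (Fin d)) (min R ρ) \ {0} := by
    ext x
    simp only [Set.mem_inter_iff, Set.mem_diff, mem_ball_zero_iff, Set.mem_singleton_iff,
      lt_min_iff]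
    tauto
  rw [h1, measure_diff_null (measure_singleton 0)]

private lemma aux_layercake {d : ℕ} {α : ℝ} (hα : 0 < α)
    (a : EuclideanSpace ℝ (Fin d)) (R : ℝ) :
    ∫⁻ y in ball a R, ENNReal.ofReal
        (if 0 < ‖y‖ ∧ ‖y‖ < 1 then ‖y‖ ^ (-α) else 0) =
      ∫⁻ t in Set.Ioi (0:ℝ),
        volume (ball a R ∩
          (ball (0 : EuclideanSpace ℝ (Fin d)) (min 1 (t ^ (-α)⁻¹)) \ {0})) := by
  rw [lintegral_eq_lintegral_meas_lt _
    (Filter.Eventually.of_forall fun x => by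
      split
      exacts [Real.rpow_nonneg (norm_nonneg _) _, le_refl 0])
    (aux_meas α).aemeasurable]
  refine setLIntegral_congr_fun measurableSet_Ioi (fun t ht => ?_)
  rw [Measure.restrict_apply (measurableSet_lt measurable_const (aux_meas α)),
    aux_superlevel hα ht, Set.inter_comm]

private lemma aux_lint_le {d : ℕ} (hd : 1 ≤ d) {α : ℝ} (hα : 0 < α)
    (a : EuclideanSpace ℝ (Fin d)) (R : ℝ) :
    ∫⁻ y in ball a R, ENNReal.ofReal
        (if 0 < ‖y‖ ∧ ‖y‖ < 1 then ‖y‖ ^ (-α) else 0) ≤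
      ∫⁻ y in ball (0 : EuclideanSpace ℝ (Fin d)) R, ENNReal.ofReal
        (if 0 < ‖y‖ ∧ ‖y‖ < 1 then ‖y‖ ^ (-α) else 0) := by
  rw [aux_layercake hα a R, aux_layercake hα 0 R]
  refine lintegral_mono_ae ?_
  filter_upwards [self_mem_ae_restrict measurableSet_Ioi] with t ht
  calc volume (ball a R ∩ _) ≤
      volume (ball (0 : EuclideanSpace ℝ (Fin d)) (min R (min 1 (t ^ (-α)⁻¹)))) :=
        aux_cap_le a
    _ = _ := (aux_cap_eq hd R _).symm

private lemma aux_lint_eq {d : ℕ} (hd : 1 ≤ d) {α R : ℝ} (hα : 0 < α) (hαd : α < d)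
    (hR : 0 < R) (hR1 : R ≤ 1) :
    ∫⁻ y in ball (0 : EuclideanSpace ℝ (Fin d)) R, ENNReal.ofReal
        (if 0 < ‖y‖ ∧ ‖y‖ < 1 then ‖y‖ ^ (-α) else 0) =
      volume (ball (0 : EuclideanSpace ℝ (Fin d)) 1) *
        ENNReal.ofReal (R ^ ((d:ℝ) - α) * ((d:ℝ) / ((d:ℝ) - α))) := by
  have hz : -α < 0 := neg_lt_zero.mpr hα
  have hT : 0 < R ^ (-α) := Real.rpow_pos_of_pos hR _
  set V := volume (ball (0 : EuclideanSpace ℝ (Fin d)) 1) with hVdef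
  have hVtop : V ≠ ⊤ := measure_ball_lt_top.ne
  set c : ℝ := (-α)⁻¹ * (d:ℝ) with hcdef
  have hcval : c = -((d:ℝ)/α) := by rw [hcdef, ← div_eq_inv_mul, div_neg]
  have hc : c < -1 := by
    rw [hcval, neg_lt_neg_iff]
    exact (one_lt_div hα).mpr hαd
  rw [aux_layercake hα 0 R]
  have step1 : ∀ t ∈ Set.Ioi (0:ℝ),
      volume (ball (0 : EuclideanSpace ℝ (Fin d)) R ∩
        (ball (0 : EuclideanSpace ℝ (Fin d)) (min 1 (t ^ (-α)⁻¹)) \ {0})) =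
      ENNReal.ofReal ((min R (t ^ (-α)⁻¹)) ^ d) * V := by
    intro t ht
    haveI : Nontrivial (EuclideanSpace ℝ (Fin d)) :=
      Module.nontrivial_of_finrank_pos (R := ℝ)
        (by rw [finrank_euclideanSpace_fin]; omega)
    have hu : 0 < t ^ (-α)⁻¹ := Real.rpow_pos_of_pos ht _
    rw [aux_cap_eq hd, show min R (min 1 (t ^ (-α)⁻¹)) = min R (t ^ (-α)⁻¹) by
        rw [← min_assoc, min_eq_left hR1],
      Measure.addHaar_ball volume 0 (le_min hR.le hu.le), finrank_euclideanSpace_fin, ← hVdef]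
  rw [setLIntegral_congr_fun measurableSet_Ioi step1,
    lintegral_mul_const' V _ hVtop, mul_comm]
  congr 1
  rw [← Set.Ioc_union_Ioi_eq_Ioi hT.le,
    lintegral_union measurableSet_Ioi (Set.Ioc_disjoint_Ioi le_rfl)]
  have h1 : ∫⁻ t in Set.Ioc (0:ℝ) (R ^ (-α)),
      ENNReal.ofReal ((min R (t ^ (-α)⁻¹)) ^ d) = ENNReal.ofReal (R ^ d * R ^ (-α)) := by
    calc ∫⁻ t in Set.Ioc (0:ℝ) (R ^ (-α)), ENNReal.ofReal ((min R (t ^ (-α)⁻¹)) ^ d)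
        = ∫⁻ _ in Set.Ioc (0:ℝ) (R ^ (-α)), ENNReal.ofReal (R ^ d) :=
          setLIntegral_congr_fun measurableSet_Ioc (fun t ht => by
            rw [min_eq_left ((Real.le_rpow_inv_iff_of_neg hR ht.1 hz).mpr ht.2)])
      _ = ENNReal.ofReal (R ^ d) * volume (Set.Ioc (0:ℝ) (R ^ (-α))) :=
          setLIntegral_const _ _
      _ = ENNReal.ofReal (R ^ d) * ENNReal.ofReal (R ^ (-α)) := by
          rw [Real.volume_Ioc, sub_zero]
      _ = ENNReal.ofReal (R ^ d * R ^ (-α)) := (ENNReal.ofReal_mul (by positivity)).symm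
  have h2 : ∫⁻ t in Set.Ioi (R ^ (-α)),
      ENNReal.ofReal ((min R (t ^ (-α)⁻¹)) ^ d) =
      ENNReal.ofReal (-(R ^ (-α)) ^ (c + 1) / (c + 1)) := by
    calc ∫⁻ t in Set.Ioi (R ^ (-α)), ENNReal.ofReal ((min R (t ^ (-α)⁻¹)) ^ d)
        = ∫⁻ t in Set.Ioi (R ^ (-α)), ENNReal.ofReal (t ^ c) :=
          setLIntegral_congr_fun measurableSet_Ioi (fun t ht => by
            have ht0 : 0 < t := hT.trans ht
            rw [min_eq_right ((Real.rpow_inv_le_iff_of_neg ht0 hR hz).mpr ht.le),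
              ← Real.rpow_natCast (t ^ (-α)⁻¹) d, ← Real.rpow_mul ht0.le, hcdef])
      _ = ENNReal.ofReal (∫ t in Set.Ioi (R ^ (-α)), t ^ c) :=
          (ofReal_integral_eq_lintegral_ofReal (integrableOn_Ioi_rpow_of_lt hc hT)
            (by
              filter_upwards [self_mem_ae_restrict measurableSet_Ioi] with t ht
              exact Real.rpow_nonneg (hT.trans ht).le _)).symm
      _ = ENNReal.ofReal (-(R ^ (-α)) ^ (c + 1) / (c + 1)) := by
          rw [integral_Ioi_rpow_of_lt hc hT]
  have hc1 : c + 1 < 0 := by linarith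
  have hnn2 : 0 ≤ -(R ^ (-α)) ^ (c + 1) / (c + 1) :=
    div_nonneg_iff.mpr (Or.inr ⟨neg_nonpos.mpr (Real.rpow_nonneg hT.le _), hc1.le⟩)
  rw [h1, h2, ← ENNReal.ofReal_add (by positivity) hnn2]
  congr 1
  have e1 : (R ^ (-α)) ^ (c + 1) = R ^ ((d:ℝ) - α) := by
    rw [← Real.rpow_mul hR.le]
    congr 1
    rw [hcval]
    field_simp [hα.ne']
    ring
  have e2 : R ^ d * R ^ (-α) = R ^ ((d:ℝ) - α) := by
    rw [← Real.rpow_natCast R d, ← Real.rpow_add hR]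
    congr 1
  rw [e1, e2]
  have h3 : (α:ℝ) - (d:ℝ) ≠ 0 := sub_ne_zero.mpr (fun h => by simp [h] at hαd)
  have h4 : (d:ℝ) - α ≠ 0 := sub_ne_zero.mpr (fun h => by simp [h] at hαd)
  have hc2 : c + 1 = ((α:ℝ) - (d:ℝ)) / α := by rw [hcval]; field_simp; ring
  rw [hc2]
  field_simp
  ring

private lemma aux_value {d : ℕ} (hd : 1 ≤ d) {p q R : ℝ} (hp : 1 ≤ p) (hpq : p < q)
    (hR : 0 < R) (hR1 : R ≤ 1) :
    volume (ball (0 : EuclideanSpace ℝ (Fin d)) R) ^ (1/q - 1/p) *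
      (∫⁻ y in ball (0 : EuclideanSpace ℝ (Fin d)) R, ENNReal.ofReal
        (if 0 < ‖y‖ ∧ ‖y‖ < 1 then ‖y‖ ^ (-((d:ℝ) * p / q)) else 0)) ^ (1/p) =
    volume (ball (0 : EuclideanSpace ℝ (Fin d)) 1) ^ ((1:ℝ)/q) *
      ENNReal.ofReal ((1 - p/q) ^ (-(1:ℝ)/p)) := by
  haveI : Nontrivial (EuclideanSpace ℝ (Fin d)) :=
    Module.nontrivial_of_finrank_pos (R := ℝ)
      (by rw [finrank_euclideanSpace_fin]; omega)
  have hp0 : (0:ℝ) < p := lt_of_lt_of_le one_pos hp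
  have hq0 : (0:ℝ) < q := hp0.trans hpq
  have hd0 : (0:ℝ) < (d:ℝ) := by exact_mod_cast Nat.lt_of_lt_of_le Nat.zero_lt_one hd
  set α : ℝ := (d:ℝ) * p / q with hαdef
  have hα : 0 < α := by positivity
  have hαd : α < (d:ℝ) := by
    rw [hαdef, div_lt_iff₀ hq0]
    calc (d:ℝ) * p < (d:ℝ) * q := by nlinarith
      _ = _ := rfl
  have hβ : (0:ℝ) < (d:ℝ) - α := sub_pos.mpr hαd
  set V := volume (ball (0 : EuclideanSpace ℝ (Fin d)) 1) with hVdef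
  have hV0 : V ≠ 0 := (measure_ball_pos volume 0 one_pos).ne'
  have hVtop : V ≠ ⊤ := measure_ball_lt_top.ne
  rw [aux_lint_eq hd hα hαd hR hR1, ← hVdef,
    Measure.addHaar_ball volume (0 : EuclideanSpace ℝ (Fin d)) hR.le,
    finrank_euclideanSpace_fin, ← hVdef]
  rw [ENNReal.mul_rpow_of_ne_top ENNReal.ofReal_ne_top hVtop,
    ENNReal.mul_rpow_of_ne_top hVtop ENNReal.ofReal_ne_top,
    ENNReal.ofReal_rpow_of_pos (by positivity),
    ENNReal.ofReal_rpow_of_pos (by positivity)]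
  have hAB : ENNReal.ofReal ((R ^ d) ^ (1/q - 1/p)) *
      ENNReal.ofReal ((R ^ ((d:ℝ) - α) * ((d:ℝ) / ((d:ℝ) - α))) ^ (1/p)) =
      ENNReal.ofReal ((1 - p/q) ^ (-(1:ℝ)/p)) := by
    rw [← ENNReal.ofReal_mul (by positivity)]
    congr 1
    rw [Real.mul_rpow (Real.rpow_nonneg hR.le _) (div_pos hd0 hβ).le,
      ← Real.rpow_natCast R d, ← Real.rpow_mul hR.le, ← Real.rpow_mul hR.le,
      ← mul_assoc, ← Real.rpow_add hR]
    have e4 : (d:ℝ) * (1/q - 1/p) + ((d:ℝ) - α) * (1/p) = 0 := by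
      rw [hαdef]; field_simp; ring
    rw [e4, Real.rpow_zero, one_mul]
    have e5 : 1 - p/q = ((d:ℝ) - α) / d := by rw [hαdef]; field_simp
    rw [e5, neg_div, Real.rpow_neg (by positivity),
      ← Real.inv_rpow (by positivity), inv_div]
  have e3 : (1/q - 1/p) + 1/p = (1:ℝ)/q := by ring
  calc ENNReal.ofReal ((R ^ d) ^ (1/q - 1/p)) * V ^ (1/q - 1/p) *
        (V ^ (1/p) * ENNReal.ofReal ((R ^ ((d:ℝ) - α) * ((d:ℝ) / ((d:ℝ) - α))) ^ (1/p)))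
      = (V ^ (1/q - 1/p) * V ^ (1/p)) *
        (ENNReal.ofReal ((R ^ d) ^ (1/q - 1/p)) *
          ENNReal.ofReal ((R ^ ((d:ℝ) - α) * ((d:ℝ) / ((d:ℝ) - α))) ^ (1/p))) := by ring
    _ = V ^ ((1:ℝ)/q) * ENNReal.ofReal ((1 - p/q) ^ (-(1:ℝ)/p)) := by
        rw [← ENNReal.rpow_add _ _ hV0 hVtop, e3, hAB]

/-- the small Morrey norm of `f(x) = |x|^{-d/q} χ_{(0,1)}(|x|)` equals
`(C_d/d)^{1/q} (1 - p/q)^{-1/p}`, where `C_d/d = |B(0,1)|`. In particular it is finite. -/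
theorem smallMorreyNorm_powerFunction (d : ℕ) (p q : ℝ) (hp : 1 ≤ p) (hpq : p < q)
    (hd : 1 ≤ d) :
    smallMorreyNorm d p q
        (fun x => if 0 < ‖x‖ ∧ ‖x‖ < 1 then ‖x‖ ^ (-(d : ℝ) / q) else 0) =
      (volume (ball (0 : EuclideanSpace ℝ (Fin d)) 1)) ^ (1 / q) *
        ENNReal.ofReal ((1 - p / q) ^ (-(1 : ℝ) / p)) ∧
    smallMorreyNorm d p q
        (fun x => if 0 < ‖x‖ ∧ ‖x‖ < 1 then ‖x‖ ^ (-(d : ℝ) / q) else 0) ≠ ⊤ := by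
  have hp0 : (0:ℝ) < p := lt_of_lt_of_le one_pos hp
  have hq0 : (0:ℝ) < q := hp0.trans hpq
  have hα : 0 < (d:ℝ) * p / q := by
    have hd0 : (0:ℝ) < (d:ℝ) := by exact_mod_cast Nat.lt_of_lt_of_le Nat.zero_lt_one hd
    positivity
  have hpt : ∀ y : EuclideanSpace ℝ (Fin d),
      ENNReal.ofReal (|if 0 < ‖y‖ ∧ ‖y‖ < 1 then ‖y‖ ^ (-(d:ℝ)/q) else 0| ^ p) =
      ENNReal.ofReal (if 0 < ‖y‖ ∧ ‖y‖ < 1 then ‖y‖ ^ (-((d:ℝ) * p / q)) else 0) := by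
    intro y
    by_cases h : 0 < ‖y‖ ∧ ‖y‖ < 1
    · rw [if_pos h, if_pos h, abs_of_nonneg (Real.rpow_nonneg (norm_nonneg _) _),
        ← Real.rpow_mul (norm_nonneg y)]
      congr 2
      ring
    · rw [if_neg h, if_neg h, abs_zero, Real.zero_rpow hp0.ne']
  have hG : ∀ (a : EuclideanSpace ℝ (Fin d)) (R : ℝ),
      (∫⁻ y in ball a R,
        ENNReal.ofReal (|if 0 < ‖y‖ ∧ ‖y‖ < 1 then ‖y‖ ^ (-(d:ℝ)/q) else 0| ^ p)) =
      ∫⁻ y in ball a R,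
        ENNReal.ofReal (if 0 < ‖y‖ ∧ ‖y‖ < 1 then ‖y‖ ^ (-((d:ℝ) * p / q)) else 0) :=
    fun a R => lintegral_congr fun y => hpt y
  have hmain : smallMorreyNorm d p q
      (fun x => if 0 < ‖x‖ ∧ ‖x‖ < 1 then ‖x‖ ^ (-(d:ℝ)/q) else 0) =
      volume (ball (0 : EuclideanSpace ℝ (Fin d)) 1) ^ ((1:ℝ)/q) *
        ENNReal.ofReal ((1 - p/q) ^ (-(1:ℝ)/p)) := by
    rw [smallMorreyNorm]
    simp only [hG]
    apply le_antisymm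
    · refine iSup_le fun a => iSup_le fun R => iSup_le fun hR => iSup_le fun hR1 => ?_
      rw [Measure.addHaar_ball_center volume a R]
      refine le_trans (mul_le_mul_right
        (ENNReal.rpow_le_rpow (aux_lint_le hd hα a R) (one_div_pos.mpr hp0).le) _) ?_
      exact le_of_eq (aux_value hd hp hpq hR hR1.le)
    · have h := aux_value (R := 1/2) hd hp hpq (by norm_num) (by norm_num)
      calc volume (ball (0 : EuclideanSpace ℝ (Fin d)) 1) ^ ((1:ℝ)/q) *
            ENNReal.ofReal ((1 - p/q) ^ (-(1:ℝ)/p)) = _ := h.symm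
        _ ≤ _ := by
            apply le_iSup_of_le (0 : EuclideanSpace ℝ (Fin d))
            apply le_iSup_of_le ((1:ℝ)/2)
            apply le_iSup_of_le (show (0:ℝ) < 1/2 by norm_num)
            apply le_iSup_of_le (show (1:ℝ)/2 < 1 by norm_num)
            exact le_rfl
  exact ⟨hmain, by
    rw [hmain]
    exact ENNReal.mul_ne_top
      (ENNReal.rpow_ne_top_of_nonneg (one_div_pos.mpr hq0).le measure_ball_lt_top.ne)
      ENNReal.ofReal_ne_top⟩
end

section
/- Let 1 ≤ p < q < ∞, d ≥ 1, and 0 < ε < 1. Define f(x) = |x|^{-d/q}·χ_{(0,1)}(|x|) and g(x) = χ_{(0,ε)}(|x|)·f(x) on ℝ^d. Then the small Morrey norms of g and f are equal: ‖g‖_{m^p_q} = ‖f‖_{m^p_q} = (C_d/d)^{1/q}(1 - p/q)^{-1/p}. -/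
open MeasureTheory Metric ENNReal
open Set

lemma ioi_int (d : ℕ) (hd : 1 ≤ d) {α r : ℝ} (hα : 0 < α) (hαd : α < d) (hr : 0 < r) :
    ∫⁻ t in Ioi (0:ℝ), ENNReal.ofReal ((min r (t ^ (-1/α))) ^ d)
      = ENNReal.ofReal (((d:ℝ)/((d:ℝ)-α)) * r ^ ((d:ℝ)-α)) := by
  have hα' : α ≠ 0 := hα.ne'
  have hdα : (d:ℝ) - α ≠ 0 := by linarith
  set T : ℝ := r ^ (-α) with hT_def
  have hT : 0 < T := Real.rpow_pos_of_pos hr _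
  have hTr : T ^ (-1/α) = r := by
    rw [hT_def, ← Real.rpow_mul hr.le]
    rw [show -α * (-1/α) = 1 by field_simp, Real.rpow_one]
  set e : ℝ := -1/α * d with he_def
  have he : e < -1 := by
    rw [he_def, show (-1/α * (d:ℝ)) = -((d:ℝ)/α) by ring]
    exact neg_lt_neg_iff.2 ((one_lt_div hα).2 hαd)
  have he1 : e + 1 < 0 := by linarith
  have hmin : (0:ℝ) ≤ -1/α → True := fun _ => trivial
  have hexp : -1/α ≤ 0 := by
    rw [neg_div]; exact neg_nonpos.2 (by positivity)
  rw [← Ioc_union_Ioi_eq_Ioi hT.le, lintegral_union measurableSet_Ioi (Set.Ioc_disjoint_Ioi le_rfl)]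
  have h1 : ∫⁻ t in Ioc (0:ℝ) T, ENNReal.ofReal ((min r (t ^ (-1/α))) ^ d)
      = ENNReal.ofReal (r ^ d * T) := by
    have step : ∫⁻ t in Ioc (0:ℝ) T, ENNReal.ofReal ((min r (t ^ (-1/α))) ^ d)
        = ∫⁻ _ in Ioc (0:ℝ) T, ENNReal.ofReal (r ^ d) := by
      refine setLIntegral_congr_fun measurableSet_Ioc (fun t ht => ?_)
      have : r ≤ t ^ (-1/α) := by
        rw [← hTr]
        exact Real.rpow_le_rpow_of_nonpos ht.1 ht.2 hexp
      rw [min_eq_left this]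
    rw [step, setLIntegral_const, Real.volume_Ioc, sub_zero,
      ← ENNReal.ofReal_mul (by positivity)]
  have h2 : ∫⁻ t in Ioi T, ENNReal.ofReal ((min r (t ^ (-1/α))) ^ d)
      = ENNReal.ofReal (-T ^ (e + 1) / (e + 1)) := by
    have step : ∫⁻ t in Ioi T, ENNReal.ofReal ((min r (t ^ (-1/α))) ^ d)
        = ∫⁻ t in Ioi T, ENNReal.ofReal (t ^ e) := by
      refine setLIntegral_congr_fun measurableSet_Ioi (fun t ht => ?_)
      have ht0 : 0 < t := hT.trans ht
      have : t ^ (-1/α) ≤ r := by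
        rw [← hTr]
        exact Real.rpow_le_rpow_of_nonpos hT ht.le hexp
      rw [min_eq_right this, ← Real.rpow_natCast (t ^ (-1/α)) d, ← Real.rpow_mul ht0.le, ← he_def]
    rw [step, ← integral_Ioi_rpow_of_lt he hT,
      ofReal_integral_eq_lintegral_ofReal (integrableOn_Ioi_rpow_of_lt he hT)
        ((ae_restrict_iff' measurableSet_Ioi).2 (ae_of_all _ (fun t ht =>
          Real.rpow_nonneg (le_of_lt (hT.trans ht)) e)))]
  rw [h1, h2, ← ENNReal.ofReal_add (by positivity) ?_]
  · congr 1
    have hTe : T ^ (e + 1) = r ^ ((d:ℝ) - α) := by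
      rw [hT_def, ← Real.rpow_mul hr.le]
      congr 1
      rw [he_def]; field_simp; ring
    rw [← Real.rpow_natCast r d, hTe, hT_def, ← Real.rpow_add hr,
      show (d:ℝ) + -α = (d:ℝ) - α by ring]
    have hne : e + 1 ≠ 0 := he1.ne
    have hdα2 : -(d:ℝ) + α ≠ 0 := fun h => hdα (by linarith)
    rw [he_def] at hne ⊢
    field_simp
    ring
  · have hTpos : (0:ℝ) < T ^ (e + 1) := Real.rpow_pos_of_pos hT _
    exact le_of_lt (div_pos_of_neg_of_neg (by linarith) he1)

private noncomputable def prof (d : ℕ) (α c : ℝ) (x : EuclideanSpace ℝ (Fin d)) : ℝ :=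
  if 0 < ‖x‖ ∧ ‖x‖ < c then ‖x‖ ^ (-α) else 0

private lemma prof_meas (d : ℕ) {α c : ℝ} : Measurable (prof d α c) := by
  have hs : MeasurableSet {x : EuclideanSpace ℝ (Fin d) | 0 < ‖x‖ ∧ ‖x‖ < c} := by
    have : {x : EuclideanSpace ℝ (Fin d) | 0 < ‖x‖ ∧ ‖x‖ < c}
        = (fun x : EuclideanSpace ℝ (Fin d) => ‖x‖) ⁻¹' (Ioo 0 c) := rfl
    rw [this]
    exact measurable_norm measurableSet_Ioo
  have heq : prof d α c = fun x : EuclideanSpace ℝ (Fin d) =>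
      if 0 < ‖x‖ ∧ ‖x‖ < c then Real.exp (Real.log ‖x‖ * (-α)) else 0 := by
    funext x
    unfold prof
    split
    · next h => rw [Real.rpow_def_of_pos h.1]
    · rfl
  rw [heq]
  exact Measurable.ite hs ((Real.measurable_exp.comp
    ((Real.measurable_log.comp measurable_norm).mul measurable_const))) measurable_const

private lemma prof_nonneg (d : ℕ) {α c : ℝ} (x : EuclideanSpace ℝ (Fin d)) :
    0 ≤ prof d α c x := by
  unfold prof
  split
  · positivity
  · exact le_refl 0

private lemma lev_sub (d : ℕ) {α c t : ℝ} (hα : 0 < α) (ht : 0 < t) :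
    {x : EuclideanSpace ℝ (Fin d) | t ≤ prof d α c x}
      ⊆ closedBall 0 (min c (t ^ (-1/α))) := by
  intro x hx
  simp only [mem_setOf_eq, prof] at hx
  by_cases h : 0 < ‖x‖ ∧ ‖x‖ < c
  · rw [if_pos h] at hx
    rw [mem_closedBall_zero_iff]
    refine le_min h.2.le ?_
    have hexp : -1/α ≤ 0 := by rw [neg_div]; exact neg_nonpos.2 (by positivity)
    have h2 : (‖x‖ ^ (-α)) ^ (-1/α) ≤ t ^ (-1/α) :=
      Real.rpow_le_rpow_of_nonpos ht hx hexp
    rwa [← Real.rpow_mul (norm_nonneg x), show -α * (-1/α) = 1 by field_simp,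
      Real.rpow_one] at h2
  · rw [if_neg h] at hx; linarith

private lemma sub_lev (d : ℕ) {α c t : ℝ} (hα : 0 < α) (ht : 0 < t) :
    ball (0 : EuclideanSpace ℝ (Fin d)) (min c (t ^ (-1/α))) \ {0}
      ⊆ {x : EuclideanSpace ℝ (Fin d) | t ≤ prof d α c x} := by
  intro x hx
  obtain ⟨hb, hx0⟩ := hx
  rw [mem_ball_zero_iff] at hb
  have h0 : 0 < ‖x‖ := norm_pos_iff.2 (by simpa using hx0)
  have hc : ‖x‖ < c := lt_of_lt_of_le hb (min_le_left _ _)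
  simp only [mem_setOf_eq, prof, if_pos (And.intro h0 hc)]
  have h1 : ‖x‖ ≤ t ^ (-1/α) := (lt_of_lt_of_le hb (min_le_right _ _)).le
  have h2 : (t ^ (-1/α)) ^ (-α) ≤ ‖x‖ ^ (-α) :=
    Real.rpow_le_rpow_of_nonpos h0 h1 (by linarith)
  rwa [← Real.rpow_mul ht.le, show -1/α * -α = 1 by field_simp, Real.rpow_one] at h2

private lemma alg (d : ℕ) {p q w r α : ℝ} (hp : 1 ≤ p) (hpq : p < q) (hd : 1 ≤ d)
    (hα : α = (d : ℝ) * p / q) (hw : 0 < w) (hr : 0 < r) :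
    (ENNReal.ofReal (r ^ d) * ENNReal.ofReal w) ^ (1/q - 1/p) *
      (ENNReal.ofReal (((d : ℝ) / ((d : ℝ) - α)) * r ^ ((d : ℝ) - α)) * ENNReal.ofReal w) ^ (1/p)
      = ENNReal.ofReal w ^ (1/q) * ENNReal.ofReal ((1 - p/q) ^ (-(1:ℝ)/p)) := by
  have hp0 : (0:ℝ) < p := lt_of_lt_of_le one_pos hp
  have hq0 : (0:ℝ) < q := hp0.trans hpq
  have hd0 : (0:ℝ) < d := by exact_mod_cast Nat.lt_of_lt_of_le Nat.zero_lt_one hd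
  have h1pq : (0:ℝ) < 1 - p/q := by
    rw [sub_pos, div_lt_one hq0]; exact hpq
  have hα0 : 0 < α := by rw [hα]; positivity
  have hαd : α < d := by
    rw [hα, div_lt_iff₀ hq0]
    have : p < q := hpq
    nlinarith
  have hdα : (0:ℝ) < (d:ℝ) - α := by linarith
  have hrd : (0:ℝ) < r ^ d := pow_pos hr d
  have hKpos : (0:ℝ) < (d : ℝ) / ((d : ℝ) - α) := by positivity
  have hrda : (0:ℝ) < r ^ ((d:ℝ) - α) := Real.rpow_pos_of_pos hr _
  rw [← ENNReal.ofReal_mul hrd.le, ← ENNReal.ofReal_mul (by positivity),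
    ENNReal.ofReal_rpow_of_pos (by positivity), ENNReal.ofReal_rpow_of_pos (by positivity),
    ENNReal.ofReal_rpow_of_pos hw, ← ENNReal.ofReal_mul (by positivity),
    ← ENNReal.ofReal_mul (by positivity)]
  congr 1
  -- real identity
  rw [Real.mul_rpow hrd.le hw.le, Real.mul_rpow (by positivity) hw.le,
    Real.mul_rpow hKpos.le hrda.le,
    ← Real.rpow_natCast r d, ← Real.rpow_mul hr.le, ← Real.rpow_mul hr.le]
  have hK : (d : ℝ) / ((d : ℝ) - α) = (1 - p/q)⁻¹ := by
    have h1 : (d : ℝ) - α = (d : ℝ) * (1 - p/q) := by rw [hα]; ring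
    rw [h1, div_mul_eq_div_div, div_self hd0.ne', one_div]
  have hKp : ((1 - p/q)⁻¹) ^ (1/p) = (1 - p/q) ^ (-(1:ℝ)/p) := by
    rw [Real.inv_rpow h1pq.le, ← Real.rpow_neg h1pq.le, neg_div]
  rw [hK, hKp]
  have hexp0 : (d:ℝ) * (1/q - 1/p) + ((d:ℝ) - α) * (1/p) = 0 := by
    rw [hα]; field_simp; ring
  rw [show r ^ ((d:ℝ) * (1/q - 1/p)) * w ^ (1/q - 1/p) *
      ((1 - p/q) ^ (-(1:ℝ)/p) * r ^ (((d:ℝ) - α) * (1/p)) * w ^ (1/p))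
      = (r ^ ((d:ℝ) * (1/q - 1/p)) * r ^ (((d:ℝ) - α) * (1/p))) *
        (w ^ (1/q - 1/p) * w ^ (1/p)) * (1 - p/q) ^ (-(1:ℝ)/p) from by ring,
    ← Real.rpow_add hr, ← Real.rpow_add hw, hexp0, Real.rpow_zero, one_mul,
    show 1/q - 1/p + 1/p = 1/q from by ring]


private lemma morrey_aux (d : ℕ) (p q : ℝ) (hp : 1 ≤ p) (hpq : p < q) (hd : 1 ≤ d)
    (c : ℝ) (hc0 : 0 < c) (hc1 : c ≤ 1) :
    smallMorreyNorm d p q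
        (fun x => if 0 < ‖x‖ ∧ ‖x‖ < c then ‖x‖ ^ (-(d : ℝ) / q) else 0) =
      (volume (ball (0 : EuclideanSpace ℝ (Fin d)) 1)) ^ (1 / q) *
        ENNReal.ofReal ((1 - p / q) ^ (-(1 : ℝ) / p)) := by
  haveI : Nonempty (Fin d) := ⟨⟨0, Nat.lt_of_lt_of_le Nat.zero_lt_one hd⟩⟩
  have hp0 : (0:ℝ) < p := lt_of_lt_of_le one_pos hp
  have hq0 : (0:ℝ) < q := hp0.trans hpq
  have hd0 : (0:ℝ) < d := by exact_mod_cast Nat.lt_of_lt_of_le Nat.zero_lt_one hd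
  set α : ℝ := (d : ℝ) * p / q with hα
  have hα0 : 0 < α := by rw [hα]; positivity
  have hαd : α < d := by
    rw [hα, div_lt_iff₀ hq0]
    nlinarith
  have hdα : (0:ℝ) < (d:ℝ) - α := by linarith
  -- volume facts
  set ω : ℝ≥0∞ := volume (ball (0 : EuclideanSpace ℝ (Fin d)) 1) with hω
  have hωfin : ω ≠ ⊤ := measure_ball_lt_top.ne
  have hωpos : ω ≠ 0 := (measure_ball_pos _ _ one_pos).ne'
  set w : ℝ := ω.toReal with hwdef
  have hw : 0 < w := ENNReal.toReal_pos hωpos hωfin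
  have hωw : ω = ENNReal.ofReal w := (ENNReal.ofReal_toReal hωfin).symm
  have hvball : ∀ (a : EuclideanSpace ℝ (Fin d)) {ρ : ℝ}, 0 < ρ →
      volume (ball a ρ) = ENNReal.ofReal (ρ ^ d) * ω := by
    intro a ρ hρ
    rw [hω, Measure.addHaar_ball_of_pos volume a hρ, finrank_euclideanSpace_fin]
  have hvcball : ∀ {ρ : ℝ}, 0 < ρ →
      volume (closedBall (0 : EuclideanSpace ℝ (Fin d)) ρ)
        = ENNReal.ofReal (ρ ^ d) * ω := by
    intro ρ hρ
    rw [hω, Measure.addHaar_closedBall volume _ hρ.le, finrank_euclideanSpace_fin]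
  -- pointwise identification of |f|^p with prof
  have hpt : ∀ y : EuclideanSpace ℝ (Fin d),
      ENNReal.ofReal (|if 0 < ‖y‖ ∧ ‖y‖ < c then ‖y‖ ^ (-(d : ℝ) / q) else 0| ^ p)
        = ENNReal.ofReal (prof d α c y) := by
    intro y
    unfold prof
    by_cases h : 0 < ‖y‖ ∧ ‖y‖ < c
    · rw [if_pos h, if_pos h, abs_of_nonneg (Real.rpow_nonneg (norm_nonneg y) _),
        ← Real.rpow_mul (norm_nonneg y), show -(d:ℝ)/q * p = -α by rw [hα]; ring]
    · rw [if_neg h, if_neg h, abs_zero, Real.zero_rpow hp0.ne']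
  -- layer cake
  have hlev_meas : ∀ t : ℝ, MeasurableSet {x : EuclideanSpace ℝ (Fin d) | t ≤ prof d α c x} :=
    fun t => measurableSet_le measurable_const (prof_meas d)
  have hlayer : ∀ (a : EuclideanSpace ℝ (Fin d)) (R : ℝ),
      (∫⁻ y in ball a R, ENNReal.ofReal (prof d α c y))
        = ∫⁻ t in Ioi (0:ℝ), volume ({x | t ≤ prof d α c x} ∩ ball a R) := by
    intro a R
    rw [lintegral_eq_lintegral_meas_le (volume.restrict (ball a R))
      (ae_of_all _ (prof_nonneg d)) (prof_meas d).aemeasurable]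
    simp only [Measure.restrict_apply (hlev_meas _)]
  -- the t-integral with min
  have hQ : ∀ {R : ℝ}, 0 < R →
      (∫⁻ t in Ioi (0:ℝ), ENNReal.ofReal ((min R (min c (t ^ (-1/α)))) ^ d) * ω)
        = ENNReal.ofReal (((d:ℝ)/((d:ℝ)-α)) * (min R c) ^ ((d:ℝ)-α)) * ω := by
    intro R hR
    simp only [← min_assoc]
    rw [lintegral_mul_const' ω _ hωfin, ioi_int d hd hα0 hαd (lt_min hR hc0)]
  -- upper bound for the integral over any ball
  have hIle : ∀ (a : EuclideanSpace ℝ (Fin d)) {R : ℝ}, 0 < R →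
      (∫⁻ y in ball a R, ENNReal.ofReal (prof d α c y))
        ≤ ENNReal.ofReal (((d:ℝ)/((d:ℝ)-α)) * (min R c) ^ ((d:ℝ)-α)) * ω := by
    intro a R hR
    rw [hlayer a R, ← hQ hR]
    refine lintegral_mono_ae ((ae_restrict_iff' measurableSet_Ioi).2
      (ae_of_all _ fun t ht => ?_))
    have ht0 : (0:ℝ) < t := ht
    rcases le_total R (min c (t ^ (-1/α))) with h | h
    · rw [min_eq_left h]
      calc volume ({x | t ≤ prof d α c x} ∩ ball a R)
          ≤ volume (ball a R) := measure_mono inter_subset_right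
        _ = ENNReal.ofReal (R ^ d) * ω := hvball a hR
    · rw [min_eq_right h]
      calc volume ({x | t ≤ prof d α c x} ∩ ball a R)
          ≤ volume (closedBall (0 : EuclideanSpace ℝ (Fin d)) (min c (t ^ (-1/α)))) :=
            measure_mono (inter_subset_left.trans (lev_sub d hα0 ht0))
        _ = ENNReal.ofReal ((min c (t ^ (-1/α))) ^ d) * ω :=
            hvcball (lt_min hc0 (Real.rpow_pos_of_pos ht0 _))
  -- exact value for balls centered at the origin
  have hIeq : ∀ {R : ℝ}, 0 < R →
      (∫⁻ y in ball (0 : EuclideanSpace ℝ (Fin d)) R, ENNReal.ofReal (prof d α c y))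
        = ENNReal.ofReal (((d:ℝ)/((d:ℝ)-α)) * (min R c) ^ ((d:ℝ)-α)) * ω := by
    intro R hR
    rw [hlayer _ R, ← hQ hR]
    refine setLIntegral_congr_fun measurableSet_Ioi (fun t ht => ?_)
    have ht0 : (0:ℝ) < t := ht
    have hmpos : 0 < min c (t ^ (-1/α)) := lt_min hc0 (Real.rpow_pos_of_pos ht0 _)
    have hMpos : 0 < min R (min c (t ^ (-1/α))) := lt_min hR hmpos
    refine le_antisymm ?_ ?_
    · calc volume ({x | t ≤ prof d α c x} ∩ ball (0 : EuclideanSpace ℝ (Fin d)) R)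
          ≤ volume (closedBall (0 : EuclideanSpace ℝ (Fin d)) (min R (min c (t ^ (-1/α))))) := by
            refine measure_mono fun x hx => ?_
            obtain ⟨h1, h2⟩ := hx
            have hx1 : ‖x‖ ≤ min c (t ^ (-1/α)) := mem_closedBall_zero_iff.1 (lev_sub d hα0 ht0 h1)
            have hx2 : ‖x‖ < R := mem_ball_zero_iff.1 h2
            exact mem_closedBall_zero_iff.2 (le_min hx2.le hx1)
        _ = ENNReal.ofReal ((min R (min c (t ^ (-1/α)))) ^ d) * ω := hvcball hMpos
    · calc ENNReal.ofReal ((min R (min c (t ^ (-1/α)))) ^ d) * ω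
          = volume (ball (0 : EuclideanSpace ℝ (Fin d)) (min R (min c (t ^ (-1/α))))) :=
            (hvball _ hMpos).symm
        _ = volume (ball (0 : EuclideanSpace ℝ (Fin d)) (min R (min c (t ^ (-1/α)))) \ {0}) :=
            (measure_diff_null (measure_singleton _)).symm
        _ ≤ volume ({x | t ≤ prof d α c x} ∩ ball (0 : EuclideanSpace ℝ (Fin d)) R) := by
            refine measure_mono fun x hx => ?_
            obtain ⟨h1, h2⟩ := hx
            have hx1 : ‖x‖ < min R (min c (t ^ (-1/α))) := mem_ball_zero_iff.1 h1
            refine ⟨sub_lev d hα0 ht0 ⟨mem_ball_zero_iff.2 (lt_of_lt_of_le hx1 (min_le_right _ _)), h2⟩, ?_⟩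
            exact mem_ball_zero_iff.2 (lt_of_lt_of_le hx1 (min_le_left _ _))
  -- exponent sign
  have hexp_nonpos : 1/q - 1/p ≤ 0 := by
    rw [sub_nonpos]
    exact one_div_le_one_div_of_le hp0 hpq.le
  -- now compute the norm
  rw [smallMorreyNorm]
  refine le_antisymm ?_ ?_
  · refine iSup_le fun a => iSup_le fun R => iSup_le fun hR => iSup_le fun hR1 => ?_
    simp only [hpt]
    rw [hvball a hR, hωw]
    set r : ℝ := min R c with hrdef
    have hr0 : 0 < r := lt_min hR hc0
    have hrR : r ≤ R := min_le_left _ _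
    calc (ENNReal.ofReal (R ^ d) * ENNReal.ofReal w) ^ (1/q - 1/p) *
          (∫⁻ y in ball a R, ENNReal.ofReal (prof d α c y)) ^ (1/p)
        ≤ (ENNReal.ofReal (R ^ d) * ENNReal.ofReal w) ^ (1/q - 1/p) *
          (ENNReal.ofReal (((d:ℝ)/((d:ℝ)-α)) * r ^ ((d:ℝ)-α)) * ENNReal.ofReal w) ^ (1/p) := by
          refine mul_le_mul_right (ENNReal.rpow_le_rpow ?_ (by positivity)) _
          rw [← hωw]
          exact hIle a hR
      _ ≤ (ENNReal.ofReal (r ^ d) * ENNReal.ofReal w) ^ (1/q - 1/p) *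
          (ENNReal.ofReal (((d:ℝ)/((d:ℝ)-α)) * r ^ ((d:ℝ)-α)) * ENNReal.ofReal w) ^ (1/p) := by
          refine mul_le_mul_left ?_ _
          rw [← ENNReal.ofReal_mul (by positivity), ← ENNReal.ofReal_mul (by positivity),
            ENNReal.ofReal_rpow_of_pos (by positivity), ENNReal.ofReal_rpow_of_pos (by positivity)]
          refine ENNReal.ofReal_le_ofReal
            (Real.rpow_le_rpow_of_nonpos (by positivity) ?_ hexp_nonpos)
          exact mul_le_mul_of_nonneg_right (pow_le_pow_left₀ hr0.le hrR d) hw.le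
      _ = ENNReal.ofReal w ^ (1/q) * ENNReal.ofReal ((1 - p/q) ^ (-(1:ℝ)/p)) :=
          alg d hp hpq hd hα hw hr0
  · have hhalf0 : (0:ℝ) < c/2 := by linarith
    have hhalf1 : c/2 < 1 := by linarith
    have hhalfc : c/2 ≤ c := by linarith
    refine le_iSup_of_le (0 : EuclideanSpace ℝ (Fin d)) (le_iSup_of_le (c/2)
      (le_iSup_of_le hhalf0 (le_iSup_of_le hhalf1 ?_)))
    simp only [hpt]
    rw [hvball _ hhalf0, hIeq hhalf0, min_eq_left hhalfc, hωw]
    exact (alg d hp hpq hd hα hw hhalf0).ge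

/-- with `f(x) = |x|^{-d/q} χ_{(0,1)}(|x|)` and `g = χ_{(0,ε)}(|·|) f`,
one has `‖g‖_{m^p_q} = ‖f‖_{m^p_q} = (C_d/d)^{1/q}(1-p/q)^{-1/p}` (`C_d/d = |B(0,1)|`). -/
theorem smallMorreyNorm_truncation_eq (d : ℕ) (p q : ℝ) (hp : 1 ≤ p) (hpq : p < q)
    (hd : 1 ≤ d) (ε : ℝ) (hε0 : 0 < ε) (hε1 : ε < 1) :
    letI f : EuclideanSpace ℝ (Fin d) → ℝ :=
      fun x => if 0 < ‖x‖ ∧ ‖x‖ < 1 then ‖x‖ ^ (-(d : ℝ) / q) else 0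
    letI g : EuclideanSpace ℝ (Fin d) → ℝ :=
      fun x => if 0 < ‖x‖ ∧ ‖x‖ < ε then f x else 0
    smallMorreyNorm d p q g = smallMorreyNorm d p q f ∧
      smallMorreyNorm d p q f =
        (volume (ball (0 : EuclideanSpace ℝ (Fin d)) 1)) ^ (1 / q) *
          ENNReal.ofReal ((1 - p / q) ^ (-(1 : ℝ) / p)) := by
  have hg : (fun x : EuclideanSpace ℝ (Fin d) =>
        if 0 < ‖x‖ ∧ ‖x‖ < ε then
          (if 0 < ‖x‖ ∧ ‖x‖ < 1 then ‖x‖ ^ (-(d : ℝ) / q) else 0) else 0)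
      = fun x : EuclideanSpace ℝ (Fin d) =>
          if 0 < ‖x‖ ∧ ‖x‖ < ε then ‖x‖ ^ (-(d : ℝ) / q) else 0 := by
    funext x
    by_cases h : 0 < ‖x‖ ∧ ‖x‖ < ε
    · rw [if_pos h, if_pos h, if_pos ⟨h.1, h.2.trans hε1⟩]
    · rw [if_neg h, if_neg h]
  have e1 : smallMorreyNorm d p q (fun x : EuclideanSpace ℝ (Fin d) =>
        if 0 < ‖x‖ ∧ ‖x‖ < ε then
          (if 0 < ‖x‖ ∧ ‖x‖ < 1 then ‖x‖ ^ (-(d : ℝ) / q) else 0) else 0)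
      = (volume (ball (0 : EuclideanSpace ℝ (Fin d)) 1)) ^ (1 / q) *
          ENNReal.ofReal ((1 - p / q) ^ (-(1 : ℝ) / p)) := by
    rw [hg]
    exact morrey_aux d p q hp hpq hd ε hε0 hε1.le
  have e2 : smallMorreyNorm d p q (fun x : EuclideanSpace ℝ (Fin d) =>
        if 0 < ‖x‖ ∧ ‖x‖ < 1 then ‖x‖ ^ (-(d : ℝ) / q) else 0)
      = (volume (ball (0 : EuclideanSpace ℝ (Fin d)) 1)) ^ (1 / q) *
          ENNReal.ofReal ((1 - p / q) ^ (-(1 : ℝ) / p)) :=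
    morrey_aux d p q hp hpq hd 1 one_pos le_rfl
  exact ⟨e1.trans e2.symm, e2⟩
end

section
/- Let 1 ≤ p < q < ∞, d ≥ 1, and 0 < ε < 1. Define f(x) = |x|^{-d/q}·χ_{(0,1)}(|x|) and h(x) = χ_{(ε,1)}(|x|)·f(x) on ℝ^d. Then ‖h‖_{m^p_q} ≥ (1 - ε^{d - dp/q})^{1/p} ‖f‖_{m^p_q}, where ‖·‖_{m^p_q} denotes the small Morrey norm. -/
open MeasureTheory Metric ENNReal

/-- with `f(x) = |x|^{-d/q} χ_{(0,1)}(|x|)` and `h = χ_{(ε,1)}(|·|) f`,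
one has `‖h‖_{m^p_q} ≥ (1 - ε^{d - dp/q})^{1/p} ‖f‖_{m^p_q}`. -/
theorem smallMorreyNorm_outer_truncation_lower (d : ℕ) (p q : ℝ) (hp : 1 ≤ p)
    (hpq : p < q) (hd : 1 ≤ d) (ε : ℝ) (hε0 : 0 < ε) (hε1 : ε < 1) :
    letI f : EuclideanSpace ℝ (Fin d) → ℝ :=
      fun x => if 0 < ‖x‖ ∧ ‖x‖ < 1 then ‖x‖ ^ (-(d : ℝ) / q) else 0
    letI h : EuclideanSpace ℝ (Fin d) → ℝ :=
      fun x => if ε < ‖x‖ ∧ ‖x‖ < 1 then f x else 0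
    ENNReal.ofReal ((1 - ε ^ ((d : ℝ) - d * p / q)) ^ (1 / p)) *
        smallMorreyNorm d p q f ≤ smallMorreyNorm d p q h := by
  set f : EuclideanSpace ℝ (Fin d) → ℝ :=
    (fun x => if 0 < ‖x‖ ∧ ‖x‖ < 1 then ‖x‖ ^ (-(d : ℝ) / q) else 0) with hfdef
  set h : EuclideanSpace ℝ (Fin d) → ℝ :=
    (fun x => if ε < ‖x‖ ∧ ‖x‖ < 1 then f x else 0) with hhdef
  show ENNReal.ofReal ((1 - ε ^ ((d : ℝ) - d * p / q)) ^ (1 / p)) *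
      smallMorreyNorm d p q f ≤ smallMorreyNorm d p q h
  haveI : Nonempty (Fin d) := ⟨⟨0, hd⟩⟩
  haveI hnt : Nontrivial (EuclideanSpace ℝ (Fin d)) := inferInstance
  have hp0 : (0:ℝ) < p := lt_of_lt_of_le one_pos hp
  have hq0 : (0:ℝ) < q := lt_trans hp0 hpq
  have hd1 : (1:ℝ) ≤ (d:ℝ) := by exact_mod_cast hd
  have hd0 : (0:ℝ) < d := lt_of_lt_of_le one_pos hd1
  set β : ℝ := (d:ℝ) * p / q with hβ
  have hβ0 : 0 < β := by positivity
  have hβd : β < (d:ℝ) := by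
    rw [hβ, div_lt_iff₀ hq0]; nlinarith
  set α : ℝ := (d:ℝ) - (d:ℝ) * p / q with hα
  have hαβ : α = (d:ℝ) - β := by rw [hα, hβ]
  have hα0 : 0 < α := by rw [hαβ]; linarith
  -- real-valued p-th power of f
  set gr : EuclideanSpace ℝ (Fin d) → ℝ := fun y => |f y| ^ p with hgr_def
  have hf_eval : ∀ y : EuclideanSpace ℝ (Fin d),
      f y = if 0 < ‖y‖ ∧ ‖y‖ < 1 then ‖y‖ ^ (-(d : ℝ) / q) else 0 := fun _ => rfl
  have hh_eval : ∀ y : EuclideanSpace ℝ (Fin d),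
      h y = if ε < ‖y‖ ∧ ‖y‖ < 1 then f y else 0 := fun _ => rfl
  have hgr_eq : ∀ y : EuclideanSpace ℝ (Fin d),
      gr y = if 0 < ‖y‖ ∧ ‖y‖ < 1 then ‖y‖ ^ (-β) else 0 := by
    intro y
    show |f y| ^ p = _
    rw [hf_eval]
    by_cases hy : 0 < ‖y‖ ∧ ‖y‖ < 1
    · rw [if_pos hy, if_pos hy, abs_of_nonneg (Real.rpow_nonneg (norm_nonneg y) _),
        ← Real.rpow_mul (norm_nonneg y)]
      congr 1
      rw [hβ]
      ring
    · rw [if_neg hy, if_neg hy, abs_zero, Real.zero_rpow hp0.ne']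
  have hf_meas : Measurable f := by
    refine Measurable.ite ?_ (measurable_norm.pow_const _) measurable_const
    exact (measurableSet_lt measurable_const measurable_norm).inter
      (measurableSet_lt measurable_norm measurable_const)
  have hgr_meas : Measurable gr := hf_meas.abs.pow_const p
  have hh_meas : Measurable h := by
    refine Measurable.ite ?_ hf_meas measurable_const
    exact (measurableSet_lt measurable_const measurable_norm).inter
      (measurableSet_lt measurable_norm measurable_const)
  -- volume of balls
  have hvol_ball : ∀ (a : EuclideanSpace ℝ (Fin d)) {R : ℝ}, 0 ≤ R →
      volume (ball a R) = ENNReal.ofReal (R ^ (d:ℝ)) *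
        volume (ball (0 : EuclideanSpace ℝ (Fin d)) 1) := by
    intro a R hR
    rw [Measure.addHaar_ball volume a hR, finrank_euclideanSpace_fin, Real.rpow_natCast]
  set v : ℝ≥0∞ := volume (ball (0 : EuclideanSpace ℝ (Fin d)) 1) with hv
  have hv0 : v ≠ 0 := (measure_ball_pos _ _ one_pos).ne'
  have hvt : v ≠ ⊤ := measure_ball_lt_top.ne
  -- layer cake
  have hlevel_meas : ∀ t : ℝ, MeasurableSet {y : EuclideanSpace ℝ (Fin d) | t < gr y} :=
    fun t => measurableSet_lt measurable_const hgr_meas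
  have LC : ∀ (a : EuclideanSpace ℝ (Fin d)) (R : ℝ),
      (∫⁻ y in ball a R, ENNReal.ofReal (gr y)) =
        ∫⁻ t in Set.Ioi (0:ℝ), volume ({y | t < gr y} ∩ ball a R) := by
    intro a R
    have hs : MeasurableSet {z : EuclideanSpace ℝ (Fin d) × ℝ | 0 < z.2 ∧ z.2 < gr z.1} :=
      (measurableSet_lt measurable_const measurable_snd).inter
        (measurableSet_lt measurable_snd (hgr_meas.comp measurable_fst))
    calc (∫⁻ y in ball a R, ENNReal.ofReal (gr y))
        = ∫⁻ y in ball a R, ∫⁻ t, Set.indicator {z : EuclideanSpace ℝ (Fin d) × ℝ |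
            0 < z.2 ∧ z.2 < gr z.1} (fun _ => (1:ℝ≥0∞)) (y, t) := by
          refine lintegral_congr fun y => ?_
          have heq : ∀ t : ℝ, Set.indicator {z : EuclideanSpace ℝ (Fin d) × ℝ |
              0 < z.2 ∧ z.2 < gr z.1} (fun _ => (1:ℝ≥0∞)) (y, t)
              = Set.indicator (Set.Ioo (0:ℝ) (gr y)) (fun _ => (1:ℝ≥0∞)) t := by
            intro t
            simp only [Set.indicator_apply, Set.mem_setOf_eq, Set.mem_Ioo]
          rw [lintegral_congr heq, lintegral_indicator measurableSet_Ioo, setLIntegral_one,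
            Real.volume_Ioo, sub_zero]
      _ = ∫⁻ t, ∫⁻ y in ball a R, Set.indicator {z : EuclideanSpace ℝ (Fin d) × ℝ |
            0 < z.2 ∧ z.2 < gr z.1} (fun _ => (1:ℝ≥0∞)) (y, t) := by
          exact lintegral_lintegral_swap ((measurable_one.indicator hs).aemeasurable)
      _ = ∫⁻ t, volume ({y | 0 < t ∧ t < gr y} ∩ ball a R) := by
          refine lintegral_congr fun t => ?_
          have hmeq : ∀ y : EuclideanSpace ℝ (Fin d),
              Set.indicator {z : EuclideanSpace ℝ (Fin d) × ℝ |
                0 < z.2 ∧ z.2 < gr z.1} (fun _ => (1:ℝ≥0∞)) (y, t)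
              = Set.indicator {y : EuclideanSpace ℝ (Fin d) | 0 < t ∧ t < gr y}
                  (fun _ => (1:ℝ≥0∞)) y := by
            intro y
            simp only [Set.indicator_apply, Set.mem_setOf_eq]
          have hms : MeasurableSet {y : EuclideanSpace ℝ (Fin d) | 0 < t ∧ t < gr y} := by
            rcases lt_or_ge 0 t with ht | ht
            · have he : {y : EuclideanSpace ℝ (Fin d) | 0 < t ∧ t < gr y} = {y | t < gr y} := by
                ext y; simp [ht]
              rw [he]; exact hlevel_meas t
            · have he : {y : EuclideanSpace ℝ (Fin d) | 0 < t ∧ t < gr y} = ∅ := by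
                ext y; simp [not_lt.mpr ht]
              rw [he]; exact MeasurableSet.empty
          rw [lintegral_congr hmeq, lintegral_indicator hms, setLIntegral_one,
            Measure.restrict_apply hms]
      _ = ∫⁻ t in Set.Ioi (0:ℝ), volume ({y | t < gr y} ∩ ball a R) := by
          have heq : ∀ t : ℝ,
              volume ({y : EuclideanSpace ℝ (Fin d) | 0 < t ∧ t < gr y} ∩ ball a R)
              = Set.indicator (Set.Ioi (0:ℝ))
                  (fun t => volume ({y | t < gr y} ∩ ball a R)) t := by
            intro t
            rcases lt_or_ge 0 t with ht | ht
            · rw [Set.indicator_of_mem (Set.mem_Ioi.mpr ht)]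
              congr 2
              ext y; simp [ht]
            · rw [Set.indicator_of_notMem (by simpa using not_lt.mpr ht)]
              have he : {y : EuclideanSpace ℝ (Fin d) | 0 < t ∧ t < gr y} = ∅ := by
                ext y; simp [not_lt.mpr ht]
              rw [he, Set.empty_inter, measure_empty]
          rw [lintegral_congr heq, lintegral_indicator measurableSet_Ioi]
  -- level set inclusions
  have hupper : ∀ {t : ℝ}, 0 < t → {y : EuclideanSpace ℝ (Fin d) | t < gr y} ⊆
      ball 0 (min 1 (t ^ (-1/β))) := by
    intro t ht y hy
    simp only [Set.mem_setOf_eq] at hy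
    have hcond : 0 < ‖y‖ ∧ ‖y‖ < 1 := by
      by_contra hc
      rw [hgr_eq y, if_neg hc] at hy
      exact absurd (ht.trans hy) (lt_irrefl 0)
    rw [hgr_eq y, if_pos hcond] at hy
    have h1 : (‖y‖ ^ (-β)) ^ (-1/β) < t ^ (-1/β) :=
      Real.rpow_lt_rpow_of_neg ht hy (div_neg_of_neg_of_pos (by norm_num) hβ0)
    rw [← Real.rpow_mul (norm_nonneg y)] at h1
    have hexp : (-β) * (-1/β) = 1 := by field_simp
    rw [hexp, Real.rpow_one] at h1
    rw [mem_ball_zero_iff]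
    exact lt_min hcond.2 h1
  have hlower : ∀ {t R : ℝ}, 0 < t →
      ball (0 : EuclideanSpace ℝ (Fin d)) (min R (min 1 (t ^ (-1/β)))) \ {0} ⊆
        {y | t < gr y} ∩ ball 0 R := by
    intro t R ht y hy
    obtain ⟨hmem, hne⟩ := hy
    rw [mem_ball_zero_iff] at hmem
    have hy0 : 0 < ‖y‖ := norm_pos_iff.mpr (by simpa using hne)
    have hy1 : ‖y‖ < 1 := lt_of_lt_of_le hmem ((min_le_right _ _).trans (min_le_left _ _))
    have hyρ : ‖y‖ < t ^ (-1/β) :=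
      lt_of_lt_of_le hmem ((min_le_right _ _).trans (min_le_right _ _))
    constructor
    · show t < gr y
      rw [hgr_eq y, if_pos ⟨hy0, hy1⟩]
      have h1 : (t ^ (-1/β)) ^ (-β) < ‖y‖ ^ (-β) :=
        Real.rpow_lt_rpow_of_neg hy0 hyρ (by linarith)
      rw [← Real.rpow_mul ht.le] at h1
      have hexp : (-1/β) * (-β) = 1 := by field_simp
      rwa [hexp, Real.rpow_one] at h1
    · rw [mem_ball_zero_iff]
      exact lt_of_lt_of_le hmem (min_le_left _ _)
  -- rearrangement comparison
  have hcmp : ∀ (a : EuclideanSpace ℝ (Fin d)) (R : ℝ) {t : ℝ}, 0 < t →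
      volume ({y | t < gr y} ∩ ball a R) ≤ volume ({y | t < gr y} ∩ ball 0 R) := by
    intro a R t ht
    set ρ : ℝ := min 1 (t ^ (-1/β)) with hρ
    have hρ0 : 0 < ρ := lt_min one_pos (Real.rpow_pos_of_pos ht _)
    calc volume ({y | t < gr y} ∩ ball a R)
        ≤ volume (ball (0 : EuclideanSpace ℝ (Fin d)) (min R ρ)) := by
          rcases le_total R ρ with hc | hc
          · rw [min_eq_left hc]
            refine le_trans (measure_mono Set.inter_subset_right) ?_
            rcases le_or_gt 0 R with hR | hR
            · rw [hvol_ball a hR, hvol_ball 0 hR]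
            · simp [ball_eq_empty.mpr hR.le]
          · rw [min_eq_right hc]
            exact measure_mono (Set.inter_subset_left.trans (hupper ht))
      _ = volume (ball (0 : EuclideanSpace ℝ (Fin d)) (min R ρ) \ {0}) :=
          (measure_diff_null (measure_singleton _)).symm
      _ ≤ volume ({y | t < gr y} ∩ ball 0 R) := measure_mono (hlower ht)
  have hrearr : ∀ (a : EuclideanSpace ℝ (Fin d)) (R : ℝ),
      (∫⁻ y in ball a R, ENNReal.ofReal (gr y)) ≤
        ∫⁻ y in ball (0 : EuclideanSpace ℝ (Fin d)) R, ENNReal.ofReal (gr y) := by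
    intro a R
    rw [LC a R, LC 0 R]
    refine lintegral_mono_ae ((ae_restrict_mem measurableSet_Ioi).mono fun t ht => ?_)
    exact hcmp a R ht
  -- scaling
  set G : EuclideanSpace ℝ (Fin d) → ℝ≥0∞ := fun y => ENNReal.ofReal (‖y‖ ^ (-β)) with hG
  have hG_meas : Measurable G := (measurable_norm.pow_const _).ennreal_ofReal
  set J : ℝ≥0∞ := ∫⁻ y in ball (0 : EuclideanSpace ℝ (Fin d)) 1, G y with hJ
  have hGr_eq : ∀ y : EuclideanSpace ℝ (Fin d), ‖y‖ < 1 → ENNReal.ofReal (gr y) = G y := by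
    intro y hy
    show ENNReal.ofReal (gr y) = ENNReal.ofReal (‖y‖ ^ (-β))
    rw [hgr_eq y]
    rcases eq_or_lt_of_le (norm_nonneg y) with h0 | h0
    · have hns : ¬(0 < ‖y‖ ∧ ‖y‖ < 1) := by rw [← h0]; simp
      rw [if_neg hns, ← h0, Real.zero_rpow (by linarith : -β ≠ 0)]
    · rw [if_pos ⟨h0, hy⟩]
  have hscale : ∀ {R : ℝ}, 0 < R →
      (∫⁻ y in ball (0 : EuclideanSpace ℝ (Fin d)) R, G y) =
        ENNReal.ofReal (R ^ ((d:ℝ) - β)) * J := by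
    intro R hR
    have hmap := Measure.map_addHaar_smul (volume : Measure (EuclideanSpace ℝ (Fin d))) hR.ne'
    have hind : Measurable ((ball (0 : EuclideanSpace ℝ (Fin d)) R).indicator G) :=
      hG_meas.indicator measurableSet_ball
    have key := lintegral_map (μ := (volume : Measure (EuclideanSpace ℝ (Fin d)))) hind
      (measurable_const_smul (M := ℝ) R)
    rw [hmap, lintegral_smul_measure] at key
    have hpt : ∀ x : EuclideanSpace ℝ (Fin d),
        (ball (0 : EuclideanSpace ℝ (Fin d)) R).indicator G (R • x) =
          ENNReal.ofReal (R ^ (-β)) * (ball (0 : EuclideanSpace ℝ (Fin d)) 1).indicator G x := by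
      intro x
      have hnorm : ‖R • x‖ = R * ‖x‖ := by
        rw [norm_smul, Real.norm_eq_abs, abs_of_pos hR]
      by_cases hx : x ∈ ball (0 : EuclideanSpace ℝ (Fin d)) 1
      · have hx' : R • x ∈ ball (0 : EuclideanSpace ℝ (Fin d)) R := by
          rw [mem_ball_zero_iff, hnorm]
          calc R * ‖x‖ < R * 1 := mul_lt_mul_of_pos_left (mem_ball_zero_iff.mp hx) hR
            _ = R := mul_one R
        rw [Set.indicator_of_mem hx', Set.indicator_of_mem hx]
        show ENNReal.ofReal (‖R • x‖ ^ (-β)) = _ * ENNReal.ofReal (‖x‖ ^ (-β))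
        rw [hnorm, Real.mul_rpow hR.le (norm_nonneg x),
          ENNReal.ofReal_mul (Real.rpow_nonneg hR.le _)]
      · have hx' : R • x ∉ ball (0 : EuclideanSpace ℝ (Fin d)) R := by
          rw [mem_ball_zero_iff, hnorm, not_lt]
          have h1 : 1 ≤ ‖x‖ := by
            by_contra hc
            exact hx (mem_ball_zero_iff.mpr (not_le.mp hc))
          calc R = R * 1 := (mul_one R).symm
            _ ≤ R * ‖x‖ := mul_le_mul_of_nonneg_left h1 hR.le
        rw [Set.indicator_of_notMem hx', Set.indicator_of_notMem hx, mul_zero]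
    rw [lintegral_congr hpt, lintegral_const_mul _ (hG_meas.indicator measurableSet_ball),
      lintegral_indicator measurableSet_ball, lintegral_indicator measurableSet_ball] at key
    -- key : ofReal |(R^d)⁻¹| * ∫⁻ ball 0 R G = ofReal (R^{-β}) * J
    have hfr : (Module.finrank ℝ (EuclideanSpace ℝ (Fin d))) = d := finrank_euclideanSpace_fin
    rw [hfr] at key
    have hcancel : ENNReal.ofReal (R ^ (d:ℝ)) * ENNReal.ofReal |(R ^ d)⁻¹| = 1 := by
      rw [← ENNReal.ofReal_mul (Real.rpow_nonneg hR.le _), abs_of_pos (by positivity),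
        Real.rpow_natCast, mul_inv_cancel₀ (by positivity)]
      exact ENNReal.ofReal_one
    calc (∫⁻ y in ball (0 : EuclideanSpace ℝ (Fin d)) R, G y)
        = (ENNReal.ofReal (R ^ (d:ℝ)) * ENNReal.ofReal |(R ^ d)⁻¹|) *
            ∫⁻ y in ball (0 : EuclideanSpace ℝ (Fin d)) R, G y := by rw [hcancel, one_mul]
      _ = ENNReal.ofReal (R ^ (d:ℝ)) * (ENNReal.ofReal |(R ^ d)⁻¹| *
            ∫⁻ y in ball (0 : EuclideanSpace ℝ (Fin d)) R, G y) := by rw [mul_assoc]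
      _ = ENNReal.ofReal (R ^ (d:ℝ)) * (ENNReal.ofReal (R ^ (-β)) * J) := by rw [smul_eq_mul] at key; rw [key]
      _ = ENNReal.ofReal (R ^ ((d:ℝ) - β)) * J := by
          rw [← mul_assoc, ← ENNReal.ofReal_mul (Real.rpow_nonneg hR.le _),
            ← Real.rpow_add hR, sub_eq_add_neg]
  -- f-integrals over centered balls
  have hIf : ∀ {R : ℝ}, 0 < R → R ≤ 1 →
      (∫⁻ y in ball (0 : EuclideanSpace ℝ (Fin d)) R, ENNReal.ofReal (gr y)) =
        ENNReal.ofReal (R ^ α) * J := by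
    intro R hR0 hR1
    rw [setLIntegral_congr_fun measurableSet_ball (fun y hy =>
      hGr_eq y (lt_of_lt_of_le (mem_ball_zero_iff.mp hy) hR1)), hscale hR0, hαβ]
  -- J is finite
  have hJlt : J < ⊤ := by
    have h1 : J = ∫⁻ y in ball (0 : EuclideanSpace ℝ (Fin d)) 1, ENNReal.ofReal (gr y) :=
      (setLIntegral_congr_fun measurableSet_ball (fun y hy =>
        hGr_eq y (mem_ball_zero_iff.mp hy))).symm
    rw [h1, LC 0 1]
    rw [← Set.Ioc_union_Ioi_eq_Ioi (zero_le_one (α := ℝ)),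
      lintegral_union measurableSet_Ioi Set.Ioc_disjoint_Ioi_same]
    refine ENNReal.add_lt_top.mpr ⟨?_, ?_⟩
    · calc ∫⁻ t in Set.Ioc (0:ℝ) 1, volume ({y | t < gr y} ∩ ball 0 1)
          ≤ ∫⁻ _t in Set.Ioc (0:ℝ) 1, v :=
            setLIntegral_mono' measurableSet_Ioc fun t _ => measure_mono Set.inter_subset_right
        _ = v * volume (Set.Ioc (0:ℝ) 1) := setLIntegral_const _ _
        _ < ⊤ := by
            rw [Real.volume_Ioc]
            exact ENNReal.mul_lt_top hvt.lt_top (by simp)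
    · have hint : IntegrableOn (fun t : ℝ => t ^ (-((d:ℝ)/β))) (Set.Ioi 1) volume := by
        refine integrableOn_Ioi_rpow_of_lt ?_ one_pos
        have : (1:ℝ) < (d:ℝ)/β := (one_lt_div hβ0).mpr hβd
        linarith
      calc ∫⁻ t in Set.Ioi (1:ℝ), volume ({y | t < gr y} ∩ ball 0 1)
          ≤ ∫⁻ t in Set.Ioi (1:ℝ), ENNReal.ofReal (t ^ (-((d:ℝ)/β))) * v := by
            refine setLIntegral_mono' measurableSet_Ioi fun t ht => ?_
            have ht0 : (0:ℝ) < t := lt_trans one_pos ht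
            have hsub : {y | t < gr y} ∩ ball (0 : EuclideanSpace ℝ (Fin d)) 1 ⊆
                ball (0 : EuclideanSpace ℝ (Fin d)) (t ^ (-1/β)) :=
              (Set.inter_subset_left.trans (hupper ht0)).trans
                (ball_subset_ball (min_le_right _ _))
            refine le_trans (measure_mono hsub) ?_
            rw [hvol_ball 0 (Real.rpow_nonneg ht0.le _), ← Real.rpow_mul ht0.le]
            have : (-1/β) * (d:ℝ) = -((d:ℝ)/β) := by ring
            rw [this]
        _ = (∫⁻ t in Set.Ioi (1:ℝ), ENNReal.ofReal (t ^ (-((d:ℝ)/β)))) * v :=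
            lintegral_mul_const _ ((measurable_id.pow_const _).ennreal_ofReal)
        _ < ⊤ := ENNReal.mul_lt_top hint.lintegral_lt_top hvt.lt_top
  -- the constant K
  set K : ℝ≥0∞ := v ^ ((1:ℝ)/q - 1/p) * J ^ ((1:ℝ)/p) with hK
  have hKt : K ≠ ⊤ := by
    rw [hK]
    refine ENNReal.mul_ne_top ?_ (ENNReal.rpow_ne_top_of_nonneg (by positivity) hJlt.ne)
    rw [Ne, ENNReal.rpow_eq_top_iff]
    push_neg
    exact ⟨fun hc => absurd hc hv0, fun hc => absurd hc hvt⟩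
  -- algebraic identity
  have halg : ∀ {R c : ℝ}, 0 < R → 0 < c →
      (ENNReal.ofReal (R ^ (d:ℝ)) * v) ^ ((1:ℝ)/q - 1/p) *
        (ENNReal.ofReal c * J) ^ ((1:ℝ)/p)
      = ENNReal.ofReal (R ^ ((d:ℝ)*((1:ℝ)/q - 1/p)) * c ^ ((1:ℝ)/p)) * K := by
    intro R c hR hc
    rw [ENNReal.mul_rpow_of_ne_top ofReal_ne_top hvt,
      ENNReal.mul_rpow_of_ne_top ofReal_ne_top hJlt.ne,
      ENNReal.ofReal_rpow_of_pos (Real.rpow_pos_of_pos hR _),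
      ENNReal.ofReal_rpow_of_pos hc, ← Real.rpow_mul hR.le,
      ENNReal.ofReal_mul (Real.rpow_nonneg hR.le _), hK]
    ring
  -- upper bound for the Morrey norm of f
  have hMle : smallMorreyNorm d p q f ≤ K := by
    rw [smallMorreyNorm]
    refine iSup_le fun a => iSup_le fun R => iSup_le fun hR0 => iSup_le fun hR1 => ?_
    have hIub : (∫⁻ y in ball a R, ENNReal.ofReal (gr y)) ≤ ENNReal.ofReal (R ^ α) * J :=
      le_trans (hrearr a R) (le_of_eq (hIf hR0 hR1.le))
    calc volume (ball a R) ^ ((1:ℝ)/q - 1/p) *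
          (∫⁻ y in ball a R, ENNReal.ofReal (|f y| ^ p)) ^ ((1:ℝ)/p)
        ≤ volume (ball a R) ^ ((1:ℝ)/q - 1/p) * (ENNReal.ofReal (R ^ α) * J) ^ ((1:ℝ)/p) :=
          mul_le_mul_right (ENNReal.rpow_le_rpow hIub (by positivity)) _
      _ = ENNReal.ofReal (R ^ ((d:ℝ)*((1:ℝ)/q - 1/p)) * (R ^ α) ^ ((1:ℝ)/p)) * K := by
          rw [hvol_ball a hR0.le]
          exact halg hR0 (Real.rpow_pos_of_pos hR0 _)
      _ = K := by
          have hone : R ^ ((d:ℝ)*((1:ℝ)/q - 1/p)) * (R ^ α) ^ ((1:ℝ)/p) = 1 := by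
            rw [← Real.rpow_mul hR0.le, ← Real.rpow_add hR0]
            have hz : (d:ℝ)*((1:ℝ)/q - 1/p) + α*(1/p) = 0 := by
              rw [hα]; field_simp; ring
            rw [hz, Real.rpow_zero]
          rw [hone, ENNReal.ofReal_one, one_mul]
  -- integral of h over centered balls
  have hIh : ∀ {R : ℝ}, ε < R → R ≤ 1 →
      (∫⁻ y in ball (0 : EuclideanSpace ℝ (Fin d)) R, ENNReal.ofReal (|h y| ^ p)) =
        ENNReal.ofReal (R ^ α - ε ^ α) * J := by
    intro R hεR hR1
    have hR0 : 0 < R := lt_trans hε0 hεR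
    have hpt : ∀ y : EuclideanSpace ℝ (Fin d), ENNReal.ofReal (gr y) =
        ENNReal.ofReal (|h y| ^ p) +
          (closedBall (0 : EuclideanSpace ℝ (Fin d)) ε).indicator
            (fun y => ENNReal.ofReal (gr y)) y := by
      intro y
      by_cases hy1 : ε < ‖y‖ ∧ ‖y‖ < 1
      · have hmem : y ∉ closedBall (0 : EuclideanSpace ℝ (Fin d)) ε := by
          rw [mem_closedBall_zero_iff]
          exact not_le.mpr hy1.1
        rw [Set.indicator_of_notMem hmem, add_zero]
        show ENNReal.ofReal (|f y| ^ p) = _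
        rw [hh_eval, if_pos hy1]
      · by_cases hy2 : ‖y‖ ≤ ε
        · have hmem : y ∈ closedBall (0 : EuclideanSpace ℝ (Fin d)) ε :=
            mem_closedBall_zero_iff.mpr hy2
          rw [Set.indicator_of_mem hmem]
          have hh0 : h y = 0 := by
            rw [hh_eval, if_neg (fun hc => absurd hy2 (not_le.mpr hc.1))]
          rw [hh0, abs_zero, Real.zero_rpow hp0.ne', ENNReal.ofReal_zero, zero_add]
        · have hy3 : ¬ ‖y‖ < 1 := fun hc => hy1 ⟨not_le.mp hy2, hc⟩
          have hf0 : f y = 0 := by rw [hf_eval, if_neg (fun hc => hy3 hc.2)]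
          have hh0 : h y = 0 := by rw [hh_eval, if_neg (fun hc => hy3 hc.2)]
          have hmem : y ∉ closedBall (0 : EuclideanSpace ℝ (Fin d)) ε := by
            rw [mem_closedBall_zero_iff]; exact hy2
          rw [Set.indicator_of_notMem hmem, add_zero]
          show ENNReal.ofReal (|f y| ^ p) = _
          rw [hf0, hh0]
    have hsplit : (∫⁻ y in ball (0 : EuclideanSpace ℝ (Fin d)) R, ENNReal.ofReal (gr y)) =
        (∫⁻ y in ball (0 : EuclideanSpace ℝ (Fin d)) R, ENNReal.ofReal (|h y| ^ p)) +
          ∫⁻ y in ball (0 : EuclideanSpace ℝ (Fin d)) R,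
            (closedBall (0 : EuclideanSpace ℝ (Fin d)) ε).indicator
              (fun y => ENNReal.ofReal (gr y)) y := by
      rw [← lintegral_add_left ((hh_meas.abs.pow_const p).ennreal_ofReal)]
      exact lintegral_congr fun y => hpt y
    have hdisj : Disjoint (ball (0 : EuclideanSpace ℝ (Fin d)) ε)
        (sphere (0 : EuclideanSpace ℝ (Fin d)) ε) := by
      refine Set.disjoint_left.mpr fun y hy1 hy2 => ?_
      rw [mem_ball_zero_iff] at hy1
      rw [mem_sphere_zero_iff_norm] at hy2
      exact absurd hy2 (ne_of_lt hy1)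
    have hindint : (∫⁻ y in ball (0 : EuclideanSpace ℝ (Fin d)) R,
        (closedBall (0 : EuclideanSpace ℝ (Fin d)) ε).indicator
          (fun y => ENNReal.ofReal (gr y)) y) = ENNReal.ofReal (ε ^ α) * J := by
      rw [lintegral_indicator measurableSet_closedBall,
        Measure.restrict_restrict measurableSet_closedBall,
        Set.inter_eq_left.mpr (closedBall_subset_ball hεR), ← ball_union_sphere,
        lintegral_union isClosed_sphere.measurableSet hdisj,
        setLIntegral_measure_zero _ _ (Measure.addHaar_sphere volume 0 ε), add_zero]
      exact hIf hε0 hε1.le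
    rw [hIf hR0 hR1, hindint] at hsplit
    have hεα_le : ε ^ α ≤ R ^ α := Real.rpow_le_rpow hε0.le hεR.le hα0.le
    have hofr : ENNReal.ofReal (R ^ α) = ENNReal.ofReal (R ^ α - ε ^ α) +
        ENNReal.ofReal (ε ^ α) := by
      rw [← ENNReal.ofReal_add (by linarith) (Real.rpow_nonneg hε0.le _), sub_add_cancel]
    rw [hofr, add_mul] at hsplit
    exact (ENNReal.add_left_inj (ENNReal.mul_ne_top ofReal_ne_top hJlt.ne)).mp hsplit.symm
  -- lower bound for the Morrey norm of h at centered balls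
  have hHlb : ∀ {R : ℝ}, ε < R → R < 1 →
      ENNReal.ofReal (R ^ ((d:ℝ)*((1:ℝ)/q - 1/p)) * (R ^ α - ε ^ α) ^ ((1:ℝ)/p)) * K ≤
        smallMorreyNorm d p q h := by
    intro R hεR hR1
    have hR0 : 0 < R := lt_trans hε0 hεR
    have hterm : volume (ball (0 : EuclideanSpace ℝ (Fin d)) R) ^ ((1:ℝ)/q - 1/p) *
        (∫⁻ y in ball (0 : EuclideanSpace ℝ (Fin d)) R,
          ENNReal.ofReal (|h y| ^ p)) ^ ((1:ℝ)/p)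
        = ENNReal.ofReal (R ^ ((d:ℝ)*((1:ℝ)/q - 1/p)) * (R ^ α - ε ^ α) ^ ((1:ℝ)/p)) * K := by
      rw [hIh hεR hR1.le, hvol_ball 0 hR0.le]
      refine halg hR0 ?_
      have : ε ^ α < R ^ α := Real.rpow_lt_rpow hε0.le hεR hα0
      linarith
    rw [smallMorreyNorm, ← hterm]
    refine le_trans ?_ (le_iSup _ (0 : EuclideanSpace ℝ (Fin d)))
    refine le_trans ?_ (le_iSup _ R)
    refine le_trans ?_ (le_iSup _ hR0)
    exact le_of_eq (Eq.symm (iSup_pos hR1))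
  -- pass to the limit R → 1⁻
  have hφcont : Filter.Tendsto
      (fun R : ℝ => ENNReal.ofReal (R ^ ((d:ℝ)*((1:ℝ)/q - 1/p)) *
        (R ^ α - ε ^ α) ^ ((1:ℝ)/p)) * K)
      (nhdsWithin 1 (Set.Iio 1))
      (nhds (ENNReal.ofReal ((1:ℝ) ^ ((d:ℝ)*((1:ℝ)/q - 1/p)) *
        ((1:ℝ) ^ α - ε ^ α) ^ ((1:ℝ)/p)) * K)) := by
    have hcont : ContinuousAt (fun R : ℝ => R ^ ((d:ℝ)*((1:ℝ)/q - 1/p)) *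
        (R ^ α - ε ^ α) ^ ((1:ℝ)/p)) 1 := by
      have h1 : ContinuousAt (fun R : ℝ => R ^ ((d:ℝ)*((1:ℝ)/q - 1/p))) 1 :=
        Real.continuousAt_rpow_const 1 _ (Or.inl one_ne_zero)
      have h2 : ContinuousAt (fun R : ℝ => (R ^ α - ε ^ α) ^ ((1:ℝ)/p)) 1 := by
        have hin : ContinuousAt (fun R : ℝ => R ^ α - ε ^ α) 1 :=
          (Real.continuousAt_rpow_const 1 _ (Or.inl one_ne_zero)).sub continuousAt_const
        have hval : (1:ℝ) ^ α - ε ^ α ≠ 0 := by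
          have : ε ^ α < 1 ^ α := Real.rpow_lt_rpow hε0.le hε1 hα0
          rw [Real.one_rpow] at this ⊢
          linarith
        exact hin.rpow_const (Or.inl hval)
      exact h1.mul h2
    have := (ENNReal.continuous_ofReal.continuousAt.comp hcont).tendsto
    exact (ENNReal.Tendsto.mul_const this (Or.inr hKt)).mono_left nhdsWithin_le_nhds
  have hfinal : ENNReal.ofReal ((1:ℝ) ^ ((d:ℝ)*((1:ℝ)/q - 1/p)) *
      ((1:ℝ) ^ α - ε ^ α) ^ ((1:ℝ)/p)) * K ≤ smallMorreyNorm d p q h := by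
    refine le_of_tendsto hφcont ?_
    filter_upwards [Ioo_mem_nhdsLT_of_mem (Set.mem_Ioc.mpr ⟨hε1, le_refl 1⟩)] with R hR
    exact hHlb hR.1 hR.2
  have hsimpl : (1:ℝ) ^ ((d:ℝ)*((1:ℝ)/q - 1/p)) * ((1:ℝ) ^ α - ε ^ α) ^ ((1:ℝ)/p)
      = (1 - ε ^ α) ^ ((1:ℝ)/p) := by
    rw [Real.one_rpow, Real.one_rpow, one_mul]
  rw [hsimpl] at hfinal
  calc ENNReal.ofReal ((1 - ε ^ ((d : ℝ) - d * p / q)) ^ (1 / p)) * smallMorreyNorm d p q f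
      ≤ ENNReal.ofReal ((1 - ε ^ α) ^ ((1:ℝ)/p)) * K := by
        rw [hα]
        exact mul_le_mul_right hMle _
    _ ≤ smallMorreyNorm d p q h := hfinal
end

section
/- Let 1 ≤ p < q < ∞, d ≥ 1, 0 < ε < 1, and 0 < δ < 1. With f(x) = |x|^{-d/q}·χ_{(0,1)}(|x|), g(x) = χ_{(0,ε)}(|x|)f(x), h(x) = χ_{(ε,1)}(|x|)f(x), define l = (1+δ)g + (1−δ)h. Then the small Morrey norm satisfies ‖l‖_{m^p_q} = (1+δ)‖f‖_{m^p_q}. -/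
open MeasureTheory Metric ENNReal

section MorreyAux

open Set

private noncomputable def Fm (d : ℕ) (β : ℝ) (y : EuclideanSpace ℝ (Fin d)) : ℝ :=
  if ‖y‖ < 1 then ‖y‖ ^ (-β) else 0

private theorem Fm_nonneg {d : ℕ} (β : ℝ) (y : EuclideanSpace ℝ (Fin d)) : 0 ≤ Fm d β y := by
  unfold Fm; split
  · positivity
  · exact le_refl _

private theorem Fm_measurable {d : ℕ} (β : ℝ) : Measurable (Fm d β) := by
  unfold Fm
  exact Measurable.ite (measurableSet_lt measurable_norm measurable_const)
    (measurable_norm.pow measurable_const) measurable_const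

private theorem Fm_superlevel {d : ℕ} {β t : ℝ} (hβ : 0 < β) (ht : 0 < t) :
    {y : EuclideanSpace ℝ (Fin d) | t < Fm d β y}
      = ball (0 : EuclideanSpace ℝ (Fin d)) (min 1 (t ^ (-β)⁻¹)) \ {0} := by
  have hβ' : -β < 0 := by linarith
  ext y
  simp only [mem_setOf_eq, mem_diff, mem_ball, mem_singleton_iff, dist_zero_right, lt_min_iff]
  unfold Fm
  constructor
  · intro hy
    by_cases h1 : ‖y‖ < 1
    · rw [if_pos h1] at hy
      have hy0 : y ≠ 0 := by
        rintro rfl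
        rw [norm_zero, Real.zero_rpow (by linarith : -β ≠ 0)] at hy
        linarith
      have hn : 0 < ‖y‖ := norm_pos_iff.2 hy0
      exact ⟨⟨h1, (Real.lt_rpow_inv_iff_of_neg hn ht hβ').2 hy⟩, hy0⟩
    · rw [if_neg h1] at hy; linarith
  · rintro ⟨⟨h1, h2⟩, hy0⟩
    have hn : 0 < ‖y‖ := norm_pos_iff.2 hy0
    rw [if_pos h1]
    exact (Real.lt_rpow_inv_iff_of_neg hn ht hβ').1 h2

private theorem nontrivE {d : ℕ} (hd : 1 ≤ d) : Nontrivial (EuclideanSpace ℝ (Fin d)) := by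
  haveI : Nonempty (Fin d) := ⟨⟨0, hd⟩⟩
  exact inferInstanceAs (Nontrivial (PiLp 2 fun _ : Fin d => ℝ))

-- measure of (ball 0 ρ \ {0}) ∩ ball a R  : upper bound
private theorem cap_le {d : ℕ} (hd : 1 ≤ d) {R ρ : ℝ} (hR : 0 ≤ R) (hρ : 0 ≤ ρ)
    (a : EuclideanSpace ℝ (Fin d)) :
    volume ((ball (0 : EuclideanSpace ℝ (Fin d)) ρ \ {0}) ∩ ball a R)
      ≤ ENNReal.ofReal (min R ρ ^ d) * volume (ball (0 : EuclideanSpace ℝ (Fin d)) 1) := by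
  haveI := nontrivE hd
  rcases le_total R ρ with hc | hc
  · rw [min_eq_left hc]
    calc volume ((ball (0 : EuclideanSpace ℝ (Fin d)) ρ \ {0}) ∩ ball a R)
        ≤ volume (ball a R) := measure_mono inter_subset_right
      _ = ENNReal.ofReal (R ^ d) * volume (ball (0 : EuclideanSpace ℝ (Fin d)) 1) := by
          rw [Measure.addHaar_ball _ _ hR, finrank_euclideanSpace_fin]
  · rw [min_eq_right hc]
    calc volume ((ball (0 : EuclideanSpace ℝ (Fin d)) ρ \ {0}) ∩ ball a R)
        ≤ volume (ball (0 : EuclideanSpace ℝ (Fin d)) ρ) :=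
          measure_mono (inter_subset_left.trans diff_subset)
      _ = ENNReal.ofReal (ρ ^ d) * volume (ball (0 : EuclideanSpace ℝ (Fin d)) 1) := by
          rw [Measure.addHaar_ball _ _ hρ, finrank_euclideanSpace_fin]

private theorem cap_eq {d : ℕ} (hd : 1 ≤ d) {R ρ : ℝ} (hR : 0 ≤ R) (hρ : 0 ≤ ρ) :
    volume ((ball (0 : EuclideanSpace ℝ (Fin d)) ρ \ {0}) ∩ ball (0 : EuclideanSpace ℝ (Fin d)) R)
      = ENNReal.ofReal (min R ρ ^ d) * volume (ball (0 : EuclideanSpace ℝ (Fin d)) 1) := by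
  haveI := nontrivE hd
  haveI : NullSingletonClass (volume : Measure (EuclideanSpace ℝ (Fin d))) := inferInstance
  have hset : (ball (0 : EuclideanSpace ℝ (Fin d)) ρ \ {0}) ∩ ball (0 : EuclideanSpace ℝ (Fin d)) R
      = ball (0 : EuclideanSpace ℝ (Fin d)) (min R ρ) \ {0} := by
    ext y
    simp only [mem_inter_iff, mem_diff, mem_ball, mem_singleton_iff, dist_zero_right, lt_min_iff]
    tauto
  rw [hset, measure_diff_null (measure_singleton 0),
    Measure.addHaar_ball _ _ (le_min hR hρ), finrank_euclideanSpace_fin]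

private theorem layercake {d : ℕ} (β : ℝ) (a : EuclideanSpace ℝ (Fin d)) (R : ℝ) :
    ∫⁻ y in ball a R, ENNReal.ofReal (Fm d β y)
      = ∫⁻ t in Ioi (0 : ℝ), volume ({y | t < Fm d β y} ∩ ball a R) := by
  rw [lintegral_eq_lintegral_meas_lt _ (ae_of_all _ (Fm_nonneg β))
    (Fm_measurable β).aemeasurable]
  refine lintegral_congr fun t => ?_
  rw [Measure.restrict_apply (measurableSet_lt measurable_const (Fm_measurable β))]

private theorem J_le {d : ℕ} (hd : 1 ≤ d) {β : ℝ} (hβ : 0 < β) {R : ℝ} (hR : 0 < R)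
    (a : EuclideanSpace ℝ (Fin d)) :
    ∫⁻ y in ball a R, ENNReal.ofReal (Fm d β y)
      ≤ ∫⁻ y in ball (0 : EuclideanSpace ℝ (Fin d)) R, ENNReal.ofReal (Fm d β y) := by
  rw [layercake, layercake]
  refine lintegral_mono_ae ?_
  filter_upwards [ae_restrict_mem measurableSet_Ioi] with t ht
  rw [Fm_superlevel hβ ht, cap_eq hd hR.le (le_min zero_le_one (Real.rpow_nonneg ht.le _))]
  exact cap_le hd hR.le (le_min zero_le_one (Real.rpow_nonneg ht.le _)) a

private theorem J_eq {d : ℕ} (hd : 1 ≤ d) {β : ℝ} (hβ : 0 < β) (hβd : β < (d : ℝ))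
    {R : ℝ} (hR : 0 < R) (hR1 : R ≤ 1) :
    ∫⁻ y in ball (0 : EuclideanSpace ℝ (Fin d)) R, ENNReal.ofReal (Fm d β y)
      = ENNReal.ofReal (R ^ ((d : ℝ) - β) * ((d : ℝ) / ((d : ℝ) - β)))
          * volume (ball (0 : EuclideanSpace ℝ (Fin d)) 1) := by
  have hβ' : (-β) < 0 := by linarith
  have hd0 : (0 : ℝ) < d := by exact_mod_cast hd
  set V := volume (ball (0 : EuclideanSpace ℝ (Fin d)) 1) with hV
  set T : ℝ := R ^ (-β) with hTdef
  have hT0 : 0 < T := Real.rpow_pos_of_pos hR _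
  set s : ℝ := (-β)⁻¹ * d with hsdef
  have hβne : β ≠ 0 := hβ.ne'
  have hs1 : s < -1 := by
    have h1 : (1:ℝ) < β⁻¹ * ↑d := by
      rw [← div_eq_inv_mul, lt_div_iff₀ hβ, one_mul]; exact hβd
    rw [hsdef, ← neg_inv, neg_mul]
    linarith
  rw [layercake]
  have hstep1 : ∀ᵐ t ∂(volume : Measure ℝ), t ∈ Ioi (0:ℝ) →
      volume ({y : EuclideanSpace ℝ (Fin d) | t < Fm d β y}
          ∩ ball (0 : EuclideanSpace ℝ (Fin d)) R)
        = ENNReal.ofReal (min R (t ^ (-β)⁻¹) ^ d) * V := by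
    refine ae_of_all _ fun t ht => ?_
    rw [Fm_superlevel hβ ht,
      cap_eq hd hR.le (le_min zero_le_one (Real.rpow_nonneg ht.le _))]
    congr 2
    rw [← min_assoc, min_eq_left hR1]
  rw [setLIntegral_congr_fun_ae measurableSet_Ioi hstep1]
  rw [← Ioc_union_Ioi_eq_Ioi hT0.le,
    lintegral_union measurableSet_Ioi Ioc_disjoint_Ioi_same]
  have hpiece1 : ∫⁻ t in Ioc (0:ℝ) T, ENNReal.ofReal (min R (t ^ (-β)⁻¹) ^ d) * V
      = ENNReal.ofReal (R ^ d) * V * ENNReal.ofReal T := by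
    have : ∀ᵐ t ∂(volume : Measure ℝ), t ∈ Ioc (0:ℝ) T →
        ENNReal.ofReal (min R (t ^ (-β)⁻¹) ^ d) * V = ENNReal.ofReal (R ^ d) * V := by
      refine ae_of_all _ fun t ht => ?_
      have : R ≤ t ^ (-β)⁻¹ := (Real.le_rpow_inv_iff_of_neg hR ht.1 hβ').2 ht.2
      rw [min_eq_left this]
    rw [setLIntegral_congr_fun_ae measurableSet_Ioc this, setLIntegral_const,
      Real.volume_Ioc, sub_zero, mul_comm _ (ENNReal.ofReal T)]
  have hpiece2 : ∫⁻ t in Ioi T, ENNReal.ofReal (min R (t ^ (-β)⁻¹) ^ d) * V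
      = ENNReal.ofReal (R ^ ((d:ℝ) - β) * (β / ((d:ℝ) - β))) * V := by
    have hcg : ∀ᵐ t ∂(volume : Measure ℝ), t ∈ Ioi T →
        ENNReal.ofReal (min R (t ^ (-β)⁻¹) ^ d) * V = ENNReal.ofReal (t ^ s) * V := by
      refine ae_of_all _ fun t ht => ?_
      have ht0 : 0 < t := hT0.trans ht
      have hmin : t ^ (-β)⁻¹ ≤ R :=
        (Real.rpow_inv_le_iff_of_neg ht0 hR hβ').2 (le_of_lt ht)
      rw [min_eq_right hmin, ← Real.rpow_natCast (t ^ (-β)⁻¹) d, ← Real.rpow_mul ht0.le]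
    rw [setLIntegral_congr_fun_ae measurableSet_Ioi hcg,
      lintegral_mul_const' V _ (measure_ball_lt_top).ne]
    congr 1
    rw [← ofReal_integral_eq_lintegral_ofReal
      (integrableOn_Ioi_rpow_of_lt hs1 hT0)]
    · rw [integral_Ioi_rpow_of_lt hs1 hT0]
      congr 1
      have hsne : s + 1 ≠ 0 := ne_of_lt (by linarith)
      have hTpow : T ^ (s + 1) = R ^ ((d:ℝ) - β) := by
        rw [hTdef, ← Real.rpow_mul hR.le]
        congr 1
        rw [hsdef, mul_add, mul_one, ← mul_assoc,
          mul_inv_cancel₀ (neg_ne_zero.mpr hβne), one_mul]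
        ring
      rw [hTpow]
      have hne : (d:ℝ) - β ≠ 0 := by linarith
      have hne' : -(d:ℝ) + β ≠ 0 := by intro hcon; apply hne; linarith
      have hs2 : s + 1 = -((d:ℝ) - β) / β := by
        have hx : -((d:ℝ) - β) / β = -((d:ℝ)/β) + 1 := by
          rw [neg_div, sub_div, div_self hβne]; ring
        rw [hsdef, hx, ← neg_inv, neg_mul, inv_mul_eq_div]
      rw [hs2, div_div_eq_mul_div, neg_mul, neg_div_neg_eq, mul_div_assoc]
    · filter_upwards [ae_restrict_mem measurableSet_Ioi] with t ht
      exact Real.rpow_nonneg (hT0.trans ht).le _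
  rw [hpiece1, hpiece2]
  have hR' : ENNReal.ofReal (R ^ d) * ENNReal.ofReal T = ENNReal.ofReal (R ^ ((d:ℝ) - β)) := by
    rw [← ENNReal.ofReal_mul (by positivity), ← Real.rpow_natCast R d, hTdef,
      ← Real.rpow_add hR, ← sub_eq_add_neg]
  have hcomb : ENNReal.ofReal (R ^ d) * V * ENNReal.ofReal T
      = ENNReal.ofReal (R ^ ((d:ℝ) - β)) * V := by
    rw [mul_right_comm, hR']
  have hne : (d:ℝ) - β ≠ 0 := by linarith
  rw [hcomb, ← add_mul, ← ENNReal.ofReal_add (Real.rpow_nonneg hR.le _)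
    (mul_nonneg (Real.rpow_nonneg hR.le _) (div_nonneg hβ.le (by linarith)))]
  congr 2
  have key : (1:ℝ) + β/((d:ℝ)-β) = (d:ℝ)/((d:ℝ)-β) := by
    rw [one_add_div hne, sub_add_cancel]
  calc R ^ ((d:ℝ) - β) + R ^ ((d:ℝ) - β) * (β / ((d:ℝ) - β))
      = R ^ ((d:ℝ) - β) * (1 + β/((d:ℝ)-β)) := by ring
    _ = R ^ ((d:ℝ) - β) * ((d:ℝ)/((d:ℝ)-β)) := by rw [key]

private theorem Phi_eq {d : ℕ} (hd : 1 ≤ d) {β p q R : ℝ} (hβ0 : 0 < β) (hβd : β < (d : ℝ))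
    (hp : 0 < p) (hexp : (d:ℝ) * (1/q - 1/p) + ((d:ℝ) - β) * (1/p) = 0)
    (hR : 0 < R) (hR1 : R ≤ 1) :
    volume (ball (0 : EuclideanSpace ℝ (Fin d)) R) ^ (1/q - 1/p)
        * (∫⁻ y in ball (0 : EuclideanSpace ℝ (Fin d)) R, ENNReal.ofReal (Fm d β y)) ^ (1/p)
      = volume (ball (0 : EuclideanSpace ℝ (Fin d)) 1) ^ (1/q - 1/p)
        * (ENNReal.ofReal ((d:ℝ) / ((d:ℝ) - β))
            * volume (ball (0 : EuclideanSpace ℝ (Fin d)) 1)) ^ (1/p) := by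
  haveI := nontrivE hd
  have hVtop : volume (ball (0 : EuclideanSpace ℝ (Fin d)) 1) ≠ ⊤ := measure_ball_lt_top.ne
  rw [Measure.addHaar_ball _ _ hR.le, finrank_euclideanSpace_fin, J_eq hd hβ0 hβd hR hR1,
    ← Real.rpow_natCast R d, ENNReal.ofReal_mul (Real.rpow_nonneg hR.le _),
    ENNReal.mul_rpow_of_ne_top ENNReal.ofReal_ne_top hVtop, mul_assoc (ENNReal.ofReal _),
    ENNReal.mul_rpow_of_nonneg _ _ (by positivity : (0:ℝ) ≤ 1/p)]
  have key : ENNReal.ofReal (R ^ ((d:ℝ))) ^ (1/q - 1/p)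
      * ENNReal.ofReal (R ^ ((d:ℝ) - β)) ^ (1/p) = 1 := by
    rw [ENNReal.ofReal_rpow_of_pos (Real.rpow_pos_of_pos hR _),
      ENNReal.ofReal_rpow_of_pos (Real.rpow_pos_of_pos hR _),
      ← Real.rpow_mul hR.le, ← Real.rpow_mul hR.le,
      ← ENNReal.ofReal_mul (Real.rpow_nonneg hR.le _),
      ← Real.rpow_add hR, hexp, Real.rpow_zero, ENNReal.ofReal_one]
  calc ENNReal.ofReal (R ^ ((d:ℝ))) ^ (1/q - 1/p)
        * volume (ball (0 : EuclideanSpace ℝ (Fin d)) 1) ^ (1/q - 1/p)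
        * (ENNReal.ofReal (R ^ ((d:ℝ) - β)) ^ (1/p)
          * (ENNReal.ofReal ((d:ℝ) / ((d:ℝ) - β))
              * volume (ball (0 : EuclideanSpace ℝ (Fin d)) 1)) ^ (1/p))
      = (ENNReal.ofReal (R ^ ((d:ℝ))) ^ (1/q - 1/p)
          * ENNReal.ofReal (R ^ ((d:ℝ) - β)) ^ (1/p))
        * (volume (ball (0 : EuclideanSpace ℝ (Fin d)) 1) ^ (1/q - 1/p)
          * (ENNReal.ofReal ((d:ℝ) / ((d:ℝ) - β))
              * volume (ball (0 : EuclideanSpace ℝ (Fin d)) 1)) ^ (1/p)) := by ring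
    _ = _ := by rw [key, one_mul]

private theorem f_pow_eq {d : ℕ} {p q : ℝ} (hp : 0 < p) (hβ0 : 0 < (d:ℝ) * p / q)
    (y : EuclideanSpace ℝ (Fin d)) :
    |(if 0 < ‖y‖ ∧ ‖y‖ < 1 then ‖y‖ ^ (-(d:ℝ) / q) else 0 : ℝ)| ^ p
      = Fm d ((d:ℝ) * p / q) y := by
  unfold Fm
  by_cases h1 : ‖y‖ < 1
  · rw [if_pos h1]
    by_cases h0 : 0 < ‖y‖
    · rw [if_pos ⟨h0, h1⟩, abs_of_nonneg (Real.rpow_nonneg (norm_nonneg y) _),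
        ← Real.rpow_mul (norm_nonneg y)]
      congr 1
      ring
    · have h00 : ‖y‖ = 0 := le_antisymm (not_lt.mp h0) (norm_nonneg y)
      rw [if_neg (fun hc => h0 hc.1), abs_zero, Real.zero_rpow hp.ne', h00,
        Real.zero_rpow (by linarith : -((d:ℝ) * p / q) ≠ 0)]
  · rw [if_neg (fun hc => h1 hc.2), if_neg h1, abs_zero, Real.zero_rpow hp.ne']

private theorem l_abs_le {d : ℕ} {q ε δ : ℝ} (hδ0 : 0 < δ) (hδ1 : δ < 1)
    (y : EuclideanSpace ℝ (Fin d)) :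
    |(1 + δ) * (if 0 < ‖y‖ ∧ ‖y‖ < ε then (if 0 < ‖y‖ ∧ ‖y‖ < 1 then ‖y‖ ^ (-(d:ℝ) / q) else 0)
        else 0)
      + (1 - δ) * (if ε < ‖y‖ ∧ ‖y‖ < 1 then (if 0 < ‖y‖ ∧ ‖y‖ < 1 then ‖y‖ ^ (-(d:ℝ) / q)
        else 0) else 0)|
    ≤ (1 + δ) * |(if 0 < ‖y‖ ∧ ‖y‖ < 1 then ‖y‖ ^ (-(d:ℝ) / q) else 0 : ℝ)| := by
  by_cases h1 : 0 < ‖y‖ ∧ ‖y‖ < ε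
  · have h2 : ¬(ε < ‖y‖ ∧ ‖y‖ < 1) := fun hc => absurd (h1.2.trans hc.1) (lt_irrefl _)
    rw [if_pos h1, if_neg h2, mul_zero, add_zero, abs_mul,
      abs_of_nonneg (by linarith : (0:ℝ) ≤ 1 + δ)]
  · rw [if_neg h1, mul_zero, zero_add]
    by_cases h2 : ε < ‖y‖ ∧ ‖y‖ < 1
    · rw [if_pos h2, abs_mul, abs_of_nonneg (by linarith : (0:ℝ) ≤ 1 - δ)]
      exact mul_le_mul_of_nonneg_right (by linarith) (abs_nonneg _)
    · rw [if_neg h2, mul_zero, abs_zero]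
      positivity

private theorem l_ball_eq {d : ℕ} {q ε δ : ℝ} (hε1 : ε < 1)
    {y : EuclideanSpace ℝ (Fin d)} (hy : ‖y‖ < ε) :
    (1 + δ) * (if 0 < ‖y‖ ∧ ‖y‖ < ε then (if 0 < ‖y‖ ∧ ‖y‖ < 1 then ‖y‖ ^ (-(d:ℝ) / q) else 0)
        else 0)
      + (1 - δ) * (if ε < ‖y‖ ∧ ‖y‖ < 1 then (if 0 < ‖y‖ ∧ ‖y‖ < 1 then ‖y‖ ^ (-(d:ℝ) / q)
        else 0) else 0)
    = (1 + δ) * (if 0 < ‖y‖ ∧ ‖y‖ < 1 then ‖y‖ ^ (-(d:ℝ) / q) else 0 : ℝ) := by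
  have h2 : ¬(ε < ‖y‖ ∧ ‖y‖ < 1) := fun hc => absurd (hy.trans hc.1) (lt_irrefl _)
  rw [if_neg h2, mul_zero, add_zero]
  by_cases h0 : 0 < ‖y‖
  · rw [if_pos ⟨h0, hy⟩]
  · rw [if_neg (fun hc => h0 hc.1), if_neg (fun hc => h0 hc.1), mul_zero]

end MorreyAux

/-- with `f(x) = |x|^{-d/q} χ_{(0,1)}(|x|)`, `g = χ_{(0,ε)}(|·|) f`,
`h = χ_{(ε,1)}(|·|) f` and `l = (1+δ) g + (1-δ) h`, one has
`‖l‖_{m^p_q} = (1+δ) ‖f‖_{m^p_q}`. -/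
theorem smallMorreyNorm_l_eq (d : ℕ) (p q : ℝ) (hp : 1 ≤ p) (hpq : p < q)
    (hd : 1 ≤ d) (ε δ : ℝ) (hε0 : 0 < ε) (hε1 : ε < 1) (hδ0 : 0 < δ) (hδ1 : δ < 1) :
    letI f : EuclideanSpace ℝ (Fin d) → ℝ :=
      fun x => if 0 < ‖x‖ ∧ ‖x‖ < 1 then ‖x‖ ^ (-(d : ℝ) / q) else 0
    letI g : EuclideanSpace ℝ (Fin d) → ℝ :=
      fun x => if 0 < ‖x‖ ∧ ‖x‖ < ε then f x else 0
    letI h : EuclideanSpace ℝ (Fin d) → ℝ :=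
      fun x => if ε < ‖x‖ ∧ ‖x‖ < 1 then f x else 0
    letI l : EuclideanSpace ℝ (Fin d) → ℝ :=
      fun x => (1 + δ) * g x + (1 - δ) * h x
    smallMorreyNorm d p q l = ENNReal.ofReal (1 + δ) * smallMorreyNorm d p q f := by
  have hp0 : (0:ℝ) < p := lt_of_lt_of_le one_pos hp
  have hq0 : (0:ℝ) < q := lt_trans hp0 hpq
  have hd0 : (0:ℝ) < (d:ℝ) := by exact_mod_cast hd
  have hβ0 : (0:ℝ) < (d:ℝ) * p / q := by positivity
  have hβd : (d:ℝ) * p / q < (d:ℝ) := by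
    rw [mul_div_assoc]
    calc (d:ℝ) * (p / q) < (d:ℝ) * 1 :=
          mul_lt_mul_of_pos_left ((div_lt_one hq0).2 hpq) hd0
      _ = (d:ℝ) := mul_one _
  have hexp : (d:ℝ) * (1/q - 1/p) + ((d:ℝ) - (d:ℝ) * p / q) * (1/p) = 0 := by
    field_simp
    ring
  have hone : (0:ℝ) < 1 + δ := by linarith
  -- the constant N
  set V := volume (ball (0 : EuclideanSpace ℝ (Fin d)) 1) with hVdef
  set N : ℝ≥0∞ := V ^ (1/q - 1/p)
    * (ENNReal.ofReal ((d:ℝ) / ((d:ℝ) - (d:ℝ) * p / q)) * V) ^ (1/p) with hNdef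
  have hc : (ENNReal.ofReal ((1 + δ) ^ p)) ^ (1/p) = ENNReal.ofReal (1 + δ) := by
    rw [ENNReal.ofReal_rpow_of_pos (Real.rpow_pos_of_pos hone _),
      ← Real.rpow_mul hone.le, mul_one_div, div_self hp0.ne', Real.rpow_one]
  -- norm of f
  have hfnorm : smallMorreyNorm d p q
      (fun x : EuclideanSpace ℝ (Fin d) =>
        if 0 < ‖x‖ ∧ ‖x‖ < 1 then ‖x‖ ^ (-(d:ℝ) / q) else 0) = N := by
    unfold smallMorreyNorm
    have hI : ∀ (a : EuclideanSpace ℝ (Fin d)) (R : ℝ),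
        (∫⁻ y in ball a R, ENNReal.ofReal
          (|(fun x : EuclideanSpace ℝ (Fin d) =>
            if 0 < ‖x‖ ∧ ‖x‖ < 1 then ‖x‖ ^ (-(d:ℝ) / q) else 0) y| ^ p))
        = ∫⁻ y in ball a R, ENNReal.ofReal (Fm d ((d:ℝ) * p / q) y) := fun a R =>
      lintegral_congr fun y => by rw [show
        (|(fun x : EuclideanSpace ℝ (Fin d) =>
            if 0 < ‖x‖ ∧ ‖x‖ < 1 then ‖x‖ ^ (-(d:ℝ) / q) else 0) y| ^ p)
          = |(if 0 < ‖y‖ ∧ ‖y‖ < 1 then ‖y‖ ^ (-(d:ℝ) / q) else 0 : ℝ)| ^ p from rfl,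
        f_pow_eq hp0 hβ0 y]
    apply le_antisymm
    · refine iSup_le fun a => iSup_le fun R => iSup_le fun hR => iSup_le fun hR1 => ?_
      rw [hI a R, Measure.addHaar_ball_center]
      calc volume (ball (0 : EuclideanSpace ℝ (Fin d)) R) ^ (1/q - 1/p)
            * (∫⁻ y in ball a R, ENNReal.ofReal (Fm d ((d:ℝ) * p / q) y)) ^ (1/p)
          ≤ volume (ball (0 : EuclideanSpace ℝ (Fin d)) R) ^ (1/q - 1/p)
            * (∫⁻ y in ball (0 : EuclideanSpace ℝ (Fin d)) R,
                ENNReal.ofReal (Fm d ((d:ℝ) * p / q) y)) ^ (1/p) :=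
            mul_le_mul_right (ENNReal.rpow_le_rpow (J_le hd hβ0 hR a) (by positivity)) _
        _ = N := Phi_eq hd hβ0 hβd hp0 hexp hR hR1.le
    · refine le_trans (le_of_eq ?_)
        (le_iSup_of_le 0 (le_iSup_of_le ε (le_iSup_of_le hε0 (le_iSup_of_le hε1 le_rfl))))
      rw [hI 0 ε]
      exact (Phi_eq hd hβ0 hβd hp0 hexp hε0 hε1.le).symm
  -- norm of l
  have hlnorm : smallMorreyNorm d p q
      (fun x : EuclideanSpace ℝ (Fin d) =>
        (1 + δ) * (if 0 < ‖x‖ ∧ ‖x‖ < ε then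
            (if 0 < ‖x‖ ∧ ‖x‖ < 1 then ‖x‖ ^ (-(d:ℝ) / q) else 0) else 0)
          + (1 - δ) * (if ε < ‖x‖ ∧ ‖x‖ < 1 then
            (if 0 < ‖x‖ ∧ ‖x‖ < 1 then ‖x‖ ^ (-(d:ℝ) / q) else 0) else 0))
      = ENNReal.ofReal (1 + δ) * N := by
    unfold smallMorreyNorm
    have hptle : ∀ y : EuclideanSpace ℝ (Fin d),
        ENNReal.ofReal (|(1 + δ) * (if 0 < ‖y‖ ∧ ‖y‖ < ε then
            (if 0 < ‖y‖ ∧ ‖y‖ < 1 then ‖y‖ ^ (-(d:ℝ) / q) else 0) else 0)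
          + (1 - δ) * (if ε < ‖y‖ ∧ ‖y‖ < 1 then
            (if 0 < ‖y‖ ∧ ‖y‖ < 1 then ‖y‖ ^ (-(d:ℝ) / q) else 0) else 0)| ^ p)
        ≤ ENNReal.ofReal ((1 + δ) ^ p) * ENNReal.ofReal (Fm d ((d:ℝ) * p / q) y) := by
      intro y
      rw [← ENNReal.ofReal_mul (by positivity)]
      refine ENNReal.ofReal_le_ofReal ?_
      calc |(1 + δ) * (if 0 < ‖y‖ ∧ ‖y‖ < ε then
            (if 0 < ‖y‖ ∧ ‖y‖ < 1 then ‖y‖ ^ (-(d:ℝ) / q) else 0) else 0)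
          + (1 - δ) * (if ε < ‖y‖ ∧ ‖y‖ < 1 then
            (if 0 < ‖y‖ ∧ ‖y‖ < 1 then ‖y‖ ^ (-(d:ℝ) / q) else 0) else 0)| ^ p
          ≤ ((1 + δ) * |(if 0 < ‖y‖ ∧ ‖y‖ < 1 then ‖y‖ ^ (-(d:ℝ) / q) else 0 : ℝ)|) ^ p :=
            Real.rpow_le_rpow (abs_nonneg _) (l_abs_le hδ0 hδ1 y) hp0.le
        _ = (1 + δ) ^ p * |(if 0 < ‖y‖ ∧ ‖y‖ < 1 then ‖y‖ ^ (-(d:ℝ) / q) else 0 : ℝ)| ^ p :=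
            Real.mul_rpow hone.le (abs_nonneg _)
        _ = (1 + δ) ^ p * Fm d ((d:ℝ) * p / q) y := by rw [f_pow_eq hp0 hβ0 y]
    have hIball : ∫⁻ y in ball (0 : EuclideanSpace ℝ (Fin d)) ε,
        ENNReal.ofReal (|(1 + δ) * (if 0 < ‖y‖ ∧ ‖y‖ < ε then
            (if 0 < ‖y‖ ∧ ‖y‖ < 1 then ‖y‖ ^ (-(d:ℝ) / q) else 0) else 0)
          + (1 - δ) * (if ε < ‖y‖ ∧ ‖y‖ < 1 then
            (if 0 < ‖y‖ ∧ ‖y‖ < 1 then ‖y‖ ^ (-(d:ℝ) / q) else 0) else 0)| ^ p)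
        = ENNReal.ofReal ((1 + δ) ^ p) * ∫⁻ y in ball (0 : EuclideanSpace ℝ (Fin d)) ε,
            ENNReal.ofReal (Fm d ((d:ℝ) * p / q) y) := by
      rw [← lintegral_const_mul' _ _ ENNReal.ofReal_ne_top]
      refine setLIntegral_congr_fun_ae measurableSet_ball (ae_of_all _ fun y hy => ?_)
      have hyε : ‖y‖ < ε := by simpa [mem_ball_zero_iff] using hy
      rw [l_ball_eq hε1 hyε, abs_mul, abs_of_nonneg hone.le,
        Real.mul_rpow hone.le (abs_nonneg _), ENNReal.ofReal_mul (by positivity),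
        f_pow_eq hp0 hβ0 y]
    apply le_antisymm
    · refine iSup_le fun a => iSup_le fun R => iSup_le fun hR => iSup_le fun hR1 => ?_
      calc volume (ball a R) ^ (1/q - 1/p)
            * (∫⁻ y in ball a R, ENNReal.ofReal (|(1 + δ) * (if 0 < ‖y‖ ∧ ‖y‖ < ε then
                (if 0 < ‖y‖ ∧ ‖y‖ < 1 then ‖y‖ ^ (-(d:ℝ) / q) else 0) else 0)
              + (1 - δ) * (if ε < ‖y‖ ∧ ‖y‖ < 1 then
                (if 0 < ‖y‖ ∧ ‖y‖ < 1 then ‖y‖ ^ (-(d:ℝ) / q) else 0) else 0)| ^ p)) ^ (1/p)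
          ≤ volume (ball a R) ^ (1/q - 1/p)
            * (∫⁻ y in ball a R, ENNReal.ofReal ((1 + δ) ^ p)
                * ENNReal.ofReal (Fm d ((d:ℝ) * p / q) y)) ^ (1/p) :=
            mul_le_mul_right (ENNReal.rpow_le_rpow
              (lintegral_mono fun y => hptle y) (by positivity)) _
        _ = ENNReal.ofReal (1 + δ) * (volume (ball (0 : EuclideanSpace ℝ (Fin d)) R)
              ^ (1/q - 1/p)
            * (∫⁻ y in ball a R, ENNReal.ofReal (Fm d ((d:ℝ) * p / q) y)) ^ (1/p)) := by
            rw [lintegral_const_mul' _ _ ENNReal.ofReal_ne_top,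
              ENNReal.mul_rpow_of_nonneg _ _ (by positivity : (0:ℝ) ≤ 1/p), hc,
              Measure.addHaar_ball_center]
            ring
        _ ≤ ENNReal.ofReal (1 + δ) * (volume (ball (0 : EuclideanSpace ℝ (Fin d)) R)
              ^ (1/q - 1/p)
            * (∫⁻ y in ball (0 : EuclideanSpace ℝ (Fin d)) R,
                ENNReal.ofReal (Fm d ((d:ℝ) * p / q) y)) ^ (1/p)) :=
            mul_le_mul_right (mul_le_mul_right
              (ENNReal.rpow_le_rpow (J_le hd hβ0 hR a) (by positivity)) _) _
        _ = ENNReal.ofReal (1 + δ) * N :=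
            congrArg (fun X => ENNReal.ofReal (1 + δ) * X)
              (Phi_eq hd hβ0 hβd hp0 hexp hR hR1.le)
    · have key : volume (ball (0 : EuclideanSpace ℝ (Fin d)) ε) ^ (1/q - 1/p)
            * (∫⁻ y in ball (0 : EuclideanSpace ℝ (Fin d)) ε,
              ENNReal.ofReal (|(1 + δ) * (if 0 < ‖y‖ ∧ ‖y‖ < ε then
                (if 0 < ‖y‖ ∧ ‖y‖ < 1 then ‖y‖ ^ (-(d:ℝ) / q) else 0) else 0)
              + (1 - δ) * (if ε < ‖y‖ ∧ ‖y‖ < 1 then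
                (if 0 < ‖y‖ ∧ ‖y‖ < 1 then ‖y‖ ^ (-(d:ℝ) / q) else 0) else 0)| ^ p)) ^ (1/p)
          = ENNReal.ofReal (1 + δ) * N := by
        rw [hIball, ENNReal.mul_rpow_of_nonneg _ _ (by positivity : (0:ℝ) ≤ 1/p), hc]
        rw [show volume (ball (0 : EuclideanSpace ℝ (Fin d)) ε) ^ (1/q - 1/p)
            * (ENNReal.ofReal (1 + δ)
              * (∫⁻ y in ball (0 : EuclideanSpace ℝ (Fin d)) ε,
                  ENNReal.ofReal (Fm d ((d:ℝ) * p / q) y)) ^ (1/p))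
            = ENNReal.ofReal (1 + δ)
              * (volume (ball (0 : EuclideanSpace ℝ (Fin d)) ε) ^ (1/q - 1/p)
                * (∫⁻ y in ball (0 : EuclideanSpace ℝ (Fin d)) ε,
                    ENNReal.ofReal (Fm d ((d:ℝ) * p / q) y)) ^ (1/p)) from by ring]
        exact congrArg (fun X => ENNReal.ofReal (1 + δ) * X)
          (Phi_eq hd hβ0 hβd hp0 hexp hε0 hε1.le)
      exact le_trans (le_of_eq key.symm)
        (le_iSup_of_le 0 (le_iSup_of_le ε (le_iSup_of_le hε0 (le_iSup_of_le hε1 le_rfl))))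
  calc smallMorreyNorm d p q (fun x : EuclideanSpace ℝ (Fin d) =>
        (1 + δ) * (if 0 < ‖x‖ ∧ ‖x‖ < ε then
            (if 0 < ‖x‖ ∧ ‖x‖ < 1 then ‖x‖ ^ (-(d:ℝ) / q) else 0) else 0)
          + (1 - δ) * (if ε < ‖x‖ ∧ ‖x‖ < 1 then
            (if 0 < ‖x‖ ∧ ‖x‖ < 1 then ‖x‖ ^ (-(d:ℝ) / q) else 0) else 0))
      = ENNReal.ofReal (1 + δ) * N := hlnorm
    _ = ENNReal.ofReal (1 + δ) * smallMorreyNorm d p q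
        (fun x : EuclideanSpace ℝ (Fin d) =>
          if 0 < ‖x‖ ∧ ‖x‖ < 1 then ‖x‖ ^ (-(d:ℝ) / q) else 0) := by rw [hfnorm]
end

section
/- Let 1 ≤ p < q < ∞, d ≥ 1, and 0 < ε < 1. With f(x) = |x|^{-d/q}·χ_{(0,1)}(|x|) and k(x) = [χ_{(0,ε)}(|x|) − χ_{(ε,1)}(|x|)]f(x), the pair satisfies (‖f+k‖² + ‖f−k‖²)/(2(‖f‖² + ‖k‖²)) ≥ 1 + (1 − ε^{d−dp/q})^{2/p}, where ‖·‖ denotes the small Morrey norm on ℝ^d. -/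
open MeasureTheory Metric ENNReal

section AuxLemmas

open Set Filter

lemma lintegral_fun_norm_polar'' {E : Type*} [NormedAddCommGroup E] [NormedSpace ℝ E]
    [MeasurableSpace E] [BorelSpace E] [Nontrivial E] [FiniteDimensional ℝ E]
    (μ : Measure E) [μ.IsAddHaarMeasure] (h : ℝ → ℝ≥0∞) (hh : Measurable h) :
    ∫⁻ x, h ‖x‖ ∂μ = (Module.finrank ℝ E) * μ (ball 0 1) *
      ∫⁻ r in Set.Ioi (0:ℝ), ENNReal.ofReal (r ^ (Module.finrank ℝ E - 1)) * h r := by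
  have h1 : ∫⁻ x, h ‖x‖ ∂μ = ∫⁻ x : ({0}ᶜ : Set E), h ‖x.1‖ ∂(μ.comap (↑)) := by
    rw [lintegral_subtype_comap (measurableSet_singleton (0:E)).compl (fun a => h ‖a‖),
      MeasureTheory.restrict_compl_singleton]
  have h2 : ∫⁻ x : ({0}ᶜ : Set E), h ‖x.1‖ ∂(μ.comap (↑)) =
      ∫⁻ y : sphere (0:E) 1 × Set.Ioi (0:ℝ), h y.2
        ∂(μ.toSphere.prod (.volumeIoiPow (Module.finrank ℝ E - 1))) := by
    rw [← μ.measurePreserving_homeomorphUnitSphereProd.lintegral_comp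
      (f := fun y => h y.2.1) (hh.comp' (measurable_subtype_coe.comp' measurable_snd))]
    exact lintegral_congr fun x => by rw [homeomorphUnitSphereProd_apply_snd_coe]
  have h3 : ∫⁻ y : sphere (0:E) 1 × Set.Ioi (0:ℝ), h y.2
        ∂(μ.toSphere.prod (.volumeIoiPow (Module.finrank ℝ E - 1))) =
      μ.toSphere Set.univ *
        ∫⁻ r : Set.Ioi (0:ℝ), h r ∂(Measure.volumeIoiPow (Module.finrank ℝ E - 1)) := by
    rw [lintegral_prod _ (hh.comp' (measurable_subtype_coe.comp' measurable_snd)).aemeasurable]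
    simp [lintegral_const, mul_comm]
  have h4 : ∫⁻ r : Set.Ioi (0:ℝ), h r ∂(Measure.volumeIoiPow (Module.finrank ℝ E - 1)) =
      ∫⁻ r in Set.Ioi (0:ℝ), ENNReal.ofReal (r ^ (Module.finrank ℝ E - 1)) * h r := by
    rw [Measure.volumeIoiPow,
      lintegral_withDensity_eq_lintegral_mul _
        ((measurable_subtype_coe.pow_const _).ennreal_ofReal) (hh.comp' measurable_subtype_coe),
      ← lintegral_subtype_comap measurableSet_Ioi
        (fun r : ℝ => ENNReal.ofReal (r ^ (Module.finrank ℝ E - 1)) * h r)]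
    rfl
  rw [h1, h2, h3, h4, Measure.toSphere_apply_univ]

lemma J_formula' (d : ℕ) (hd : 1 ≤ d) (β : ℝ) (hβ0 : 0 ≤ β) (hβd : β < d) (R : ℝ) (hR : 0 < R) :
    ∫⁻ x in ball (0 : EuclideanSpace ℝ (Fin d)) R, ENNReal.ofReal (‖x‖ ^ (-β)) =
      d * volume (ball (0 : EuclideanSpace ℝ (Fin d)) 1) *
        ENNReal.ofReal (R ^ ((d:ℝ) - β) / ((d:ℝ) - β)) := by
  haveI : Nonempty (Fin d) := Fin.pos_iff_nonempty.1 hd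
  set γ : ℝ := (d:ℝ) - 1 - β with hγdef
  have hγ : -1 < γ := by
    have : (1:ℝ) ≤ (d:ℝ) := by exact_mod_cast hd
    simp only [hγdef]; linarith
  set h : ℝ → ℝ≥0∞ := fun r => if r < R then ENNReal.ofReal (r ^ (-β)) else 0 with hhdef
  have hmeas : Measurable h := by
    apply Measurable.ite measurableSet_Iio _ measurable_const
    exact Measurable.ennreal_ofReal (by fun_prop)
  have key : ∫⁻ x in ball (0 : EuclideanSpace ℝ (Fin d)) R, ENNReal.ofReal (‖x‖ ^ (-β)) =
      ∫⁻ x : EuclideanSpace ℝ (Fin d), h ‖x‖ := by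
    rw [← lintegral_indicator measurableSet_ball]
    refine lintegral_congr fun x => ?_
    by_cases hx : x ∈ ball (0 : EuclideanSpace ℝ (Fin d)) R
    · rw [indicator_of_mem hx]
      rw [mem_ball_zero_iff] at hx
      simp [hhdef, hx]
    · rw [indicator_of_notMem hx]
      rw [mem_ball_zero_iff, not_lt] at hx
      simp [hhdef, not_lt.2 hx]
  rw [key, lintegral_fun_norm_polar'' volume h hmeas, finrank_euclideanSpace_fin]
  congr 1
  have e1 : ∫⁻ r in Set.Ioi (0:ℝ), ENNReal.ofReal (r ^ (d - 1)) * h r =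
      ∫⁻ r in Set.Ioo (0:ℝ) R, ENNReal.ofReal (r ^ γ) := by
    have : ∀ r : ℝ, ENNReal.ofReal (r ^ (d - 1)) * h r =
        (Set.Iio R).indicator (fun r => ENNReal.ofReal (r ^ (d - 1)) * ENNReal.ofReal (r ^ (-β))) r := by
      intro r
      by_cases hr : r < R
      · simp [hhdef, hr, indicator_of_mem, Set.mem_Iio.2 hr]
      · simp [hhdef, hr, indicator_of_notMem (fun h' => hr (Set.mem_Iio.1 h'))]
    rw [lintegral_congr this, lintegral_indicator measurableSet_Iio,
      Measure.restrict_restrict measurableSet_Iio, Set.Iio_inter_Ioi]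
    refine setLIntegral_congr_fun measurableSet_Ioo (fun r hr => ?_)
    rw [← ENNReal.ofReal_mul (pow_nonneg hr.1.le _), ← Real.rpow_natCast r (d-1),
      ← Real.rpow_add hr.1]
    congr 2
    have : ((d-1 : ℕ) : ℝ) = (d:ℝ) - 1 := by
      have := Nat.cast_sub hd (R := ℝ); simpa using this
    rw [this, hγdef]; ring
  rw [e1]
  have hInt : IntegrableOn (fun r : ℝ => r ^ γ) (Set.Ioo 0 R) := by
    have := (intervalIntegral.intervalIntegrable_rpow' (a := 0) (b := R) hγ).1
    exact this.mono_set Set.Ioo_subset_Ioc_self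
  rw [← ofReal_integral_eq_lintegral_ofReal hInt
    ((ae_restrict_mem measurableSet_Ioo).mono fun r hr => Real.rpow_nonneg hr.1.le _)]
  congr 1
  rw [← MeasureTheory.integral_Ioc_eq_integral_Ioo, ← intervalIntegral.integral_of_le hR.le,
    integral_rpow (Or.inl hγ)]
  have hα : γ + 1 = (d:ℝ) - β := by rw [hγdef]; ring
  have hαpos : (0:ℝ) < γ + 1 := by rw [hα]; linarith
  rw [Real.zero_rpow hαpos.ne', hα]; ring_nf

lemma riesz_ball' {E : Type*} [NormedAddCommGroup E] [NormedSpace ℝ E] [MeasurableSpace E]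
    [BorelSpace E] [Nontrivial E] [FiniteDimensional ℝ E] (μ : Measure E) [μ.IsAddHaarMeasure]
    (φ : ℝ → ℝ≥0∞) (hmono : ∀ s t : ℝ, 0 < s → s ≤ t → φ t ≤ φ s) (a : E) (R : ℝ) (hR : 0 < R) :
    ∫⁻ x in ball a R, φ ‖x‖ ∂μ ≤ ∫⁻ x in ball (0:E) R, φ ‖x‖ ∂μ := by
  set A := ball a R with hA
  set B := ball (0:E) R with hB
  have h1 : μ (A ∩ B) + μ (A \ B) = μ A := measure_inter_add_diff A measurableSet_ball
  have h2 : μ (B ∩ A) + μ (B \ A) = μ B := measure_inter_add_diff B measurableSet_ball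
  have hAB : μ A = μ B := by
    rw [hA, hB]; exact Measure.addHaar_ball_center μ a R
  have hfin : μ (A ∩ B) ≠ ⊤ := by
    refine ne_top_of_le_ne_top (measure_ball_lt_top (μ := μ) (x := a) (r := R)).ne ?_
    exact measure_mono inter_subset_left
  have hABm : μ (A \ B) = μ (B \ A) := by
    rw [inter_comm B A] at h2
    exact (ENNReal.add_right_inj hfin).1 (h1.trans (hAB.trans h2.symm))
  have bound1 : ∫⁻ x in A \ B, φ ‖x‖ ∂μ ≤ φ R * μ (A \ B) := by
    calc ∫⁻ x in A \ B, φ ‖x‖ ∂μ ≤ ∫⁻ _ in A \ B, φ R ∂μ := by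
          refine setLIntegral_mono' (measurableSet_ball.diff measurableSet_ball) fun x hx => ?_
          refine hmono R ‖x‖ hR ?_
          have := hx.2
          rw [hB, mem_ball_zero_iff, not_lt] at this
          exact this
      _ = φ R * μ (A \ B) := setLIntegral_const _ _
  have bound2 : φ R * μ (B \ A) ≤ ∫⁻ x in B \ A, φ ‖x‖ ∂μ := by
    have hnull : μ (B \ A) = μ ((B \ A) \ {0}) := (measure_diff_null (measure_singleton 0)).symm
    calc φ R * μ (B \ A) = φ R * μ ((B \ A) \ {0}) := by rw [hnull]
      _ = ∫⁻ _ in (B \ A) \ {0}, φ R ∂μ := (setLIntegral_const _ _).symm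
      _ ≤ ∫⁻ x in (B \ A) \ {0}, φ ‖x‖ ∂μ := by
          refine setLIntegral_mono' ((measurableSet_ball.diff measurableSet_ball).diff
            (measurableSet_singleton 0)) fun x hx => ?_
          have hx0 : x ≠ 0 := fun h => hx.2 (by simp [h])
          have hxR : ‖x‖ ≤ R := by
            have := hx.1.1
            rw [hB, mem_ball_zero_iff] at this
            exact this.le
          exact hmono ‖x‖ R (norm_pos_iff.2 hx0) hxR
      _ ≤ ∫⁻ x in B \ A, φ ‖x‖ ∂μ := lintegral_mono_set diff_subset
  calc ∫⁻ x in A, φ ‖x‖ ∂μ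
      = (∫⁻ x in A ∩ B, φ ‖x‖ ∂μ) + ∫⁻ x in A \ B, φ ‖x‖ ∂μ :=
        (lintegral_inter_add_diff _ A measurableSet_ball).symm
    _ ≤ (∫⁻ x in A ∩ B, φ ‖x‖ ∂μ) + φ R * μ (A \ B) := add_le_add_right bound1 _
    _ = (∫⁻ x in A ∩ B, φ ‖x‖ ∂μ) + φ R * μ (B \ A) := by rw [hABm]
    _ ≤ (∫⁻ x in A ∩ B, φ ‖x‖ ∂μ) + ∫⁻ x in B \ A, φ ‖x‖ ∂μ := add_le_add_right bound2 _
    _ = (∫⁻ x in B ∩ A, φ ‖x‖ ∂μ) + ∫⁻ x in B \ A, φ ‖x‖ ∂μ := by rw [inter_comm]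
    _ = ∫⁻ x in B, φ ‖x‖ ∂μ := lintegral_inter_add_diff _ B measurableSet_ball

end AuxLemmas

open Set Filter

/-- with `f(x) = |x|^{-d/q} χ_{(0,1)}(|x|)` and
`k = (χ_{(0,ε)}(|·|) - χ_{(ε,1)}(|·|)) f`, the von Neumann–Jordan quotient of the pair
`(f,k)` is at least `1 + (1 - ε^{d-dp/q})^{2/p}`. -/
theorem vonNeumannJordan_quotient_lower (d : ℕ) (p q : ℝ) (hp : 1 ≤ p) (hpq : p < q)
    (hd : 1 ≤ d) (ε : ℝ) (hε0 : 0 < ε) (hε1 : ε < 1) :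
    letI f : EuclideanSpace ℝ (Fin d) → ℝ :=
      fun x => if 0 < ‖x‖ ∧ ‖x‖ < 1 then ‖x‖ ^ (-(d : ℝ) / q) else 0
    letI k : EuclideanSpace ℝ (Fin d) → ℝ :=
      fun x => ((if 0 < ‖x‖ ∧ ‖x‖ < ε then (1 : ℝ) else 0) -
        (if ε < ‖x‖ ∧ ‖x‖ < 1 then (1 : ℝ) else 0)) * f x
    1 + ENNReal.ofReal ((1 - ε ^ ((d : ℝ) - d * p / q)) ^ (2 / p)) ≤
      (smallMorreyNorm d p q (f + k) ^ 2 + smallMorreyNorm d p q (f - k) ^ 2) /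
        (2 * (smallMorreyNorm d p q f ^ 2 + smallMorreyNorm d p q k ^ 2)) := by
  haveI : Nonempty (Fin d) := Fin.pos_iff_nonempty.1 hd
  set f : EuclideanSpace ℝ (Fin d) → ℝ :=
    fun x => if 0 < ‖x‖ ∧ ‖x‖ < 1 then ‖x‖ ^ (-(d : ℝ) / q) else 0 with hfdef
  set k : EuclideanSpace ℝ (Fin d) → ℝ :=
    fun x => ((if 0 < ‖x‖ ∧ ‖x‖ < ε then (1 : ℝ) else 0) -
      (if ε < ‖x‖ ∧ ‖x‖ < 1 then (1 : ℝ) else 0)) * f x with hkdef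
  have hp0 : (0:ℝ) < p := lt_of_lt_of_le one_pos hp
  have hq0 : (0:ℝ) < q := hp0.trans hpq
  have hd0 : (0:ℝ) < d := by exact_mod_cast Nat.lt_of_lt_of_le Nat.zero_lt_one hd
  set σ : ℝ := 1 / q - 1 / p with hσdef
  set β : ℝ := (d:ℝ) * p / q with hβdef
  have hβ0 : 0 < β := by positivity
  have hβd : β < d := by
    rw [hβdef, div_lt_iff₀ hq0]
    exact mul_lt_mul_of_pos_left hpq hd0
  set α : ℝ := (d:ℝ) - β with hαdef
  have hα0 : 0 < α := sub_pos.2 hβd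
  have hεα1 : ε ^ α < 1 := Real.rpow_lt_one hε0.le hε1 hα0
  have h1εα : 0 ≤ 1 - ε ^ α := by linarith
  have hexp : (d:ℝ) * σ + α * (1/p) = 0 := by
    rw [hσdef, hαdef, hβdef]; field_simp; ring
  set ω : ℝ≥0∞ := volume (ball (0 : EuclideanSpace ℝ (Fin d)) 1) with hωdef
  have hω0 : ω ≠ 0 := (measure_ball_pos volume _ one_pos).ne'
  have hωt : ω ≠ ⊤ := measure_ball_lt_top.ne
  set N : ℝ≥0∞ := (d : ℝ≥0∞) * ω * ENNReal.ofReal α⁻¹ with hNdef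
  have hN0 : N ≠ 0 := by
    refine mul_ne_zero (mul_ne_zero ?_ hω0) ?_
    · exact Nat.cast_ne_zero.2 (by omega)
    · simpa using (ENNReal.ofReal_pos.2 (inv_pos.2 hα0)).ne'
  have hNt : N ≠ ⊤ := by
    refine ENNReal.mul_ne_top (ENNReal.mul_ne_top ?_ hωt) ENNReal.ofReal_ne_top
    exact ENNReal.natCast_ne_top d
  -- value of the radial integral on centered balls
  have hJ : ∀ R : ℝ, 0 < R →
      ∫⁻ x in ball (0 : EuclideanSpace ℝ (Fin d)) R, ENNReal.ofReal (‖x‖ ^ (-β)) =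
        N * ENNReal.ofReal (R ^ α) := by
    intro R hR
    rw [J_formula' d hd β hβ0.le hβd R hR, ← hαdef, ← hωdef, hNdef, div_eq_mul_inv,
      ENNReal.ofReal_mul (Real.rpow_nonneg hR.le α)]
    ring
  -- volume of balls
  have hvol : ∀ (a : EuclideanSpace ℝ (Fin d)) (R : ℝ), 0 < R →
      volume (ball a R) = ENNReal.ofReal (R ^ (d:ℕ)) * ω := by
    intro a R hR
    rw [Measure.addHaar_ball_of_pos volume a hR, finrank_euclideanSpace_fin, ← hωdef]
  set C : ℝ≥0∞ := ω ^ σ * N ^ (1/p) with hCdef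
  have hC0 : C ≠ 0 := by
    rw [hCdef]
    refine mul_ne_zero ?_ ?_ <;>
      simp [ENNReal.rpow_eq_zero_iff, hω0, hωt, hN0, hNt]
  have hCt : C ≠ ⊤ := by
    rw [hCdef]
    refine ENNReal.mul_ne_top ?_ ?_ <;>
      simp [ENNReal.rpow_eq_top_iff, hω0, hωt, hN0, hNt]
  -- master algebraic identities
  have hmaster : ∀ R : ℝ, 0 < R →
      (ENNReal.ofReal (R ^ (d:ℕ)) * ω) ^ σ * (N * ENNReal.ofReal (R ^ α)) ^ (1/p) = C := by
    intro R hR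
    have hRd : (0:ℝ) < R ^ (d:ℕ) := by positivity
    rw [ENNReal.mul_rpow_of_ne_top ENNReal.ofReal_ne_top hωt,
      ENNReal.mul_rpow_of_ne_top hNt ENNReal.ofReal_ne_top,
      ENNReal.ofReal_rpow_of_pos hRd, ENNReal.ofReal_rpow_of_pos (Real.rpow_pos_of_pos hR α)]
    have key : ENNReal.ofReal ((R ^ (d:ℕ)) ^ σ) * ENNReal.ofReal ((R ^ α) ^ (1/p)) = 1 := by
      rw [← ENNReal.ofReal_mul (Real.rpow_nonneg hRd.le σ)]
      have h1 : (R ^ (d:ℕ)) ^ σ * (R ^ α) ^ (1/p) = 1 := by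
        rw [← Real.rpow_natCast R d, ← Real.rpow_mul hR.le, ← Real.rpow_mul hR.le,
          ← Real.rpow_add hR, hexp, Real.rpow_zero]
      rw [h1, ENNReal.ofReal_one]
    calc ENNReal.ofReal ((R ^ (d:ℕ)) ^ σ) * ω ^ σ * (N ^ (1/p) * ENNReal.ofReal ((R ^ α) ^ (1/p)))
        = ENNReal.ofReal ((R ^ (d:ℕ)) ^ σ) * ENNReal.ofReal ((R ^ α) ^ (1/p)) * (ω ^ σ * N ^ (1/p)) := by
          ring
      _ = C := by rw [key, one_mul, hCdef]
  have hmaster2 : ∀ R u : ℝ, 0 < R → 0 < u →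
      (ENNReal.ofReal (R ^ (d:ℕ)) * ω) ^ σ *
        (ENNReal.ofReal (2 ^ p) * (N * ENNReal.ofReal u)) ^ (1/p) =
      2 * C * ENNReal.ofReal ((u / R ^ α) ^ (1/p)) := by
    intro R u hR hu
    have hRd : (0:ℝ) < R ^ (d:ℕ) := by positivity
    have hRα : (0:ℝ) < R ^ α := Real.rpow_pos_of_pos hR α
    have h2p : (ENNReal.ofReal (2 ^ p)) ^ (1/p) = 2 := by
      rw [ENNReal.ofReal_rpow_of_pos (by positivity), ← Real.rpow_mul (by norm_num : (0:ℝ) ≤ 2),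
        mul_one_div_cancel hp0.ne', Real.rpow_one, ENNReal.ofReal_ofNat]
    rw [ENNReal.mul_rpow_of_ne_top ENNReal.ofReal_ne_top hωt,
      ENNReal.mul_rpow_of_nonneg _ _ (by positivity : (0:ℝ) ≤ 1/p),
      ENNReal.mul_rpow_of_ne_top hNt ENNReal.ofReal_ne_top, h2p,
      ENNReal.ofReal_rpow_of_pos hRd, ENNReal.ofReal_rpow_of_pos hu]
    have key : ENNReal.ofReal ((R ^ (d:ℕ)) ^ σ) * ENNReal.ofReal (u ^ (1/p)) =
        ENNReal.ofReal ((u / R ^ α) ^ (1/p)) := by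
      rw [← ENNReal.ofReal_mul (Real.rpow_nonneg hRd.le σ)]
      congr 1
      have h1 : (R ^ (d:ℕ)) ^ σ = (R ^ (α * (1/p)))⁻¹ := by
        rw [← Real.rpow_natCast R d, ← Real.rpow_mul hR.le, ← Real.rpow_neg hR.le]
        congr 1
        linarith
      rw [h1, Real.div_rpow hu.le hRα.le, ← Real.rpow_mul hR.le, div_eq_mul_inv]
      ring
    calc ENNReal.ofReal ((R ^ (d:ℕ)) ^ σ) * ω ^ σ * (2 * (N ^ (1/p) * ENNReal.ofReal (u ^ (1/p))))
        = 2 * (ω ^ σ * N ^ (1/p)) *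
            (ENNReal.ofReal ((R ^ (d:ℕ)) ^ σ) * ENNReal.ofReal (u ^ (1/p))) := by ring
      _ = 2 * C * ENNReal.ofReal ((u / R ^ α) ^ (1/p)) := by rw [key, hCdef]
  -- pointwise facts
  have P1 : ∀ x : EuclideanSpace ℝ (Fin d), ‖x‖ < 1 →
      ENNReal.ofReal (|f x| ^ p) = ENNReal.ofReal (‖x‖ ^ (-β)) := by
    intro x hx1
    by_cases hx0 : 0 < ‖x‖
    · have hfx : f x = ‖x‖ ^ (-(d:ℝ) / q) := by
        simp only [hfdef]
        rw [if_pos ⟨hx0, hx1⟩]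
      congr 1
      rw [hfx, abs_of_nonneg (Real.rpow_nonneg (norm_nonneg x) _),
        ← Real.rpow_mul (norm_nonneg x)]
      congr 1
      rw [hβdef]
      ring
    · have hx0' : ‖x‖ = 0 := le_antisymm (not_lt.1 hx0) (norm_nonneg x)
      have hfx : f x = 0 := by
        simp only [hfdef]
        rw [if_neg (fun h => hx0 h.1)]
      rw [hfx, hx0', abs_zero, Real.zero_rpow hp0.ne',
        Real.zero_rpow (neg_ne_zero.2 hβ0.ne')]
  have P2 : ∀ x : EuclideanSpace ℝ (Fin d),
      ENNReal.ofReal (|f x| ^ p) ≤ ENNReal.ofReal (‖x‖ ^ (-β)) := by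
    intro x
    by_cases hx1 : ‖x‖ < 1
    · exact (P1 x hx1).le
    · have hfx : f x = 0 := by
        simp only [hfdef]
        rw [if_neg (fun h => hx1 h.2)]
      rw [hfx, abs_zero, Real.zero_rpow hp0.ne', ENNReal.ofReal_zero]
      exact zero_le
  have Pfk : ∀ y : EuclideanSpace ℝ (Fin d), ‖y‖ < ε → (f + k) y = 2 * f y := by
    intro y hy
    have hky : k y = (if 0 < ‖y‖ then (1:ℝ) else 0) * f y := by
      simp only [hkdef]
      by_cases h0 : 0 < ‖y‖
      · rw [if_pos ⟨h0, hy⟩, if_pos h0, if_neg (fun h => absurd (hy.trans h.1) (lt_irrefl _))]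
        ring
      · rw [if_neg (fun h => h0 h.1), if_neg h0,
          if_neg (fun h => h0 (hε0.trans h.1))]
        ring
    show f y + k y = 2 * f y
    rw [hky]
    by_cases h0 : 0 < ‖y‖
    · rw [if_pos h0]; ring
    · have hfy : f y = 0 := by
        simp only [hfdef]
        rw [if_neg (fun h => h0 h.1)]
      rw [if_neg h0, hfy]; ring
  have Pfk2 : ∀ y : EuclideanSpace ℝ (Fin d), ε < ‖y‖ → (f - k) y = 2 * f y := by
    intro y hy
    show f y - k y = 2 * f y
    by_cases h1 : ‖y‖ < 1
    · have hky : k y = -f y := by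
        simp only [hkdef]
        rw [if_neg (fun h => absurd (hy.trans h.2) (lt_irrefl _)), if_pos ⟨hy, h1⟩]
        ring
      rw [hky]; ring
    · have hfy : f y = 0 := by
        simp only [hfdef]
        rw [if_neg (fun h => h1 h.2)]
      have hky : k y = 0 := by
        simp only [hkdef]
        rw [if_neg (fun h => h1 (h.2.trans hε1)), if_neg (fun h => h1 h.2)]
        ring
      rw [hfy, hky]; ring
  have Pk : ∀ y : EuclideanSpace ℝ (Fin d), ‖y‖ ≠ ε → |k y| = |f y| := by
    intro y hy
    by_cases h1 : 0 < ‖y‖ ∧ ‖y‖ < ε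
    · have hky : k y = f y := by
        simp only [hkdef]
        rw [if_pos h1, if_neg (fun h => absurd (h1.2.trans h.1) (lt_irrefl _))]
        ring
      rw [hky]
    · by_cases h2 : ε < ‖y‖ ∧ ‖y‖ < 1
      · have hky : k y = -f y := by
          simp only [hkdef]
          rw [if_neg (fun h => absurd (h2.1.trans h.2) (lt_irrefl _)), if_pos h2]
          ring
        rw [hky, abs_neg]
      · have hky : k y = 0 := by
          simp only [hkdef]
          rw [if_neg h1, if_neg h2]
          ring
        have hfy : f y = 0 := by
          simp only [hfdef]
          rw [if_neg ?_]
          rintro ⟨hy0, hy1⟩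
          rcases lt_trichotomy ‖y‖ ε with h | h | h
          · exact h1 ⟨hy0, h⟩
          · exact hy h
          · exact h2 ⟨h, hy1⟩
        rw [hky, hfy]
  -- integral bounds
  have Hf0 : ∀ R : ℝ, 0 < R → R ≤ 1 →
      ∫⁻ y in ball (0 : EuclideanSpace ℝ (Fin d)) R, ENNReal.ofReal (|f y| ^ p) =
        N * ENNReal.ofReal (R ^ α) := by
    intro R hR0 hR1
    rw [setLIntegral_congr_fun measurableSet_ball
      (fun y hy => P1 y (lt_of_lt_of_le (mem_ball_zero_iff.1 hy) hR1)), hJ R hR0]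
  have Hfle : ∀ (a : EuclideanSpace ℝ (Fin d)) (R : ℝ), 0 < R → R < 1 →
      ∫⁻ y in ball a R, ENNReal.ofReal (|f y| ^ p) ≤ N * ENNReal.ofReal (R ^ α) := by
    intro a R hR0 _
    calc ∫⁻ y in ball a R, ENNReal.ofReal (|f y| ^ p)
        ≤ ∫⁻ y in ball a R, ENNReal.ofReal (‖y‖ ^ (-β)) := lintegral_mono fun y => P2 y
      _ ≤ ∫⁻ y in ball (0 : EuclideanSpace ℝ (Fin d)) R, ENNReal.ofReal (‖y‖ ^ (-β)) := by
          refine riesz_ball' volume (fun r => ENNReal.ofReal (r ^ (-β))) (fun s t hs hst => ?_) a R hR0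
          exact ENNReal.ofReal_le_ofReal
            (Real.rpow_le_rpow_of_nonpos hs hst (neg_nonpos.2 hβ0.le))
      _ = N * ENNReal.ofReal (R ^ α) := hJ R hR0
  have Hk : ∀ (a : EuclideanSpace ℝ (Fin d)) (R : ℝ),
      ∫⁻ y in ball a R, ENNReal.ofReal (|k y| ^ p) =
        ∫⁻ y in ball a R, ENNReal.ofReal (|f y| ^ p) := by
    intro a R
    refine lintegral_congr_ae (ae_restrict_of_ae ?_)
    have hsph : volume {y : EuclideanSpace ℝ (Fin d) | ¬ ‖y‖ ≠ ε} = 0 := by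
      refine measure_mono_null (fun y hy => ?_) (Measure.addHaar_sphere volume 0 ε)
      simp only [Set.mem_setOf_eq, not_not] at hy
      simpa [mem_sphere_zero_iff_norm] using hy
    have hae : ∀ᵐ y ∂(volume : Measure (EuclideanSpace ℝ (Fin d))), ‖y‖ ≠ ε := by
      rw [ae_iff]
      simpa using hsph
    exact hae.mono fun y hy => by simp only [Pk y hy]
  -- upper bound on small Morrey norms of f and k
  have hupper : ∀ g : EuclideanSpace ℝ (Fin d) → ℝ,
      (∀ (a : EuclideanSpace ℝ (Fin d)) (R : ℝ), 0 < R → R < 1 →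
        ∫⁻ y in ball a R, ENNReal.ofReal (|g y| ^ p) ≤ N * ENNReal.ofReal (R ^ α)) →
      smallMorreyNorm d p q g ≤ C := by
    intro g hg
    refine iSup_le fun a => iSup_le fun R => iSup_le fun hR0 => iSup_le fun hR1 => ?_
    rw [hvol a R hR0, ← hσdef]
    calc (ENNReal.ofReal (R ^ (d:ℕ)) * ω) ^ σ *
          (∫⁻ y in ball a R, ENNReal.ofReal (|g y| ^ p)) ^ (1/p)
        ≤ (ENNReal.ofReal (R ^ (d:ℕ)) * ω) ^ σ * (N * ENNReal.ofReal (R ^ α)) ^ (1/p) :=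
          mul_le_mul_right (ENNReal.rpow_le_rpow (hg a R hR0 hR1) (by positivity)) _
      _ = C := hmaster R hR0
  have hfC : smallMorreyNorm d p q f ≤ C := hupper f Hfle
  have hkC : smallMorreyNorm d p q k ≤ C := hupper k (fun a R hR0 hR1 => (Hk a R).le.trans (Hfle a R hR0 hR1))
  -- lower bound for f+k
  have hlowaux : ∀ (g : EuclideanSpace ℝ (Fin d) → ℝ) (R : ℝ), 0 < R → R < 1 →
      volume (ball (0 : EuclideanSpace ℝ (Fin d)) R) ^ σ *
        (∫⁻ y in ball (0 : EuclideanSpace ℝ (Fin d)) R, ENNReal.ofReal (|g y| ^ p)) ^ (1/p) ≤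
        smallMorreyNorm d p q g := by
    intro g R hR0 hR1
    rw [hσdef]
    exact le_iSup_of_le 0 (le_iSup_of_le R (le_iSup_of_le hR0 (le_iSup_of_le hR1 le_rfl)))
  have hlow1 : 2 * C ≤ smallMorreyNorm d p q (f + k) := by
    have hεα : (0:ℝ) < ε ^ α := Real.rpow_pos_of_pos hε0 α
    have hI : ∫⁻ y in ball (0 : EuclideanSpace ℝ (Fin d)) ε, ENNReal.ofReal (|(f + k) y| ^ p) =
        ENNReal.ofReal (2 ^ p) * (N * ENNReal.ofReal (ε ^ α)) := by
      have hptw : ∀ y ∈ ball (0 : EuclideanSpace ℝ (Fin d)) ε,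
          ENNReal.ofReal (|(f + k) y| ^ p) = ENNReal.ofReal (2 ^ p) * ENNReal.ofReal (|f y| ^ p) := by
        intro y hy
        rw [Pfk y (mem_ball_zero_iff.1 hy), abs_mul, abs_two,
          Real.mul_rpow (by norm_num) (abs_nonneg _), ENNReal.ofReal_mul (by positivity)]
      rw [setLIntegral_congr_fun measurableSet_ball hptw,
        lintegral_const_mul' _ _ ENNReal.ofReal_ne_top, Hf0 ε hε0 hε1.le]
    have hterm : volume (ball (0 : EuclideanSpace ℝ (Fin d)) ε) ^ σ *
        (∫⁻ y in ball (0 : EuclideanSpace ℝ (Fin d)) ε, ENNReal.ofReal (|(f + k) y| ^ p)) ^ (1/p)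
          = 2 * C := by
      rw [hvol 0 ε hε0, hI, hmaster2 ε (ε ^ α) hε0 hεα, div_self hεα.ne', Real.one_rpow,
        ENNReal.ofReal_one, mul_one]
    rw [← hterm]
    exact hlowaux (f + k) ε hε0 hε1
  -- lower bound for f-k
  have hannulus : ∀ R : ℝ, ε < R → R < 1 →
      ENNReal.ofReal (2 ^ p) * (N * ENNReal.ofReal (R ^ α - ε ^ α)) ≤
        ∫⁻ y in ball (0 : EuclideanSpace ℝ (Fin d)) R, ENNReal.ofReal (|(f - k) y| ^ p) := by
    intro R hεR hR1
    have hR0 : 0 < R := hε0.trans hεR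
    set S := ball (0 : EuclideanSpace ℝ (Fin d)) R \ closedBall 0 ε with hSdef
    have hSm : MeasurableSet S := measurableSet_ball.diff measurableSet_closedBall
    have hstep1 : ∫⁻ y in S, ENNReal.ofReal (|(f - k) y| ^ p) =
        ENNReal.ofReal (2 ^ p) * ∫⁻ y in S, ENNReal.ofReal (‖y‖ ^ (-β)) := by
      have hptw : ∀ y ∈ S, ENNReal.ofReal (|(f - k) y| ^ p) =
          ENNReal.ofReal (2 ^ p) * ENNReal.ofReal (‖y‖ ^ (-β)) := by
        intro y hy
        have hyε : ε < ‖y‖ := not_le.1 (fun h => hy.2 (mem_closedBall_zero_iff.2 h))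
        have hy1 : ‖y‖ < 1 := (mem_ball_zero_iff.1 hy.1).trans hR1
        rw [Pfk2 y hyε, abs_mul, abs_two, Real.mul_rpow (by norm_num) (abs_nonneg _),
          ENNReal.ofReal_mul (by positivity), P1 y hy1]
      rw [setLIntegral_congr_fun hSm hptw,
        lintegral_const_mul' _ _ ENNReal.ofReal_ne_top]
    have hinter : ∫⁻ y in ball (0 : EuclideanSpace ℝ (Fin d)) R ∩ closedBall 0 ε,
        ENNReal.ofReal (‖y‖ ^ (-β)) ≤ N * ENNReal.ofReal (ε ^ α) := by
      refine le_trans (lintegral_mono_set inter_subset_right) ?_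
      have hsplit2 := lintegral_inter_add_diff
        (fun y : EuclideanSpace ℝ (Fin d) => ENNReal.ofReal (‖y‖ ^ (-β)))
        (closedBall 0 ε) (measurableSet_ball (x := (0 : EuclideanSpace ℝ (Fin d))) (ε := ε))
        (μ := volume) (B := ball (0 : EuclideanSpace ℝ (Fin d)) ε)
      rw [inter_eq_self_of_subset_right ball_subset_closedBall, closedBall_diff_ball,
        setLIntegral_measure_zero _ _ (Measure.addHaar_sphere volume 0 ε), add_zero,
        hJ ε hε0] at hsplit2
      exact hsplit2.ge
    have hsplit := lintegral_inter_add_diff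
      (fun y : EuclideanSpace ℝ (Fin d) => ENNReal.ofReal (‖y‖ ^ (-β)))
      (ball (0 : EuclideanSpace ℝ (Fin d)) R)
      (measurableSet_closedBall (x := (0 : EuclideanSpace ℝ (Fin d))) (ε := ε)) (μ := volume)
    rw [hJ R hR0] at hsplit
    have hS2 : N * ENNReal.ofReal (R ^ α) - N * ENNReal.ofReal (ε ^ α) ≤
        ∫⁻ y in S, ENNReal.ofReal (‖y‖ ^ (-β)) := by
      refine tsub_le_iff_left.2 ?_
      rw [← hsplit]
      exact add_le_add_left hinter _
    have hS3 : N * ENNReal.ofReal (R ^ α - ε ^ α) ≤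
        N * ENNReal.ofReal (R ^ α) - N * ENNReal.ofReal (ε ^ α) := by
      apply ENNReal.le_sub_of_add_le_right
        (ENNReal.mul_ne_top hNt ENNReal.ofReal_ne_top)
      rw [← mul_add, ← ENNReal.ofReal_add (by
          have := Real.rpow_le_rpow hε0.le hεR.le hα0.le
          linarith) (Real.rpow_nonneg hε0.le α), sub_add_cancel]
    calc ENNReal.ofReal (2 ^ p) * (N * ENNReal.ofReal (R ^ α - ε ^ α))
        ≤ ENNReal.ofReal (2 ^ p) * ∫⁻ y in S, ENNReal.ofReal (‖y‖ ^ (-β)) :=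
          mul_le_mul_right (hS3.trans hS2) _
      _ = ∫⁻ y in S, ENNReal.ofReal (|(f - k) y| ^ p) := hstep1.symm
      _ ≤ ∫⁻ y in ball (0 : EuclideanSpace ℝ (Fin d)) R, ENNReal.ofReal (|(f - k) y| ^ p) :=
          lintegral_mono_set diff_subset
  have hterm2 : ∀ R : ℝ, ε < R → R < 1 →
      2 * C * ENNReal.ofReal (((R ^ α - ε ^ α) / R ^ α) ^ (1/p)) ≤
        smallMorreyNorm d p q (f - k) := by
    intro R hεR hR1
    have hR0 : 0 < R := hε0.trans hεR
    have hu : (0:ℝ) < R ^ α - ε ^ α := sub_pos.2 (Real.rpow_lt_rpow hε0.le hεR hα0)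
    refine le_trans ?_ (hlowaux (f - k) R hR0 hR1)
    rw [hvol 0 R hR0, ← hmaster2 R (R ^ α - ε ^ α) hR0 hu]
    exact mul_le_mul_right (ENNReal.rpow_le_rpow (hannulus R hεR hR1) (by positivity)) _
  have hlow2 : 2 * C * ENNReal.ofReal ((1 - ε ^ α) ^ (1/p)) ≤ smallMorreyNorm d p q (f - k) := by
    have hcont : ContinuousAt (fun R : ℝ => ((R ^ α - ε ^ α) / R ^ α) ^ (1/p)) 1 := by
      have hc : ContinuousAt (fun R : ℝ => R ^ α) 1 :=
        Real.continuousAt_rpow_const 1 α (Or.inl one_ne_zero)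
      have hdiv : ContinuousAt (fun R : ℝ => (R ^ α - ε ^ α) / R ^ α) 1 :=
        (hc.sub continuousAt_const).div hc (by simp [Real.one_rpow])
      exact hdiv.rpow_const (Or.inr (by positivity))
    have h2 : Filter.Tendsto (fun R : ℝ => ENNReal.ofReal (((R ^ α - ε ^ α) / R ^ α) ^ (1/p)))
        (nhds 1) (nhds (ENNReal.ofReal ((1 - ε ^ α) ^ (1/p)))) := by
      have h := (ENNReal.continuous_ofReal.continuousAt).comp hcont
      simpa [ContinuousAt, Function.comp_def, Real.one_rpow] using h
    have hlim : Filter.Tendsto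
        (fun R : ℝ => 2 * C * ENNReal.ofReal (((R ^ α - ε ^ α) / R ^ α) ^ (1/p)))
        (nhdsWithin 1 (Iio 1)) (nhds (2 * C * ENNReal.ofReal ((1 - ε ^ α) ^ (1/p)))) :=
      ENNReal.Tendsto.const_mul (h2.mono_left nhdsWithin_le_nhds)
        (Or.inr (ENNReal.mul_ne_top ENNReal.ofNat_ne_top hCt))
    refine le_of_tendsto hlim ?_
    filter_upwards [Ioo_mem_nhdsLT_of_mem (Set.mem_Ioc.2 ⟨hε1, le_refl 1⟩)] with R hR
    exact hterm2 R hR.1 hR.2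
  -- final assembly
  have hXeq : (ENNReal.ofReal ((1 - ε ^ α) ^ (1/p))) ^ 2 = ENNReal.ofReal ((1 - ε ^ α) ^ (2/p)) := by
    rw [← ENNReal.ofReal_pow (Real.rpow_nonneg h1εα _) 2]
    congr 1
    rw [← Real.rpow_natCast ((1 - ε ^ α) ^ (1/p)) 2, ← Real.rpow_mul h1εα]
    congr 1
    push_cast
    ring
  have hnum : 4 * C ^ 2 * (1 + ENNReal.ofReal ((1 - ε ^ α) ^ (2/p))) ≤
      smallMorreyNorm d p q (f + k) ^ 2 + smallMorreyNorm d p q (f - k) ^ 2 := by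
    have h1 : (2 * C) ^ 2 ≤ smallMorreyNorm d p q (f + k) ^ 2 := pow_le_pow_left' hlow1 2
    have h2 : (2 * C * ENNReal.ofReal ((1 - ε ^ α) ^ (1/p))) ^ 2 ≤
        smallMorreyNorm d p q (f - k) ^ 2 := pow_le_pow_left' hlow2 2
    calc 4 * C ^ 2 * (1 + ENNReal.ofReal ((1 - ε ^ α) ^ (2/p)))
        = (2 * C) ^ 2 + (2 * C * ENNReal.ofReal ((1 - ε ^ α) ^ (1/p))) ^ 2 := by
          rw [← hXeq]
          ring
      _ ≤ _ := add_le_add h1 h2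
  have hden : 2 * (smallMorreyNorm d p q f ^ 2 + smallMorreyNorm d p q k ^ 2) ≤ 4 * C ^ 2 := by
    calc 2 * (smallMorreyNorm d p q f ^ 2 + smallMorreyNorm d p q k ^ 2)
        ≤ 2 * (C ^ 2 + C ^ 2) := by gcongr
      _ = 4 * C ^ 2 := by ring
  have h4C0 : (4:ℝ≥0∞) * C ^ 2 ≠ 0 := by
    refine mul_ne_zero (by norm_num) (pow_ne_zero 2 hC0)
  have h4Ct : (4:ℝ≥0∞) * C ^ 2 ≠ ⊤ := by
    refine ENNReal.mul_ne_top (by norm_num) (ENNReal.pow_ne_top hCt)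
  calc 1 + ENNReal.ofReal ((1 - ε ^ α) ^ (2/p))
      = 4 * C ^ 2 * (1 + ENNReal.ofReal ((1 - ε ^ α) ^ (2/p))) / (4 * C ^ 2) := by
        rw [mul_comm, mul_div_assoc, ENNReal.div_self h4C0 h4Ct, mul_one]
    _ ≤ _ := ENNReal.div_le_div hnum hden
end

section
/- Let 1 ≤ p < q < ∞, d ≥ 1, and 0 < ε < 1. With f(x) = |x|^{-d/q}·χ_{(0,1)}(|x|) and k(x) = [χ_{(0,ε)}(|x|) − χ_{(ε,1)}(|x|)]f(x), one has ‖f‖_{m^p_q} = ‖k‖_{m^p_q} and min{‖f+k‖_{m^p_q}, ‖f−k‖_{m^p_q}} ≥ 2(1 − ε^{d−dp/q})^{1/p} ‖f‖_{m^p_q}. -/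
open MeasureTheory Metric ENNReal

open MeasureTheory Metric ENNReal Set Module

namespace JamesAux

variable {d : ℕ}

/-- truncated negative power of the norm, as an `ℝ≥0∞`-valued function. -/
noncomputable def gpow (d : ℕ) (c ε : ℝ) : EuclideanSpace ℝ (Fin d) → ℝ≥0∞ :=
  fun x => if 0 < ‖x‖ ∧ ‖x‖ < ε then ENNReal.ofReal (‖x‖ ^ (-c)) else 0

/-- annulus version -/
noncomputable def gpA (d : ℕ) (c ε : ℝ) : EuclideanSpace ℝ (Fin d) → ℝ≥0∞ :=
  fun x => if ε < ‖x‖ ∧ ‖x‖ < 1 then ENNReal.ofReal (‖x‖ ^ (-c)) else 0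

lemma measurable_gpow (c ε : ℝ) : Measurable (gpow d c ε) := by
  apply Measurable.ite _ (by fun_prop) measurable_const
  exact MeasurableSet.inter
    (measurableSet_lt measurable_const measurable_norm)
    (measurableSet_lt measurable_norm measurable_const)

lemma measurable_gpA (c ε : ℝ) : Measurable (gpA d c ε) := by
  apply Measurable.ite _ (by fun_prop) measurable_const
  exact MeasurableSet.inter
    (measurableSet_lt measurable_const measurable_norm)
    (measurableSet_lt measurable_norm measurable_const)



open scoped Topology

lemma indicator_gpow_smul {d : ℕ} (c : ℝ) {R : ℝ} (hR0 : 0 < R) (hR1 : R ≤ 1)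
    (y : EuclideanSpace ℝ (Fin d)) :
    (ball (0 : EuclideanSpace ℝ (Fin d)) R).indicator (gpow d c 1) (R • y)
      = ENNReal.ofReal (R ^ (-c)) * gpow d c 1 y := by
  have hnorm : ‖R • y‖ = R * ‖y‖ := by
    rw [norm_smul, Real.norm_eq_abs, abs_of_pos hR0]
  by_cases hy : 0 < ‖y‖ ∧ ‖y‖ < 1
  · have hmem : R • y ∈ ball (0 : EuclideanSpace ℝ (Fin d)) R := by
      rw [mem_ball_zero_iff, hnorm]
      nlinarith [hy.1, hy.2]
    rw [Set.indicator_of_mem hmem]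
    have hcond : 0 < ‖R • y‖ ∧ ‖R • y‖ < 1 := by
      constructor
      · rw [hnorm]; exact mul_pos hR0 hy.1
      · rw [hnorm]; nlinarith [hy.1, hy.2]
    rw [gpow, if_pos hcond, gpow, if_pos hy, hnorm,
      Real.mul_rpow hR0.le (norm_nonneg y),
      ENNReal.ofReal_mul (by positivity)]
  · rw [gpow, if_neg hy, mul_zero, Set.indicator_apply_eq_zero]
    intro hmem
    rw [mem_ball_zero_iff, hnorm] at hmem
    have hy1 : ‖y‖ < 1 := by nlinarith [norm_nonneg y]
    have hy0 : ‖y‖ = 0 := by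
      by_contra h
      exact hy ⟨lt_of_le_of_ne (norm_nonneg y) (Ne.symm h), hy1⟩
    rw [gpow, if_neg]
    rw [hnorm, hy0, mul_zero]
    simp

lemma lint_gpow_ball {d : ℕ} (hd : 1 ≤ d) (c : ℝ) {R : ℝ} (hR0 : 0 < R) (hR1 : R ≤ 1) :
    ∫⁻ x in ball (0 : EuclideanSpace ℝ (Fin d)) R, gpow d c 1 x
      = ENNReal.ofReal (R ^ ((d : ℝ) - c)) * ∫⁻ x, gpow d c 1 x := by
  haveI : Nonempty (Fin d) := Fin.pos_iff_nonempty.mp hd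
  set E := EuclideanSpace ℝ (Fin d)
  set Φ := (ball (0 : E) R).indicator (gpow d c 1) with hΦ
  have hΦm : Measurable Φ := (measurable_gpow c 1).indicator measurableSet_ball
  have hmap := Measure.map_addHaar_smul (volume : Measure E) (ne_of_gt hR0)
  have h1 : ∫⁻ x, Φ x ∂(Measure.map (R • ·) (volume : Measure E)) = ∫⁻ y, Φ (R • y) :=
    lintegral_map hΦm (measurable_const_smul R)
  rw [hmap, lintegral_smul_measure] at h1
  have h2 : ∀ y : E, Φ (R • y) = ENNReal.ofReal (R ^ (-c)) * gpow d c 1 y :=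
    indicator_gpow_smul c hR0 hR1
  simp_rw [h2] at h1
  rw [lintegral_const_mul _ (measurable_gpow c 1)] at h1
  have hd' : finrank ℝ E ≠ 0 := by
    rw [finrank_euclideanSpace_fin]; omega
  have habs : |(R ^ finrank ℝ E)⁻¹| = (R ^ finrank ℝ E)⁻¹ := by
    rw [abs_of_pos]; positivity
  rw [habs] at h1
  have hcancel : ENNReal.ofReal (R ^ finrank ℝ E) *
      ENNReal.ofReal ((R ^ finrank ℝ E)⁻¹) = 1 := by
    rw [← ENNReal.ofReal_mul (by positivity), mul_inv_cancel₀ (by positivity),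
      ENNReal.ofReal_one]
  have hint : ∫⁻ x in ball (0 : E) R, gpow d c 1 x = ∫⁻ x, Φ x := by
    rw [hΦ, lintegral_indicator measurableSet_ball]
  rw [hint, ← one_mul (∫⁻ x, Φ x), ← hcancel, mul_assoc,
    show ENNReal.ofReal ((R ^ finrank ℝ E)⁻¹) * ∫⁻ x, Φ x = _ from h1, ← mul_assoc,
    ← ENNReal.ofReal_mul (by positivity)]
  congr 2
  rw [← Real.rpow_natCast R (finrank ℝ E), ← Real.rpow_add hR0, finrank_euclideanSpace_fin]
  ring_nf

lemma setOf_le_G_subset {d : ℕ} {c t : ℝ} (hc0 : 0 < c) (ht : 0 < t) :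
    {x : EuclideanSpace ℝ (Fin d) |
        t ≤ (if 0 < ‖x‖ ∧ ‖x‖ < 1 then ‖x‖ ^ (-c) else 0)}
      ⊆ closedBall 0 (min 1 (t ^ (-c⁻¹))) := by
  intro x hx
  simp only [Set.mem_setOf_eq] at hx
  by_cases hcond : 0 < ‖x‖ ∧ ‖x‖ < 1
  · rw [if_pos hcond] at hx
    have h1 : (‖x‖ ^ (-c)) ^ (-c⁻¹) ≤ t ^ (-c⁻¹) :=
      Real.rpow_le_rpow_of_nonpos ht hx (neg_nonpos.mpr (inv_nonneg.mpr hc0.le))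
    rw [← Real.rpow_mul (norm_nonneg x), neg_mul_neg, mul_inv_cancel₀ hc0.ne',
      Real.rpow_one] at h1
    rw [mem_closedBall_zero_iff]
    exact le_min hcond.2.le h1
  · rw [if_neg hcond] at hx
    exact absurd hx (not_le.mpr ht)

lemma lint_gpow_lt_top {d : ℕ} (hd : 1 ≤ d) {c : ℝ} (hc0 : 0 < c) (hcd : c < d) :
    ∫⁻ x, gpow d c 1 x < ⊤ := by
  haveI : Nonempty (Fin d) := Fin.pos_iff_nonempty.mp hd
  set E := EuclideanSpace ℝ (Fin d)
  set G : E → ℝ := fun x => if 0 < ‖x‖ ∧ ‖x‖ < 1 then ‖x‖ ^ (-c) else 0 with hGdef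
  have hGg : ∀ x, gpow d c 1 x = ENNReal.ofReal (G x) := by
    intro x
    by_cases hcond : 0 < ‖x‖ ∧ ‖x‖ < 1
    · rw [gpow, hGdef]; simp only [if_pos hcond]
    · rw [gpow, hGdef]; simp only [if_neg hcond, ENNReal.ofReal_zero]
  have hGm : Measurable G := by
    apply Measurable.ite _ (by fun_prop) measurable_const
    exact MeasurableSet.inter
      (measurableSet_lt measurable_const measurable_norm)
      (measurableSet_lt measurable_norm measurable_const)
  have hGnn : ∀ x, 0 ≤ G x := by
    intro x
    by_cases hcond : 0 < ‖x‖ ∧ ‖x‖ < 1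
    · rw [hGdef]; simp only [if_pos hcond]; positivity
    · rw [hGdef]; simp only [if_neg hcond]; exact le_refl 0
  simp_rw [hGg]
  rw [lintegral_eq_lintegral_meas_le volume (Filter.Eventually.of_forall hGnn)
    hGm.aemeasurable]
  set F : ℝ → ℝ≥0∞ := fun t => volume {x : E | t ≤ G x} with hF
  have hsub : ∀ t : ℝ, 0 < t →
      {x : E | t ≤ G x} ⊆ closedBall 0 (min 1 (t ^ (-c⁻¹))) :=
    fun t ht => setOf_le_G_subset hc0 ht
  calc ∫⁻ t in Ioi 0, F t
      ≤ ∫⁻ t in Ioc 0 1 ∪ Ioi 1, F t := lintegral_mono_set Ioi_subset_Ioc_union_Ioi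
    _ ≤ (∫⁻ t in Ioc 0 1, F t) + ∫⁻ t in Ioi 1, F t := lintegral_union_le _ _ _
    _ < ⊤ := by
        refine ENNReal.add_lt_top.2 ⟨?_, ?_⟩
        · have hb : ∀ t ∈ Ioc (0:ℝ) 1, F t ≤ volume (closedBall (0 : E) 1) := by
            intro t ht
            refine measure_mono ((hsub t ht.1).trans (closedBall_subset_closedBall ?_))
            exact min_le_left _ _
          calc ∫⁻ t in Ioc (0:ℝ) 1, F t
              ≤ ∫⁻ _ in Ioc (0:ℝ) 1, volume (closedBall (0 : E) 1) :=
                setLIntegral_mono' measurableSet_Ioc hb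
            _ = volume (closedBall (0 : E) 1) * volume (Ioc (0:ℝ) 1) :=
                setLIntegral_const _ _
            _ < ⊤ := by
                refine ENNReal.mul_lt_top measure_closedBall_lt_top ?_
                rw [Real.volume_Ioc]
                exact ENNReal.ofReal_lt_top
        · have hb : ∀ t ∈ Ioi (1:ℝ), F t ≤
              ENNReal.ofReal (t ^ (-((d : ℝ) * c⁻¹))) * volume (ball (0 : E) 1) := by
            intro t ht
            have ht0 : (0:ℝ) < t := lt_trans one_pos ht
            have : F t ≤ volume (closedBall (0 : E) (t ^ (-c⁻¹))) := by
              refine measure_mono ((hsub t ht0).trans (closedBall_subset_closedBall ?_))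
              exact min_le_right _ _
            refine this.trans (le_of_eq ?_)
            rw [Measure.addHaar_closedBall _ _ (by positivity), finrank_euclideanSpace_fin,
              ← Real.rpow_natCast (t ^ (-c⁻¹)) d, ← Real.rpow_mul ht0.le]
            ring_nf
          calc ∫⁻ t in Ioi (1:ℝ), F t
              ≤ ∫⁻ t in Ioi (1:ℝ),
                  ENNReal.ofReal (t ^ (-((d : ℝ) * c⁻¹))) * volume (ball (0 : E) 1) :=
                setLIntegral_mono' measurableSet_Ioi hb
            _ = (∫⁻ t in Ioi (1:ℝ), ENNReal.ofReal (t ^ (-((d : ℝ) * c⁻¹)))) *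
                  volume (ball (0 : E) 1) :=
                lintegral_mul_const' _ _ measure_ball_lt_top.ne
            _ < ⊤ := by
                refine ENNReal.mul_lt_top ?_ measure_ball_lt_top
                refine IntegrableOn.setLIntegral_lt_top ?_
                refine integrableOn_Ioi_rpow_of_lt ?_ one_pos
                rw [neg_lt_neg_iff]
                rw [lt_mul_inv_iff₀ hc0, one_mul]
                exact hcd

lemma lint_gpow_pos {d : ℕ} (hd : 1 ≤ d) {c : ℝ} (hc0 : 0 ≤ c) :
    volume (ball (0 : EuclideanSpace ℝ (Fin d)) 1) ≤ ∫⁻ x, gpow d c 1 x := by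
  haveI : Nonempty (Fin d) := Fin.pos_iff_nonempty.mp hd
  set E := EuclideanSpace ℝ (Fin d)
  set s : Set E := ball 0 1 \ {0} with hs
  have hsm : MeasurableSet s := measurableSet_ball.diff (measurableSet_singleton 0)
  have h1 : volume (ball (0 : E) 1) = volume s := by
    rw [hs, measure_diff_null (measure_singleton 0)]
  rw [h1]
  calc volume s = ∫⁻ _ in s, 1 := (setLIntegral_one s).symm
    _ ≤ ∫⁻ x in s, gpow d c 1 x := by
        refine setLIntegral_mono' hsm ?_
        intro x hx
        have hx0 : 0 < ‖x‖ := by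
          rw [norm_pos_iff]
          exact fun h => hx.2 (by simp [h])
        have hx1 : ‖x‖ < 1 := mem_ball_zero_iff.mp hx.1
        rw [gpow, if_pos ⟨hx0, hx1⟩]
        rw [← ENNReal.ofReal_one]
        exact ENNReal.ofReal_le_ofReal
          (Real.one_le_rpow_of_pos_of_le_one_of_nonpos hx0 hx1.le (by simpa using hc0))
    _ ≤ ∫⁻ x, gpow d c 1 x := setLIntegral_le_lintegral _ _

end JamesAux

namespace JamesAux

lemma lint_gpow_ball_le {d : ℕ} (hd : 1 ≤ d) {c : ℝ} (hc0 : 0 < c)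
    (a : EuclideanSpace ℝ (Fin d)) {R : ℝ} (hR0 : 0 < R) (hR1 : R < 1) :
    ∫⁻ x in ball a R, gpow d c 1 x ≤
      ∫⁻ x in ball (0 : EuclideanSpace ℝ (Fin d)) R, gpow d c 1 x := by
  haveI : Nonempty (Fin d) := Fin.pos_iff_nonempty.mp hd
  set G : EuclideanSpace ℝ (Fin d) → ℝ :=
    fun x => if 0 < ‖x‖ ∧ ‖x‖ < 1 then ‖x‖ ^ (-c) else 0 with hGdef
  have hGg : ∀ x, gpow d c 1 x = ENNReal.ofReal (G x) := by
    intro x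
    by_cases hcond : 0 < ‖x‖ ∧ ‖x‖ < 1
    · rw [gpow, hGdef]; simp only [if_pos hcond]
    · rw [gpow, hGdef]; simp only [if_neg hcond, ENNReal.ofReal_zero]
  have hGm : Measurable G := by
    apply Measurable.ite _ (by fun_prop) measurable_const
    exact MeasurableSet.inter
      (measurableSet_lt measurable_const measurable_norm)
      (measurableSet_lt measurable_norm measurable_const)
  have hGnn : ∀ x, 0 ≤ G x := by
    intro x
    by_cases hcond : 0 < ‖x‖ ∧ ‖x‖ < 1
    · rw [hGdef]; simp only [if_pos hcond]; positivity
    · rw [hGdef]; simp only [if_neg hcond]; exact le_refl 0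
  have hSm : ∀ t : ℝ, MeasurableSet {x : EuclideanSpace ℝ (Fin d) | t ≤ G x} := fun t =>
    measurableSet_le measurable_const hGm
  simp_rw [hGg]
  rw [lintegral_eq_lintegral_meas_le _ (Filter.Eventually.of_forall hGnn) hGm.aemeasurable,
    lintegral_eq_lintegral_meas_le _ (Filter.Eventually.of_forall hGnn) hGm.aemeasurable]
  refine setLIntegral_mono' measurableSet_Ioi ?_
  intro t ht
  rw [Set.mem_Ioi] at ht
  rw [Measure.restrict_apply (hSm t), Measure.restrict_apply (hSm t)]
  by_cases hm : t ^ (-c⁻¹) < R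
  · have hSsub : {x : EuclideanSpace ℝ (Fin d) | t ≤ G x} ⊆ ball 0 R := by
      refine (setOf_le_G_subset hc0 ht).trans ?_
      refine closedBall_subset_ball ?_
      exact lt_of_le_of_lt (min_le_right _ _) hm
    rw [Set.inter_eq_self_of_subset_left hSsub]
    exact measure_mono Set.inter_subset_left
  · push_neg at hm
    have h1 : volume ({x : EuclideanSpace ℝ (Fin d) | t ≤ G x} ∩ ball a R)
        ≤ volume (ball (0 : EuclideanSpace ℝ (Fin d)) R) := by
      refine le_trans (measure_mono Set.inter_subset_right) ?_
      exact le_of_eq (Measure.addHaar_ball_center volume a R)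
    refine le_trans h1 ?_
    have h2 : ball (0 : EuclideanSpace ℝ (Fin d)) R \ {0} ⊆
        {x : EuclideanSpace ℝ (Fin d) | t ≤ G x} ∩ ball 0 R := by
      intro x hx
      have hx0 : 0 < ‖x‖ := by
        rw [norm_pos_iff]
        exact fun h => hx.2 (by simp [h])
      have hxR : ‖x‖ < R := mem_ball_zero_iff.mp hx.1
      have hx1 : ‖x‖ < 1 := lt_trans hxR hR1
      have key : (t ^ (-c⁻¹)) ^ (-c) ≤ ‖x‖ ^ (-c) :=
        Real.rpow_le_rpow_of_nonpos hx0 (le_trans hxR.le hm)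
          (neg_nonpos.mpr hc0.le)
      rw [← Real.rpow_mul ht.le, neg_mul_neg, inv_mul_cancel₀ hc0.ne',
        Real.rpow_one] at key
      refine Set.mem_inter ?_ hx.1
      rw [Set.mem_setOf_eq, hGdef]
      simp only []
      rw [if_pos (show 0 < ‖x‖ ∧ ‖x‖ < 1 from ⟨hx0, hx1⟩)]
      exact key
    calc volume (ball (0 : EuclideanSpace ℝ (Fin d)) R)
        = volume (ball (0 : EuclideanSpace ℝ (Fin d)) R \ {0}) := by
          rw [measure_diff_null (measure_singleton 0)]
      _ ≤ volume ({x : EuclideanSpace ℝ (Fin d) | t ≤ G x} ∩ ball 0 R) := measure_mono h2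

lemma lint_gpow_eps {d : ℕ} {c ε R : ℝ} (hε1 : ε ≤ 1) (hεR : ε ≤ R) :
    ∫⁻ x in ball (0 : EuclideanSpace ℝ (Fin d)) R, gpow d c ε x
      = ∫⁻ x in ball (0 : EuclideanSpace ℝ (Fin d)) ε, gpow d c 1 x := by
  set E := EuclideanSpace ℝ (Fin d)
  have hpt : ∀ x : E, gpow d c ε x = (ball (0 : E) ε).indicator (gpow d c 1) x := by
    intro x
    by_cases hcond : 0 < ‖x‖ ∧ ‖x‖ < ε
    · rw [gpow, if_pos hcond,
        Set.indicator_of_mem (mem_ball_zero_iff.mpr hcond.2), gpow,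
        if_pos ⟨hcond.1, lt_of_lt_of_le hcond.2 hε1⟩]
    · rw [gpow, if_neg hcond]
      by_cases hmem : x ∈ ball (0 : E) ε
      · rw [Set.indicator_of_mem hmem, gpow, if_neg]
        intro hc
        exact hcond ⟨hc.1, mem_ball_zero_iff.mp hmem⟩
      · rw [Set.indicator_of_notMem hmem]
  simp_rw [hpt]
  rw [setLIntegral_indicator measurableSet_ball,
    Set.inter_eq_self_of_subset_left (ball_subset_ball hεR)]

lemma gpow_eq_add_ae {d : ℕ} (hd : 1 ≤ d) (c : ℝ) {ε : ℝ} (hε0 : 0 < ε) (hε1 : ε < 1) :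
    gpow d c 1 =ᵐ[volume] fun x => gpow d c ε x + gpA d c ε x := by
  haveI : Nonempty (Fin d) := Fin.pos_iff_nonempty.mp hd
  set E := EuclideanSpace ℝ (Fin d)
  have hsph : volume (sphere (0 : E) ε) = 0 := Measure.addHaar_sphere volume 0 ε
  rw [Filter.EventuallyEq, MeasureTheory.ae_iff]
  refine measure_mono_null ?_ hsph
  intro x hx
  rw [Set.mem_setOf_eq] at hx
  rw [mem_sphere_zero_iff_norm]
  by_contra hne
  apply hx
  simp only [gpow, gpA]
  rcases lt_or_gt_of_ne hne with h | h
  · by_cases hc : 0 < ‖x‖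
    · rw [if_pos ⟨hc, lt_trans h hε1⟩, if_pos ⟨hc, h⟩,
        if_neg (fun hh => absurd hh.1 (not_lt.mpr h.le)), add_zero]
    · rw [if_neg (fun hh => hc hh.1), if_neg (fun hh => hc hh.1),
        if_neg (fun hh : ε < ‖x‖ ∧ ‖x‖ < 1 => absurd hh.1 (not_lt.mpr h.le)), add_zero]
  · have h0 : 0 < ‖x‖ := lt_trans hε0 h
    by_cases h1 : ‖x‖ < 1
    · rw [if_pos ⟨h0, h1⟩, if_neg (fun hh : 0 < ‖x‖ ∧ ‖x‖ < ε => absurd hh.2 (not_lt.mpr h.le)),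
        if_pos ⟨h, h1⟩, zero_add]
    · rw [if_neg (fun hh : 0 < ‖x‖ ∧ ‖x‖ < 1 => h1 hh.2),
        if_neg (fun hh : 0 < ‖x‖ ∧ ‖x‖ < ε => absurd hh.2 (not_lt.mpr h.le)),
        if_neg (fun hh : ε < ‖x‖ ∧ ‖x‖ < 1 => h1 hh.2), add_zero]

end JamesAux

namespace JamesAux

lemma lint_gpA_ball {d : ℕ} (hd : 1 ≤ d) {c : ℝ} (hc0 : 0 < c) (hcd : c < d)
    {ε R : ℝ} (hε0 : 0 < ε) (hε1 : ε < 1) (hεR : ε < R) (hR1 : R ≤ 1) :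
    ∫⁻ x in ball (0 : EuclideanSpace ℝ (Fin d)) R, gpA d c ε x
      = ENNReal.ofReal (R ^ ((d : ℝ) - c) - ε ^ ((d : ℝ) - c)) * ∫⁻ x, gpow d c 1 x := by
  have hR0 : 0 < R := lt_trans hε0 hεR
  set J := ∫⁻ x, gpow d c 1 x with hJ
  have hJt : J ≠ ⊤ := (lint_gpow_lt_top hd hc0 hcd).ne
  have hβ : (0:ℝ) ≤ (d : ℝ) - c := sub_nonneg.mpr hcd.le
  have hsplit : ∫⁻ x in ball (0 : EuclideanSpace ℝ (Fin d)) R, gpow d c 1 x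
      = (∫⁻ x in ball (0 : EuclideanSpace ℝ (Fin d)) R, gpow d c ε x)
        + ∫⁻ x in ball (0 : EuclideanSpace ℝ (Fin d)) R, gpA d c ε x := by
    calc ∫⁻ x in ball (0 : EuclideanSpace ℝ (Fin d)) R, gpow d c 1 x
        = ∫⁻ x in ball (0 : EuclideanSpace ℝ (Fin d)) R, (gpow d c ε x + gpA d c ε x) :=
          lintegral_congr_ae ((gpow_eq_add_ae hd c hε0 hε1).restrict)
      _ = _ := lintegral_add_left (measurable_gpow c ε) _
  rw [lint_gpow_eps hε1.le hεR.le, lint_gpow_ball hd c hε0 hε1.le,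
    lint_gpow_ball hd c hR0 hR1, ← hJ] at hsplit
  have hfin : ENNReal.ofReal (ε ^ ((d : ℝ) - c)) * J ≠ ⊤ :=
    ENNReal.mul_ne_top ENNReal.ofReal_ne_top hJt
  have hreal : ε ^ ((d:ℝ) - c) + (R ^ ((d:ℝ) - c) - ε ^ ((d:ℝ) - c)) = R ^ ((d:ℝ) - c) := by
    ring
  have h2 : ENNReal.ofReal (R ^ ((d:ℝ) - c)) * J
      = ENNReal.ofReal (ε ^ ((d:ℝ) - c)) * J
        + ENNReal.ofReal (R ^ ((d:ℝ) - c) - ε ^ ((d:ℝ) - c)) * J := by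
    rw [← add_mul, ← ENNReal.ofReal_add (by positivity)
      (sub_nonneg.mpr (Real.rpow_le_rpow hε0.le hεR.le hβ)), hreal]
  exact (ENNReal.add_right_inj hfin).mp (hsplit.symm.trans h2)

lemma alg1 {A J : ℝ≥0∞} (hAt : A ≠ ⊤) (hJt : J ≠ ⊤) {p q : ℝ} (d : ℕ)
    (hp : 0 < p) (hq : 0 < q) {R : ℝ} (hR : 0 < R) {s : ℝ} (hs : 0 < s) :
    (ENNReal.ofReal (R ^ d) * A) ^ (1/q - 1/p) *
      (ENNReal.ofReal s * (ENNReal.ofReal (R ^ ((d:ℝ) - (d:ℝ) * p / q)) * J)) ^ (1/p)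
    = ENNReal.ofReal (s ^ (1/p)) * (A ^ (1/q - 1/p) * J ^ (1/p)) := by
  have h1 : (ENNReal.ofReal (R ^ d) * A) ^ (1/q - 1/p)
      = ENNReal.ofReal (R ^ ((d:ℝ) * (1/q - 1/p))) * A ^ (1/q - 1/p) := by
    rw [ENNReal.mul_rpow_of_ne_top ENNReal.ofReal_ne_top hAt,
      ENNReal.ofReal_rpow_of_pos (by positivity), ← Real.rpow_natCast R d,
      ← Real.rpow_mul hR.le]
  have h2 : (ENNReal.ofReal s * (ENNReal.ofReal (R ^ ((d:ℝ) - (d:ℝ) * p / q)) * J)) ^ (1/p)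
      = ENNReal.ofReal (s ^ (1/p)) *
          (ENNReal.ofReal (R ^ (((d:ℝ) - (d:ℝ) * p / q) * (1/p))) * J ^ (1/p)) := by
    rw [ENNReal.mul_rpow_of_ne_top ENNReal.ofReal_ne_top
        (ENNReal.mul_ne_top ENNReal.ofReal_ne_top hJt),
      ENNReal.mul_rpow_of_ne_top ENNReal.ofReal_ne_top hJt,
      ENNReal.ofReal_rpow_of_pos hs,
      ENNReal.ofReal_rpow_of_pos (by positivity), ← Real.rpow_mul hR.le]
  rw [h1, h2]
  have hsum : (d:ℝ) * (1/q - 1/p) + ((d:ℝ) - (d:ℝ) * p / q) * (1/p) = 0 := by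
    field_simp
    ring
  calc ENNReal.ofReal (R ^ ((d:ℝ) * (1/q - 1/p))) * A ^ (1/q - 1/p) *
        (ENNReal.ofReal (s ^ (1/p)) *
          (ENNReal.ofReal (R ^ (((d:ℝ) - (d:ℝ) * p / q) * (1/p))) * J ^ (1/p)))
      = (ENNReal.ofReal (R ^ ((d:ℝ) * (1/q - 1/p)))
          * ENNReal.ofReal (R ^ (((d:ℝ) - (d:ℝ) * p / q) * (1/p)))) *
        (ENNReal.ofReal (s ^ (1/p)) * (A ^ (1/q - 1/p) * J ^ (1/p))) := by ring
    _ = ENNReal.ofReal (s ^ (1/p)) * (A ^ (1/q - 1/p) * J ^ (1/p)) := by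
        rw [← ENNReal.ofReal_mul (by positivity), ← Real.rpow_add hR, hsum,
          Real.rpow_zero, ENNReal.ofReal_one, one_mul]

end JamesAux


/-- with `f(x) = |x|^{-d/q} χ_{(0,1)}(|x|)` and
`k = (χ_{(0,ε)}(|·|) - χ_{(ε,1)}(|·|)) f`, one has `‖f‖ = ‖k‖` and
`min{‖f+k‖, ‖f-k‖} ≥ 2(1 - ε^{d-dp/q})^{1/p} ‖f‖` in the small Morrey norm. -/
theorem james_pair_lower (d : ℕ) (p q : ℝ) (hp : 1 ≤ p) (hpq : p < q) (hd : 1 ≤ d)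
    (ε : ℝ) (hε0 : 0 < ε) (hε1 : ε < 1) :
    letI f : EuclideanSpace ℝ (Fin d) → ℝ :=
      fun x => if 0 < ‖x‖ ∧ ‖x‖ < 1 then ‖x‖ ^ (-(d : ℝ) / q) else 0
    letI k : EuclideanSpace ℝ (Fin d) → ℝ :=
      fun x => ((if 0 < ‖x‖ ∧ ‖x‖ < ε then (1 : ℝ) else 0) -
        (if ε < ‖x‖ ∧ ‖x‖ < 1 then (1 : ℝ) else 0)) * f x
    smallMorreyNorm d p q f = smallMorreyNorm d p q k ∧
      ENNReal.ofReal (2 * (1 - ε ^ ((d : ℝ) - d * p / q)) ^ (1 / p)) *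
          smallMorreyNorm d p q f ≤
        min (smallMorreyNorm d p q (f + k)) (smallMorreyNorm d p q (f - k)) := by
  set f : EuclideanSpace ℝ (Fin d) → ℝ :=
    fun x => if 0 < ‖x‖ ∧ ‖x‖ < 1 then ‖x‖ ^ (-(d : ℝ) / q) else 0 with hfdef
  set k : EuclideanSpace ℝ (Fin d) → ℝ :=
    fun x => ((if 0 < ‖x‖ ∧ ‖x‖ < ε then (1 : ℝ) else 0) -
      (if ε < ‖x‖ ∧ ‖x‖ < 1 then (1 : ℝ) else 0)) * f x with hkdef
  have hfx : ∀ x, f x = if 0 < ‖x‖ ∧ ‖x‖ < 1 then ‖x‖ ^ (-(d : ℝ) / q) else 0 :=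
    fun x => by rw [hfdef]
  have hkx : ∀ x, k x = ((if 0 < ‖x‖ ∧ ‖x‖ < ε then (1 : ℝ) else 0) -
      (if ε < ‖x‖ ∧ ‖x‖ < 1 then (1 : ℝ) else 0)) * f x := fun x => by rw [hkdef]
  have hp0 : (0:ℝ) < p := lt_of_lt_of_le one_pos hp
  have hq0 : (0:ℝ) < q := lt_trans hp0 hpq
  have hd1 : (1:ℝ) ≤ (d:ℝ) := by exact_mod_cast hd
  haveI : Nonempty (Fin d) := Fin.pos_iff_nonempty.mp hd
  haveI : Nontrivial (EuclideanSpace ℝ (Fin d)) := inferInstance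
  have hc0 : (0:ℝ) < (d:ℝ) * p / q := div_pos (mul_pos (by linarith) hp0) hq0
  have hcd : (d:ℝ) * p / q < (d:ℝ) := by
    rw [div_lt_iff₀ hq0]; nlinarith
  have hβ0 : (0:ℝ) < (d:ℝ) - (d:ℝ) * p / q := sub_pos.mpr hcd
  -- pointwise identity for |f|^p
  have hfp : ∀ x, ENNReal.ofReal (|f x| ^ p) = JamesAux.gpow d ((d:ℝ) * p / q) 1 x := by
    intro x
    by_cases hcond : 0 < ‖x‖ ∧ ‖x‖ < 1
    · rw [hfx x, if_pos hcond, abs_of_pos (Real.rpow_pos_of_pos hcond.1 _),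
        ← Real.rpow_mul (norm_nonneg x), JamesAux.gpow, if_pos hcond]
      congr 2
      ring
    · rw [hfx x, if_neg hcond, abs_zero, Real.zero_rpow hp0.ne', ENNReal.ofReal_zero,
        JamesAux.gpow, if_neg hcond]
  -- |k| = |f| off the sphere of radius ε
  have habs : ∀ x : EuclideanSpace ℝ (Fin d), ‖x‖ ≠ ε → |k x| = |f x| := by
    intro x hne
    rcases lt_trichotomy ‖x‖ ε with h | h | h
    · by_cases h0 : 0 < ‖x‖
      · rw [hkx x, if_pos ⟨h0, h⟩, if_neg (fun hh => absurd hh.1 (not_lt.mpr h.le))]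
        norm_num
      · rw [hkx x, hfx x, if_neg (fun hh : 0 < ‖x‖ ∧ ‖x‖ < 1 => h0 hh.1)]
        simp
    · exact absurd h hne
    · by_cases h1 : ‖x‖ < 1
      · rw [hkx x, if_neg (fun hh : 0 < ‖x‖ ∧ ‖x‖ < ε => absurd hh.2 (not_lt.mpr h.le)),
          if_pos ⟨h, h1⟩]
        norm_num
      · rw [hkx x, hfx x, if_neg (fun hh : 0 < ‖x‖ ∧ ‖x‖ < 1 => h1 hh.2)]
        simp
  have hA_t : volume (ball (0 : EuclideanSpace ℝ (Fin d)) 1) ≠ ⊤ := measure_ball_lt_top.ne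
  have hJt : (∫⁻ x, JamesAux.gpow d ((d:ℝ) * p / q) 1 x) ≠ ⊤ :=
    (JamesAux.lint_gpow_lt_top hd hc0 hcd).ne
  set J := ∫⁻ x, JamesAux.gpow d ((d:ℝ) * p / q) 1 x with hJ
  set A := volume (ball (0 : EuclideanSpace ℝ (Fin d)) 1) with hA
  set C₀ := A ^ (1/q - 1/p) * J ^ (1/p) with hC₀
  have hvol : ∀ (a : EuclideanSpace ℝ (Fin d)) {R : ℝ}, 0 ≤ R →
      volume (ball a R) = ENNReal.ofReal (R ^ d) * A := by
    intro a R hR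
    rw [Measure.addHaar_ball_center, Measure.addHaar_ball volume 0 hR,
      finrank_euclideanSpace_fin, hA]
  -- upper bound for ‖f‖
  have hupper : smallMorreyNorm d p q f ≤ C₀ := by
    rw [smallMorreyNorm]
    refine iSup_le fun a => iSup_le fun R => iSup_le fun hR0 => iSup_le fun hR1 => ?_
    have hint : ∫⁻ y in ball a R, ENNReal.ofReal (|f y| ^ p)
        ≤ ENNReal.ofReal 1 *
          (ENNReal.ofReal (R ^ ((d:ℝ) - (d:ℝ) * p / q)) * J) := by
      rw [ENNReal.ofReal_one, one_mul]
      calc ∫⁻ y in ball a R, ENNReal.ofReal (|f y| ^ p)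
          = ∫⁻ y in ball a R, JamesAux.gpow d ((d:ℝ) * p / q) 1 y := by
            exact lintegral_congr fun y => hfp y
        _ ≤ ∫⁻ y in ball (0 : EuclideanSpace ℝ (Fin d)) R,
              JamesAux.gpow d ((d:ℝ) * p / q) 1 y :=
            JamesAux.lint_gpow_ball_le hd hc0 a hR0 hR1
        _ = ENNReal.ofReal (R ^ ((d:ℝ) - (d:ℝ) * p / q)) * J :=
            JamesAux.lint_gpow_ball hd _ hR0 hR1.le
    calc volume (ball a R) ^ (1/q - 1/p) *
          (∫⁻ y in ball a R, ENNReal.ofReal (|f y| ^ p)) ^ (1/p)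
        ≤ volume (ball a R) ^ (1/q - 1/p) *
          (ENNReal.ofReal 1 *
            (ENNReal.ofReal (R ^ ((d:ℝ) - (d:ℝ) * p / q)) * J)) ^ (1/p) :=
          mul_le_mul_right (ENNReal.rpow_le_rpow hint (by positivity)) _
      _ = ENNReal.ofReal ((1:ℝ) ^ (1/p)) * C₀ := by
          rw [hvol a hR0.le]
          exact JamesAux.alg1 hA_t hJt d hp0 hq0 hR0 one_pos
      _ = C₀ := by rw [Real.one_rpow, ENNReal.ofReal_one, one_mul]
  -- first part: ‖f‖ = ‖k‖
  have haefk : (fun y => ENNReal.ofReal (|f y| ^ p))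
      =ᵐ[volume] fun y => ENNReal.ofReal (|k y| ^ p) := by
    have hsph : volume (sphere (0 : EuclideanSpace ℝ (Fin d)) ε) = 0 :=
      Measure.addHaar_sphere volume 0 ε
    rw [Filter.EventuallyEq, MeasureTheory.ae_iff]
    refine measure_mono_null ?_ hsph
    intro x hx
    rw [Set.mem_setOf_eq] at hx
    rw [mem_sphere_zero_iff_norm]
    by_contra hne
    exact hx (by rw [habs x hne])
  have hfirst : smallMorreyNorm d p q f = smallMorreyNorm d p q k := by
    rw [smallMorreyNorm, smallMorreyNorm]
    refine iSup_congr fun a => iSup_congr fun R => iSup_congr fun _ => iSup_congr fun _ => ?_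
    rw [lintegral_congr_ae haefk.restrict]
  have h2p : ((2:ℝ) ^ p) ^ (1/p) = 2 := by
    rw [← Real.rpow_mul (by norm_num : (0:ℝ) ≤ 2), mul_one_div, div_self hp0.ne',
      Real.rpow_one]
  -- lower bound for ‖f + k‖
  have hIplus : ∫⁻ y in ball (0 : EuclideanSpace ℝ (Fin d)) (ε/2),
      ENNReal.ofReal (|(f + k) y| ^ p)
      = ENNReal.ofReal (2 ^ p) *
        (ENNReal.ofReal ((ε/2) ^ ((d:ℝ) - (d:ℝ) * p / q)) * J) := by
    have hpt : ∀ y ∈ ball (0 : EuclideanSpace ℝ (Fin d)) (ε/2),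
        ENNReal.ofReal (|(f + k) y| ^ p)
          = ENNReal.ofReal (2 ^ p) * JamesAux.gpow d ((d:ℝ) * p / q) 1 y := by
      intro y hy
      have hyε : ‖y‖ < ε := by
        rw [mem_ball_zero_iff] at hy; linarith
      have hfk : (f + k) y = f y + k y := rfl
      rw [hfk]
      by_cases h0 : 0 < ‖y‖
      · have hky : k y = f y := by
          rw [hkx y, if_pos ⟨h0, hyε⟩,
            if_neg (fun hh : ε < ‖y‖ ∧ ‖y‖ < 1 => absurd hh.1 (not_lt.mpr hyε.le)),
            sub_zero, one_mul]
        rw [hky, show f y + f y = 2 * f y by ring, abs_mul, abs_two,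
          Real.mul_rpow (by norm_num) (abs_nonneg _),
          ENNReal.ofReal_mul (by positivity), hfp y]
      · have hfy : f y = 0 := by rw [hfx y, if_neg (fun hh : 0 < ‖y‖ ∧ ‖y‖ < 1 => h0 hh.1)]
        have hky : k y = 0 := by rw [hkx y, hfy, mul_zero]
        rw [hfy, hky, add_zero, abs_zero, Real.zero_rpow hp0.ne', ENNReal.ofReal_zero,
          JamesAux.gpow, if_neg (fun hh : 0 < ‖y‖ ∧ ‖y‖ < 1 => h0 hh.1), mul_zero]
    rw [setLIntegral_congr_fun measurableSet_ball hpt,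
      lintegral_const_mul _ (JamesAux.measurable_gpow _ 1),
      JamesAux.lint_gpow_ball hd _ (by positivity) (by linarith)]
  have hplus : ENNReal.ofReal 2 * C₀ ≤ smallMorreyNorm d p q (f + k) := by
    rw [smallMorreyNorm]
    refine le_iSup_of_le 0 (le_iSup_of_le (ε/2) (le_iSup_of_le (by positivity)
      (le_iSup_of_le (by linarith) ?_)))
    rw [hIplus, hvol 0 (by positivity),
      JamesAux.alg1 hA_t hJt d hp0 hq0 (by positivity) (by positivity : (0:ℝ) < 2 ^ p), h2p]
  -- lower bound for ‖f - k‖ at radius R ∈ (ε, 1)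
  have hminus : ∀ R : ℝ, ε < R → R < 1 →
      ENNReal.ofReal ((2 ^ p * (1 - (ε/R) ^ ((d:ℝ) - (d:ℝ) * p / q))) ^ (1/p)) * C₀
        ≤ smallMorreyNorm d p q (f - k) := by
    intro R hεR hR1
    have hR0 : 0 < R := lt_trans hε0 hεR
    have hfrac1 : (ε/R) ^ ((d:ℝ) - (d:ℝ) * p / q) < 1 :=
      Real.rpow_lt_one (by positivity) ((div_lt_one hR0).mpr hεR) hβ0
    have hs_pos : (0:ℝ) < 2 ^ p * (1 - (ε/R) ^ ((d:ℝ) - (d:ℝ) * p / q)) := by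
      have : (0:ℝ) < 2 ^ p := by positivity
      nlinarith
    have hpt : ∀ y, ENNReal.ofReal (2 ^ p) * JamesAux.gpA d ((d:ℝ) * p / q) ε y
        ≤ ENNReal.ofReal (|(f - k) y| ^ p) := by
      intro y
      by_cases hcond : ε < ‖y‖ ∧ ‖y‖ < 1
      · have h0 : 0 < ‖y‖ := lt_trans hε0 hcond.1
        have hky : k y = (0 - 1) * f y := by
          rw [hkx y, if_neg (fun hh : 0 < ‖y‖ ∧ ‖y‖ < ε => absurd hh.2 (not_lt.mpr hcond.1.le)),
            if_pos hcond]
        have hfky : (f - k) y = 2 * f y := by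
          show f y - k y = 2 * f y
          rw [hky]; ring
        rw [hfky, abs_mul, abs_two, Real.mul_rpow (by norm_num) (abs_nonneg _),
          ENNReal.ofReal_mul (by positivity), hfp y]
        refine mul_le_mul_right (le_of_eq ?_) _
        rw [JamesAux.gpA, if_pos hcond, JamesAux.gpow, if_pos ⟨h0, hcond.2⟩]
      · rw [JamesAux.gpA, if_neg hcond, mul_zero]
        exact zero_le
    have hIm : ENNReal.ofReal (2 ^ p * (1 - (ε/R) ^ ((d:ℝ) - (d:ℝ) * p / q))) *
        (ENNReal.ofReal (R ^ ((d:ℝ) - (d:ℝ) * p / q)) * J)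
        ≤ ∫⁻ y in ball (0 : EuclideanSpace ℝ (Fin d)) R,
            ENNReal.ofReal (|(f - k) y| ^ p) := by
      have hsR : ENNReal.ofReal (2 ^ p * (1 - (ε/R) ^ ((d:ℝ) - (d:ℝ) * p / q))) *
          (ENNReal.ofReal (R ^ ((d:ℝ) - (d:ℝ) * p / q)) * J)
          = ENNReal.ofReal (2 ^ p) *
            (ENNReal.ofReal (R ^ ((d:ℝ) - (d:ℝ) * p / q) - ε ^ ((d:ℝ) - (d:ℝ) * p / q)) * J) := by
        rw [← mul_assoc, ← mul_assoc, ← ENNReal.ofReal_mul hs_pos.le,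
          ← ENNReal.ofReal_mul (by positivity)]
        congr 2
        rw [Real.div_rpow hε0.le hR0.le]
        have hRβ : (0:ℝ) < R ^ ((d:ℝ) - (d:ℝ) * p / q) := Real.rpow_pos_of_pos hR0 _
        field_simp
      rw [hsR]
      calc ENNReal.ofReal (2 ^ p) *
            (ENNReal.ofReal (R ^ ((d:ℝ) - (d:ℝ) * p / q) - ε ^ ((d:ℝ) - (d:ℝ) * p / q)) * J)
          = ENNReal.ofReal (2 ^ p) *
            ∫⁻ y in ball (0 : EuclideanSpace ℝ (Fin d)) R, JamesAux.gpA d ((d:ℝ) * p / q) ε y := by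
            rw [JamesAux.lint_gpA_ball hd hc0 hcd hε0 hε1 hεR hR1.le]
        _ = ∫⁻ y in ball (0 : EuclideanSpace ℝ (Fin d)) R,
              ENNReal.ofReal (2 ^ p) * JamesAux.gpA d ((d:ℝ) * p / q) ε y :=
            (lintegral_const_mul _ (JamesAux.measurable_gpA _ ε)).symm
        _ ≤ _ := lintegral_mono hpt
    rw [smallMorreyNorm]
    refine le_iSup_of_le 0 (le_iSup_of_le R (le_iSup_of_le hR0 (le_iSup_of_le hR1 ?_)))
    calc ENNReal.ofReal ((2 ^ p * (1 - (ε/R) ^ ((d:ℝ) - (d:ℝ) * p / q))) ^ (1/p)) * C₀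
        = (ENNReal.ofReal (R ^ d) * A) ^ (1/q - 1/p) *
          (ENNReal.ofReal (2 ^ p * (1 - (ε/R) ^ ((d:ℝ) - (d:ℝ) * p / q))) *
            (ENNReal.ofReal (R ^ ((d:ℝ) - (d:ℝ) * p / q)) * J)) ^ (1/p) :=
          (JamesAux.alg1 hA_t hJt d hp0 hq0 hR0 hs_pos).symm
      _ ≤ volume (ball (0 : EuclideanSpace ℝ (Fin d)) R) ^ (1/q - 1/p) *
          (∫⁻ y in ball (0 : EuclideanSpace ℝ (Fin d)) R,
            ENNReal.ofReal (|(f - k) y| ^ p)) ^ (1/p) := by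
          rw [hvol 0 hR0.le]
          exact mul_le_mul_right (ENNReal.rpow_le_rpow hIm (by positivity)) _
  -- pass to the limit R → 1⁻
  have hεβ1 : ε ^ ((d:ℝ) - (d:ℝ) * p / q) < 1 := Real.rpow_lt_one hε0.le hε1 hβ0
  have hcont : ContinuousAt
      (fun R : ℝ => (2 ^ p * (1 - (ε/R) ^ ((d:ℝ) - (d:ℝ) * p / q))) ^ (1/p)) 1 := by
    have h1 : ContinuousAt (fun R : ℝ => ε / R) 1 :=
      continuousAt_const.div continuousAt_id one_ne_zero
    have h2 : ContinuousAt (fun x : ℝ => x ^ ((d:ℝ) - (d:ℝ) * p / q)) (ε / 1) :=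
      Real.continuousAt_rpow_const _ _ (Or.inl (by simp [hε0.ne']))
    have h3 : ContinuousAt
        (fun R : ℝ => 2 ^ p * (1 - (ε/R) ^ ((d:ℝ) - (d:ℝ) * p / q))) 1 :=
      continuousAt_const.mul (continuousAt_const.sub (h2.comp h1))
    refine h3.rpow_const (Or.inl ?_)
    simp only [div_one]
    nlinarith [hεβ1, Real.rpow_pos_of_pos (show (0:ℝ) < 2 by norm_num) p]
  have hne : ENNReal.ofReal
      ((2 ^ p * (1 - (ε/(1:ℝ)) ^ ((d:ℝ) - (d:ℝ) * p / q))) ^ (1/p)) ≠ 0 := by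
    simp only [div_one]
    refine (ENNReal.ofReal_pos.mpr ?_).ne'
    have h2pp : (0:ℝ) < 2 ^ p := by positivity
    have : (0:ℝ) < 2 ^ p * (1 - ε ^ ((d:ℝ) - (d:ℝ) * p / q)) := by nlinarith
    positivity
  have h0 : Filter.Tendsto
      (fun R : ℝ => ENNReal.ofReal
        ((2 ^ p * (1 - (ε/R) ^ ((d:ℝ) - (d:ℝ) * p / q))) ^ (1/p)))
      (nhdsWithin (1:ℝ) (Set.Iio 1))
      (nhds (ENNReal.ofReal
        ((2 ^ p * (1 - (ε/(1:ℝ)) ^ ((d:ℝ) - (d:ℝ) * p / q))) ^ (1/p)))) :=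
    ENNReal.tendsto_ofReal (hcont.tendsto.mono_left nhdsWithin_le_nhds)
  have hlim : Filter.Tendsto
      (fun R : ℝ => ENNReal.ofReal
        ((2 ^ p * (1 - (ε/R) ^ ((d:ℝ) - (d:ℝ) * p / q))) ^ (1/p)) * C₀)
      (nhdsWithin 1 (Set.Iio 1))
      (nhds (ENNReal.ofReal
        ((2 ^ p * (1 - ε ^ ((d:ℝ) - (d:ℝ) * p / q))) ^ (1/p)) * C₀)) := by
    have := ENNReal.Tendsto.mul_const (b := C₀) h0 (Or.inl hne)
    simpa [div_one] using this
  have hminus' : ENNReal.ofReal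
      ((2 ^ p * (1 - ε ^ ((d:ℝ) - (d:ℝ) * p / q))) ^ (1/p)) * C₀
      ≤ smallMorreyNorm d p q (f - k) := by
    refine le_of_tendsto hlim ?_
    filter_upwards [Ioo_mem_nhdsLT_of_mem (Set.mem_Ioc.mpr ⟨hε1, le_refl (1:ℝ)⟩)] with R hR
    exact hminus R hR.1 hR.2
  have hconst : 2 * (1 - ε ^ ((d:ℝ) - (d:ℝ) * p / q)) ^ (1/p)
      = (2 ^ p * (1 - ε ^ ((d:ℝ) - (d:ℝ) * p / q))) ^ (1/p) := by
    rw [Real.mul_rpow (by positivity) (by nlinarith : (0:ℝ) ≤ 1 - ε ^ ((d:ℝ) - (d:ℝ) * p / q)),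
      h2p]
  refine ⟨hfirst, le_min ?_ ?_⟩
  · have h2le : 2 * (1 - ε ^ ((d:ℝ) - (d:ℝ) * p / q)) ^ (1/p) ≤ 2 := by
      have hle1 : (1 - ε ^ ((d:ℝ) - (d:ℝ) * p / q)) ^ (1/p) ≤ 1 := by
        refine Real.rpow_le_one (by nlinarith) (by nlinarith [Real.rpow_pos_of_pos hε0 ((d:ℝ) - (d:ℝ) * p / q)]) (by positivity)
      nlinarith
    calc ENNReal.ofReal (2 * (1 - ε ^ ((d:ℝ) - (d:ℝ) * p / q)) ^ (1/p)) *
          smallMorreyNorm d p q f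
        ≤ ENNReal.ofReal 2 * C₀ := mul_le_mul' (ENNReal.ofReal_le_ofReal h2le) hupper
      _ ≤ smallMorreyNorm d p q (f + k) := hplus
  · calc ENNReal.ofReal (2 * (1 - ε ^ ((d:ℝ) - (d:ℝ) * p / q)) ^ (1/p)) *
          smallMorreyNorm d p q f
        ≤ ENNReal.ofReal ((2 ^ p * (1 - ε ^ ((d:ℝ) - (d:ℝ) * p / q))) ^ (1/p)) * C₀ :=
          mul_le_mul' (le_of_eq (congrArg ENNReal.ofReal hconst)) hupper
      _ ≤ smallMorreyNorm d p q (f - k) := hminus'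
end
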